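/- arXiv:1604.06980 — 9 statements merged into one kernel-verified Lean document; each statement's English description precedes it below -/
import Mathlib

section
/- Let 0 < Ω < π, s ∈ ℤ and m ∈ ℕ. If x and y are both Ω-band-limited sequences and x(t) = y(t) for every t ∈ ℤ \ M_s, then x(t) = y(t) for every t ∈ ℤ. (Thus an Ω-band-limited sequence is uniquely determined by its values outside a block of m+1 consecutive integers, so the class of Ω-band-limited sequences is recoverable.) -/
open MeasureTheory Real Set

def IsBandLimited (Ω : ℝ) (x : ℤ → ℂ) : Prop :=
  ∃ g : ℝ → ℂ, MemLp g 2 (volume.restrict (Set.Icc (-Ω) Ω)) ∧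
    ∀ t : ℤ, x t = (1 / (2 * (Real.pi : ℂ))) *
      ∫ ω in Set.Icc (-Ω) Ω, g ω * Complex.exp (Complex.I * (ω : ℂ) * (t : ℂ))

/-- `Ms s m` is the block of missing points `{s, s+1, ..., s+m}`. -/
def Ms (s : ℤ) (m : ℕ) : Set ℤ := Set.Icc s (s + m)

section Aux

open Complex in
/-- coeFn of a finite sum in Lp -/
lemma LpcoeFn_sum {α : Type*} [MeasurableSpace α] {μ : Measure α} {ι : Type*}
    (f : ι → Lp ℂ 2 μ) (t : Finset ι) :
    (↑↑(∑ i ∈ t, f i) : α → ℂ) =ᵐ[μ] fun a => ∑ i ∈ t, (f i : α → ℂ) a := by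
  classical
  induction t using Finset.induction_on with
  | empty => exact Lp.coeFn_zero ℂ 2 μ
  | insert a t' hnot ih =>
      rw [Finset.sum_insert hnot]
      filter_upwards [Lp.coeFn_add (f a) (∑ i ∈ t', f i), ih] with x hx1 hx2
      rw [Finset.sum_insert hnot, hx1, Pi.add_apply, hx2]

open Complex in
lemma key_vanish (Ω : ℝ) (hΩ0 : 0 < Ω) (hΩπ : Ω < Real.pi)
    (s : ℤ) (m : ℕ) (z : ℤ → ℂ) (h : ℝ → ℂ)
    (hsm : StronglyMeasurable h)
    (hL2 : MemLp h 2 (volume.restrict (Set.Icc (-Ω) Ω)))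
    (hrep : ∀ t : ℤ, z t = (1 / (2 * (Real.pi : ℂ))) *
      ∫ ω in Set.Icc (-Ω) Ω, h ω * Complex.exp (Complex.I * (ω : ℂ) * (t : ℂ)))
    (hz : ∀ t : ℤ, t ∉ Ms s m → z t = 0) :
    ∀ t : ℤ, z t = 0 := by
  haveI hT : Fact (0 < 2 * π) := ⟨by positivity⟩
  set htil : ℝ → ℂ := (Set.Icc (-Ω) Ω).indicator h with htil_def
  have hsub : Set.Icc (-Ω) Ω ⊆ Set.Ioc (-π) (-π + 2 * π) := by
    intro u hu
    constructor
    · linarith [hu.1]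
    · linarith [hu.2]
  set F : AddCircle (2 * π) → ℂ := AddCircle.liftIoc (2 * π) (-π) htil with F_def
  have htil_sm : StronglyMeasurable htil := hsm.indicator measurableSet_Icc
  have hF_sm : StronglyMeasurable F :=
    (htil_sm.comp_measurable measurable_subtype_coe).comp_measurable
      (AddCircle.measurableEquivIoc (2 * π) (-π)).measurable
  have hmp := AddCircle.measurePreserving_mk (T := 2 * π) (-π)
  have hMemF : MemLp F 2 AddCircle.haarAddCircle := by
    have htilmem : MemLp htil 2 (volume.restrict (Set.Ioc (-π) (-π + 2 * π))) := by
      rw [htil_def, memLp_indicator_iff_restrict measurableSet_Icc,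
        Measure.restrict_restrict measurableSet_Icc, Set.inter_eq_self_of_subset_left hsub]
      exact hL2
    have hcomp : MemLp (F ∘ ((↑·) : ℝ → AddCircle (2 * π))) 2
        (volume.restrict (Set.Ioc (-π) (-π + 2 * π))) := by
      apply htilmem.ae_eq
      filter_upwards [ae_restrict_mem measurableSet_Ioc] with u hu
      exact (AddCircle.liftIoc_coe_apply hu).symm
    have hvol : MemLp F 2 (volume : Measure (AddCircle (2 * π))) := by
      rw [← hmp.map_eq]
      exact (memLp_map_measure_iff
        (by rw [hmp.map_eq]; exact hF_sm.aestronglyMeasurable)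
        hmp.measurable.aemeasurable).mpr hcomp
    have hsmul : (AddCircle.haarAddCircle : Measure (AddCircle (2 * π))) =
        (ENNReal.ofReal (2 * π))⁻¹ • (volume : Measure (AddCircle (2 * π))) := by
      rw [AddCircle.volume_eq_smul_haarAddCircle, smul_smul, ENNReal.inv_mul_cancel, one_smul]
      · exact (ENNReal.ofReal_pos.mpr (by positivity)).ne'
      · exact ENNReal.ofReal_ne_top
    rw [hsmul]
    exact hvol.smul_measure (by simp [Real.pi_pos])
  have hcoeff : ∀ n : ℤ, fourierCoeff F n = z (-n) := by
    intro n
    rw [hrep (-n), fourierCoeff_eq_intervalIntegral F n (-π),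
      intervalIntegral.integral_of_le (by linarith [Real.pi_pos] : -π ≤ -π + 2 * π)]
    have e1 : ∀ u ∈ Set.Ioc (-π) (-π + 2 * π),
        fourier (-n) ((u : ℝ) : AddCircle (2 * π)) • F ((u : ℝ) : AddCircle (2 * π)) =
        (Set.Icc (-Ω) Ω).indicator
          (fun ω => h ω * Complex.exp (Complex.I * (ω : ℂ) * ((-n : ℤ) : ℂ))) u := by
      intro u hu
      rw [F_def, AddCircle.liftIoc_coe_apply hu, htil_def]
      by_cases hmem : u ∈ Set.Icc (-Ω) Ω
      · rw [Set.indicator_of_mem hmem, Set.indicator_of_mem hmem, smul_eq_mul, mul_comm]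
        congr 1
        rw [fourier_coe_apply]
        congr 1
        have h2π : ((2 * π : ℝ) : ℂ) ≠ 0 := by
          simp only [ne_eq, Complex.ofReal_eq_zero]
          positivity
        push_cast
        field_simp [Complex.ofReal_ne_zero.mpr Real.pi_ne_zero]
      · rw [Set.indicator_of_notMem hmem, Set.indicator_of_notMem hmem, smul_zero]
    rw [setIntegral_congr_fun measurableSet_Ioc e1, integral_indicator measurableSet_Icc,
      Measure.restrict_restrict measurableSet_Icc, Set.inter_eq_self_of_subset_left hsub]
    rw [Complex.real_smul]
    congr 1
    push_cast
    norm_num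
  -- the trigonometric polynomial equal to F a.e.
  set G : AddCircle (2 * π) → ℂ :=
    fun u => ∑ k ∈ Finset.range (m + 1), z (s + k) * fourier (-(s + (k : ℤ))) u with G_def
  have hFG : F =ᵐ[(volume : Measure (AddCircle (2 * π)))] G := by
    classical
    set FL := hMemF.toLp F with FL_def
    have hc2 : ∀ n : ℤ, fourierCoeff (FL : AddCircle (2 * π) → ℂ) n = z (-n) := by
      intro n
      rw [← hcoeff n]
      apply integral_congr_ae
      filter_upwards [hMemF.coeFn_toLp] with u hu
      rw [hu]
    set sfin : Finset ℤ := (Finset.range (m + 1)).image (fun k : ℕ => -(s + (k : ℤ))) with sfin_def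
    set c : ℤ → ℂ := fun i => fourierCoeff (FL : AddCircle (2 * π) → ℂ) i with c_def
    have hvanish : ∀ i ∉ sfin, c i • fourierLp (T := 2 * π) 2 i = 0 := by
      intro i hi
      have hzi : z (-i) = 0 := by
        apply hz
        intro hmem
        apply hi
        rcases hmem with ⟨h1, h2⟩
        rw [Finset.mem_image]
        refine ⟨(-i - s).toNat, ?_, ?_⟩
        · exact Finset.mem_range.mpr (by omega)
        · omega
      rw [c_def]
      simp only [hc2 i, hzi, zero_smul]
    have hfin : HasSum (fun i => c i • fourierLp (T := 2 * π) 2 i)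
        (∑ i ∈ sfin, c i • fourierLp (T := 2 * π) 2 i) :=
      hasSum_sum_of_ne_finset_zero hvanish
    have hFL : FL = ∑ i ∈ sfin, c i • fourierLp (T := 2 * π) 2 i :=
      (hasSum_fourier_series_L2 FL).unique hfin
    have hterm : ∀ i ∈ sfin, ((c i • fourierLp (T := 2 * π) 2 i :
        Lp ℂ 2 AddCircle.haarAddCircle) : AddCircle (2 * π) → ℂ)
        =ᵐ[AddCircle.haarAddCircle] fun u => c i * fourier i u := by
      intro i _
      filter_upwards [Lp.coeFn_smul (c i) (fourierLp (T := 2 * π) 2 i),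
        coeFn_fourierLp (T := 2 * π) 2 i] with u hu1 hu2
      rw [hu1, Pi.smul_apply, hu2, smul_eq_mul]
    have hterm' : ∀ᵐ u ∂(AddCircle.haarAddCircle : Measure (AddCircle (2 * π))),
        ∀ i ∈ sfin, ((c i • fourierLp (T := 2 * π) 2 i :
          Lp ℂ 2 AddCircle.haarAddCircle) : AddCircle (2 * π) → ℂ) u = c i * fourier i u :=
      (Filter.eventually_all_finset sfin).mpr hterm
    have hhaar : F =ᵐ[(AddCircle.haarAddCircle : Measure (AddCircle (2 * π)))] G := by
      filter_upwards [hMemF.coeFn_toLp,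
        LpcoeFn_sum (fun i => c i • fourierLp (T := 2 * π) 2 i) sfin, hterm'] with u hu1 hu2 hu3
      have e0 : F u = (FL : AddCircle (2 * π) → ℂ) u := hu1.symm
      rw [e0, hFL, hu2]
      have e1 : ∑ i ∈ sfin, ((c i • fourierLp (T := 2 * π) 2 i :
          Lp ℂ 2 AddCircle.haarAddCircle) : AddCircle (2 * π) → ℂ) u
          = ∑ i ∈ sfin, c i * fourier i u := Finset.sum_congr rfl hu3
      rw [e1, sfin_def, Finset.sum_image (fun a _ b _ hab => by omega)]
      show _ = ∑ k ∈ Finset.range (m + 1), z (s + (k : ℤ)) * fourier (-(s + (k : ℤ))) u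
      apply Finset.sum_congr rfl
      intro k _
      congr 1
      simp only [c_def]
      rw [hc2, neg_neg]
    rw [AddCircle.volume_eq_smul_haarAddCircle]
    exact Measure.ae_smul_measure hhaar _
  -- pull back to the real line
  have hae : ∀ᵐ (ω : ℝ) ∂(volume.restrict (Set.Ioc Ω π)),
      (∑ k ∈ Finset.range (m + 1),
        z (s + k) * Complex.exp (-(Complex.I * (s + (k : ℤ)) * (ω : ℂ)))) = 0 := by
    have hcomp : (F ∘ ((↑·) : ℝ → AddCircle (2 * π)))
        =ᵐ[volume.restrict (Set.Ioc (-π) (-π + 2 * π))]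
        (G ∘ ((↑·) : ℝ → AddCircle (2 * π))) := by
      apply ae_eq_comp hmp.measurable.aemeasurable
      rw [hmp.map_eq]
      exact hFG
    have hIocsub : Set.Ioc Ω π ⊆ Set.Ioc (-π) (-π + 2 * π) := by
      intro u hu
      constructor
      · linarith [hu.1]
      · linarith [hu.2]
    have h0 := ae_restrict_of_ae_restrict_of_subset hIocsub hcomp
    filter_upwards [h0, ae_restrict_mem measurableSet_Ioc] with ω h1 h2
    have hωIoc : ω ∈ Set.Ioc (-π) (-π + 2 * π) := hIocsub h2
    have hF0 : F ((ω : ℝ) : AddCircle (2 * π)) = 0 := by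
      rw [F_def, AddCircle.liftIoc_coe_apply hωIoc, htil_def,
        Set.indicator_of_notMem (fun hc => by linarith [hc.2, h2.1])]
    have hG0 : G ((ω : ℝ) : AddCircle (2 * π)) = 0 := by
      rw [← Function.comp_apply (f := G) (g := ((↑·) : ℝ → AddCircle (2 * π))), ← h1,
        Function.comp_apply, hF0]
    rw [← hG0, G_def]
    apply Finset.sum_congr rfl
    intro k _
    congr 1
    rw [fourier_coe_apply]
    congr 1
    push_cast
    field_simp [Complex.ofReal_ne_zero.mpr Real.pi_ne_zero]
  -- polynomial argument
  set Q : Polynomial ℂ :=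
    ∑ k ∈ Finset.range (m + 1), Polynomial.C (z (s + k)) * Polynomial.X ^ k with Q_def
  have hQroot : ∀ ω : ℝ, (∑ k ∈ Finset.range (m + 1),
      z (s + k) * Complex.exp (-(Complex.I * (s + (k : ℤ)) * (ω : ℂ)))) =
      Complex.exp (-(Complex.I * (s : ℂ) * (ω : ℂ))) *
        Q.eval (Complex.exp (-(Complex.I * (ω : ℂ)))) := by
    intro ω
    rw [Q_def, Polynomial.eval_finset_sum, Finset.mul_sum]
    apply Finset.sum_congr rfl
    intro k _
    have he : Complex.exp (-(Complex.I * ((s : ℂ) + ((k : ℤ) : ℂ)) * (ω : ℂ))) =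
        Complex.exp (-(Complex.I * (s : ℂ) * (ω : ℂ))) *
          Complex.exp (-(Complex.I * (ω : ℂ))) ^ k := by
      rw [← Complex.exp_nat_mul, ← Complex.exp_add]
      congr 1
      push_cast
      ring
    rw [he, Polynomial.eval_mul, Polynomial.eval_C, Polynomial.eval_pow, Polynomial.eval_X]
    ring
  have hQ0 : Q = 0 := by
    set Sroot : Set ℝ :=
      {ω : ℝ | ω ∈ Set.Ioc Ω π ∧ Q.eval (Complex.exp (-(Complex.I * (ω : ℂ)))) = 0}
      with Sroot_def
    have hS : ∀ᵐ (ω : ℝ) ∂(volume.restrict (Set.Ioc Ω π)),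
        Q.eval (Complex.exp (-(Complex.I * (ω : ℂ)))) = 0 := by
      filter_upwards [hae] with ω hω
      rw [hQroot ω] at hω
      rcases mul_eq_zero.mp hω with h1 | h1
      · exact absurd h1 (Complex.exp_ne_zero _)
      · exact h1
    have hmem : ∀ᵐ (ω : ℝ) ∂(volume.restrict (Set.Ioc Ω π)), ω ∈ Sroot := by
      filter_upwards [hS, ae_restrict_mem measurableSet_Ioc] with ω h1 h2
      exact ⟨h2, h1⟩
    have hinf : Sroot.Infinite := by
      intro hfin
      have hz1 : volume.restrict (Set.Ioc Ω π) Srootᶜ = 0 := by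
        rw [Set.compl_def]
        exact ae_iff.mp hmem
      have hz2 : volume.restrict (Set.Ioc Ω π) Sroot = 0 := by
        refine le_antisymm (le_trans (Measure.restrict_apply_le _ _) ?_) (zero_le)
        rw [hfin.measure_zero]
      have htot : volume.restrict (Set.Ioc Ω π) Set.univ ≤ 0 := by
        calc volume.restrict (Set.Ioc Ω π) Set.univ
            ≤ volume.restrict (Set.Ioc Ω π) Sroot + volume.restrict (Set.Ioc Ω π) Srootᶜ := by
              rw [← Set.union_compl_self Sroot]
              exact measure_union_le _ _
          _ ≤ 0 := by rw [hz1, hz2, add_zero]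
      rw [Measure.restrict_apply_univ, Real.volume_Ioc, nonpos_iff_eq_zero,
        ENNReal.ofReal_eq_zero] at htot
      linarith
    apply Polynomial.eq_zero_of_infinite_isRoot
    have hinj : Set.InjOn (fun ω : ℝ => Complex.exp (-(Complex.I * (ω : ℂ)))) Sroot := by
      intro a ha b hb hab
      rcases Complex.exp_eq_exp_iff_exists_int.mp hab with ⟨k, hk⟩
      have h1 : Complex.I * ((b : ℂ) - a) = Complex.I * (k * (2 * π)) := by
        linear_combination hk
      have h2 : ((b : ℂ) - (a : ℂ)) = (k : ℂ) * (2 * (π : ℂ)) :=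
        mul_left_cancel₀ Complex.I_ne_zero h1
      have h3 : (b : ℝ) - a = (k : ℝ) * (2 * π) := by exact_mod_cast h2
      have hk0 : k = 0 := by
        rcases lt_trichotomy k 0 with hlt | heq | hgt
        · have hk1 : k ≤ -1 := by omega
          have : (k : ℝ) ≤ -1 := by exact_mod_cast hk1
          nlinarith [ha.1.1, ha.1.2, hb.1.1, hb.1.2, Real.pi_pos]
        · exact heq
        · have hk1 : 1 ≤ k := by omega
          have : (1 : ℝ) ≤ (k : ℝ) := by exact_mod_cast hk1
          nlinarith [ha.1.1, ha.1.2, hb.1.1, hb.1.2, Real.pi_pos]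
      rw [hk0] at h3
      simp at h3
      linarith
    have himg := (hinf.image hinj)
    apply himg.mono
    rintro c ⟨ω, hω, rfl⟩
    exact hω.2
  have hzM : ∀ k : ℕ, k ≤ m → z (s + k) = 0 := by
    intro k hk
    have : Q.coeff k = z (s + k) := by
      rw [Q_def, Polynomial.finset_sum_coeff]
      rw [Finset.sum_eq_single k]
      · simp
      · intro b _ hb
        simp [Polynomial.coeff_C_mul, Polynomial.coeff_X_pow, hb, Ne.symm hb]
      · intro hk'
        simp at hk'
        omega
    rw [hQ0] at this
    simpa using this.symm
  intro t
  by_cases ht : t ∈ Ms s m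
  · rcases ht with ⟨h1, h2⟩
    have hk : t = s + ((t - s).toNat : ℤ) := by omega
    rw [hk]
    exact hzM (t - s).toNat (by omega)
  · exact hz t ht

end Aux

theorem bandlimited_unique_extension (Ω : ℝ) (hΩ0 : 0 < Ω) (hΩπ : Ω < Real.pi)
    (s : ℤ) (m : ℕ) (x y : ℤ → ℂ)
    (hx : IsBandLimited Ω x) (hy : IsBandLimited Ω y)
    (hxy : ∀ t : ℤ, t ∉ Ms s m → x t = y t) :
    ∀ t : ℤ, x t = y t := by
  obtain ⟨gx, hgx, hgx_rep⟩ := hx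
  obtain ⟨gy, hgy, hgy_rep⟩ := hy
  set μ := volume.restrict (Set.Icc (-Ω) Ω) with μ_def
  -- replace gx, gy by strongly measurable representatives
  set gx' := hgx.aestronglyMeasurable.mk gx with gx'_def
  set gy' := hgy.aestronglyMeasurable.mk gy with gy'_def
  have hgx'_sm : StronglyMeasurable gx' := hgx.aestronglyMeasurable.stronglyMeasurable_mk
  have hgy'_sm : StronglyMeasurable gy' := hgy.aestronglyMeasurable.stronglyMeasurable_mk
  have hgx'_ae : gx =ᵐ[μ] gx' := hgx.aestronglyMeasurable.ae_eq_mk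
  have hgy'_ae : gy =ᵐ[μ] gy' := hgy.aestronglyMeasurable.ae_eq_mk
  have hgx' : MemLp gx' 2 μ := hgx.ae_eq hgx'_ae
  have hgy' : MemLp gy' 2 μ := hgy.ae_eq hgy'_ae
  set h : ℝ → ℂ := gx' - gy' with h_def
  set z : ℤ → ℂ := fun t => x t - y t with z_def
  have hint : ∀ (g : ℝ → ℂ), MemLp g 2 μ → ∀ t : ℤ,
      Integrable (fun ω => g ω * Complex.exp (Complex.I * (ω : ℂ) * (t : ℂ))) μ := by
    intro g hg t
    haveI : IsFiniteMeasure μ := by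
      constructor
      rw [μ_def, Measure.restrict_apply_univ]
      exact measure_Icc_lt_top
    have h1 : Integrable g μ := hg.integrable (by norm_num)
    have h2 : Continuous fun ω : ℝ => Complex.exp (Complex.I * (ω : ℂ) * (t : ℂ)) := by
      fun_prop
    have h3 := h1.bdd_mul h2.aestronglyMeasurable (c := 1) (Filter.Eventually.of_forall fun ω => by
      rw [Complex.norm_exp]
      simp)
    simpa [mul_comm] using h3
  have hrep : ∀ t : ℤ, z t = (1 / (2 * (Real.pi : ℂ))) *
      ∫ ω in Set.Icc (-Ω) Ω, h ω * Complex.exp (Complex.I * (ω : ℂ) * (t : ℂ)) := by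
    intro t
    have e1 : ∫ ω in Set.Icc (-Ω) Ω, gx ω * Complex.exp (Complex.I * (ω : ℂ) * (t : ℂ)) =
        ∫ ω in Set.Icc (-Ω) Ω, gx' ω * Complex.exp (Complex.I * (ω : ℂ) * (t : ℂ)) :=
      integral_congr_ae (hgx'_ae.mul (Filter.EventuallyEq.refl _ _))
    have e2 : ∫ ω in Set.Icc (-Ω) Ω, gy ω * Complex.exp (Complex.I * (ω : ℂ) * (t : ℂ)) =
        ∫ ω in Set.Icc (-Ω) Ω, gy' ω * Complex.exp (Complex.I * (ω : ℂ) * (t : ℂ)) :=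
      integral_congr_ae (hgy'_ae.mul (Filter.EventuallyEq.refl _ _))
    have e3 : ∫ ω in Set.Icc (-Ω) Ω, h ω * Complex.exp (Complex.I * (ω : ℂ) * (t : ℂ)) =
        (∫ ω in Set.Icc (-Ω) Ω, gx' ω * Complex.exp (Complex.I * (ω : ℂ) * (t : ℂ))) -
        ∫ ω in Set.Icc (-Ω) Ω, gy' ω * Complex.exp (Complex.I * (ω : ℂ) * (t : ℂ)) := by
      rw [← integral_sub (hint gx' hgx' t) (hint gy' hgy' t)]
      apply integral_congr_ae
      filter_upwards with ω
      simp [h_def, sub_mul]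
    show x t - y t = _
    rw [e3, hgx_rep t, hgy_rep t, e1, e2]
    ring
  have hvan := key_vanish Ω hΩ0 hΩπ s m z h (hgx'_sm.sub hgy'_sm) (hgx'.sub hgy')
    hrep (fun t ht => by simp [z_def, hxy t ht])
  intro t
  have := hvan t
  rw [z_def] at this
  simpa [sub_eq_zero] using this
end

section
/- Let 0 < Ω < π, s ∈ ℤ, m ∈ ℕ, and let x : ℤ → ℂ be square-summable (Σ_{t∈ℤ} |x(t)|² < ∞). Then there exists an Ω-band-limited sequence x̂ such that Σ_{t∈ℤ\M_s} |x̂(t) − x(t)|² ≤ Σ_{t∈ℤ\M_s} |w(t) − x(t)|² for every Ω-band-limited sequence w, and x̂ is unique: any Ω-band-limited sequence attaining this minimum coincides with x̂ at every t ∈ ℤ. -/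
open MeasureTheory Real Set

noncomputable section
namespace BLaux
open Complex Filter Topology

abbrev E2 : Type := lp (fun _ : ℤ => ℂ) 2

lemma E2_norm_sq (f : E2) : ‖f‖ ^ 2 = ∑' i : ℤ, ‖f i‖ ^ 2 := by
  have h := lp.norm_rpow_eq_tsum (p := 2) (by norm_num) f
  have h2 : ((2 : ENNReal)).toReal = (2 : ℝ) := by norm_num
  rw [h2] at h
  calc ‖f‖ ^ 2 = ‖f‖ ^ (2 : ℝ) := by
        rw [show (2:ℝ) = ((2:ℕ):ℝ) by norm_num, Real.rpow_natCast]
    _ = ∑' i, ‖f i‖ ^ (2:ℝ) := h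
    _ = ∑' i : ℤ, ‖f i‖ ^ 2 := by
        refine tsum_congr fun i => ?_
        rw [show (2:ℝ) = ((2:ℕ):ℝ) by norm_num, Real.rpow_natCast]

lemma memℓp_of_le {f : ℤ → ℂ} (y : E2) (h : ∀ i, ‖f i‖ ≤ ‖y i‖) : Memℓp f 2 := by
  apply memℓp_gen
  refine Summable.of_nonneg_of_le (fun i => ?_) (fun i => ?_)
    ((lp.memℓp y).summable (by norm_num))
  · positivity
  · exact Real.rpow_le_rpow (norm_nonneg _) (h i) (by norm_num)

lemma summable_sq (f : E2) : Summable (fun i : ℤ => ‖f i‖ ^ 2) := by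
  have := (lp.memℓp f).summable (p := 2) (by norm_num)
  refine this.congr fun i => ?_
  rw [show ((2:ENNReal)).toReal = ((2:ℕ):ℝ) by norm_num, Real.rpow_natCast]

lemma E2_norm_le {f y : E2} (h : ∀ i, ‖f i‖ ≤ ‖y i‖) : ‖f‖ ≤ ‖y‖ := by
  have h1 : ‖f‖ ^ 2 ≤ ‖y‖ ^ 2 := by
    rw [E2_norm_sq, E2_norm_sq]
    exact Summable.tsum_le_tsum (fun i => pow_le_pow_left₀ (norm_nonneg _) (h i) 2)
      (summable_sq f) (summable_sq y)
  have := Real.sqrt_le_sqrt h1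
  rwa [Real.sqrt_sq (norm_nonneg _), Real.sqrt_sq (norm_nonneg _)] at this

/-- the measure `volume` restricted to `[-Ω, Ω]`. -/
abbrev μm (Ω : ℝ) : Measure ℝ := volume.restrict (Set.Icc (-Ω) Ω)

instance (Ω : ℝ) : IsFiniteMeasure (μm Ω) := by
  constructor
  rw [Measure.restrict_apply_univ, Real.volume_Icc]
  exact ENNReal.ofReal_lt_top

/-- The band-limited coefficient functional. -/
def coeff (Ω : ℝ) (g : ℝ → ℂ) (t : ℤ) : ℂ :=
  (1 / (2 * (Real.pi : ℂ))) *
    ∫ ω in Set.Icc (-Ω) Ω, g ω * Complex.exp (Complex.I * (ω : ℂ) * (t : ℂ))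

lemma coeff_congr_ae {Ω : ℝ} {g₁ g₂ : ℝ → ℂ} (h : g₁ =ᵐ[μm Ω] g₂) :
    coeff Ω g₁ = coeff Ω g₂ := by
  funext t
  unfold coeff
  congr 1
  refine integral_congr_ae (h.mono fun ω hω => by simp only [hω])

lemma integrable_coeff_integrand {Ω : ℝ} {g : ℝ → ℂ} (hg : MemLp g 2 (μm Ω)) (t : ℤ) :
    Integrable (fun ω : ℝ => g ω * Complex.exp (Complex.I * (ω : ℂ) * (t : ℂ))) (μm Ω) := by
  have h1 : Integrable g (μm Ω) := hg.integrable (by norm_num)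
  refine h1.norm.mono' ?_ ?_
  · exact hg.aestronglyMeasurable.mul
      (Continuous.aestronglyMeasurable (by fun_prop))
  · refine Filter.Eventually.of_forall fun ω => ?_
    rw [norm_mul]
    have : ‖Complex.exp (Complex.I * (ω : ℂ) * (t : ℂ))‖ = 1 := by
      rw [Complex.norm_exp]
      have : (Complex.I * (ω : ℂ) * (t : ℂ)).re = 0 := by
        simp [Complex.mul_re, Complex.mul_im]
      rw [this, Real.exp_zero]
    rw [this, mul_one]

/-- The Hilbert space of `L²` functions on `[-Ω, Ω]`. -/
abbrev Hs (Ω : ℝ) := Lp ℂ 2 (μm Ω)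

lemma coeff_add {Ω : ℝ} (g h : Hs Ω) :
    coeff Ω (⇑(g + h)) = coeff Ω ⇑g + coeff Ω ⇑h := by
  rw [coeff_congr_ae (Lp.coeFn_add g h)]
  funext t
  unfold coeff
  simp only [Pi.add_apply]
  rw [← mul_add, ← integral_add (integrable_coeff_integrand (Lp.memLp g) t)
    (integrable_coeff_integrand (Lp.memLp h) t)]
  congr 1
  refine integral_congr_ae (Filter.Eventually.of_forall fun ω => ?_)
  ring

lemma coeff_smul {Ω : ℝ} (c : ℂ) (g : Hs Ω) :
    coeff Ω (⇑(c • g)) = c • coeff Ω ⇑g := by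
  rw [coeff_congr_ae (Lp.coeFn_smul c g)]
  funext t
  unfold coeff
  simp only [Pi.smul_apply, smul_eq_mul]
  rw [show (fun ω : ℝ => c * g ω * Complex.exp (Complex.I * (ω : ℂ) * (t : ℂ))) =
      (fun ω : ℝ => c * (g ω * Complex.exp (Complex.I * (ω : ℂ) * (t : ℂ)))) by
    funext ω; ring]
  rw [integral_const_mul]
  ring


section Circle

instance fact2pi : Fact (0 < 2 * π) := ⟨by positivity⟩

variable {Ω : ℝ}

/-- extension of (a representative of) `g` by zero to all of `ℝ`. -/
def ext0 (Ω : ℝ) (g : Hs Ω) : ℝ → ℂ := Set.indicator (Set.Icc (-Ω) Ω) ⇑g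

/-- the corresponding function on the circle of circumference `2π`. -/
def circ (Ω : ℝ) (g : Hs Ω) : AddCircle (2 * π) → ℂ :=
  AddCircle.liftIoc (2 * π) (-π) (ext0 Ω g)

lemma stronglyMeasurable_ext0 (g : Hs Ω) : StronglyMeasurable (ext0 Ω g) :=
  (Lp.stronglyMeasurable g).indicator measurableSet_Icc

lemma Icc_subset_Ioc (hΩ0 : 0 < Ω) (hΩπ : Ω < π) :
    Set.Icc (-Ω) Ω ⊆ Set.Ioc (-π) (-π + 2 * π) := by
  intro x hx
  simp only [Set.mem_Icc] at hx
  simp only [Set.mem_Ioc]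
  constructor <;> linarith [hx.1, hx.2]

lemma memℒp_ext0 (hΩ0 : 0 < Ω) (hΩπ : Ω < π) (g : Hs Ω) :
    MemLp (ext0 Ω g) 2 (volume.restrict (Set.Ioc (-π) (-π + 2 * π))) := by
  constructor
  · exact (stronglyMeasurable_ext0 g).aestronglyMeasurable
  · unfold ext0
    rw [eLpNorm_indicator_eq_eLpNorm_restrict measurableSet_Icc,
      Measure.restrict_restrict measurableSet_Icc,
      Set.inter_eq_left.mpr (Icc_subset_Ioc hΩ0 hΩπ)]
    exact (Lp.memLp g).2

lemma measurable_circ (g : Hs Ω) : Measurable (circ Ω g) := by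
  have h1 : Measurable fun y : Set.Ioc (-π) (-π + 2 * π) => ext0 Ω g (y : ℝ) :=
    (stronglyMeasurable_ext0 g).measurable.comp measurable_subtype_coe
  exact h1.comp (AddCircle.measurableEquivIoc (2 * π) (-π)).measurable

lemma circ_comp_mk_ae (g : Hs Ω) :
    (fun x : ℝ => circ Ω g (x : AddCircle (2 * π)))
      =ᵐ[volume.restrict (Set.Ioc (-π) (-π + 2 * π))] ext0 Ω g := by
  filter_upwards [ae_restrict_mem measurableSet_Ioc] with x hx
  exact AddCircle.liftIoc_coe_apply hx

lemma haar_eq_smul_volume :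
    (AddCircle.haarAddCircle : Measure (AddCircle (2 * π)))
      = (ENNReal.ofReal (2 * π))⁻¹ • (volume : Measure (AddCircle (2 * π))) := by
  rw [AddCircle.volume_eq_smul_haarAddCircle, smul_smul,
    ENNReal.inv_mul_cancel (by simp [Real.pi_pos, Real.pi_ne_zero]) ENNReal.ofReal_ne_top,
    one_smul]

lemma memℒp_circ (hΩ0 : 0 < Ω) (hΩπ : Ω < π) (g : Hs Ω) :
    MemLp (circ Ω g) 2 (AddCircle.haarAddCircle : Measure (AddCircle (2 * π))) := by
  have h1 : MemLp (circ Ω g) 2 (volume : Measure (AddCircle (2 * π))) := by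
    rw [← (AddCircle.measurePreserving_mk (2 * π) (-π)).map_eq]
    refine (memLp_map_measure_iff ?_ AddCircle.measurable_mk'.aemeasurable).2 ?_
    · rw [(AddCircle.measurePreserving_mk (2 * π) (-π)).map_eq]
      exact (measurable_circ g).aestronglyMeasurable
    · exact (memℒp_ext0 hΩ0 hΩπ g).ae_eq (circ_comp_mk_ae g).symm
  rw [haar_eq_smul_volume]
  exact h1.smul_measure (by simp [Real.pi_pos])

/-- The function on the circle as an element of `L²(haar)`. -/
def circL (hΩ0 : 0 < Ω) (hΩπ : Ω < π) (g : Hs Ω) :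
    Lp ℂ 2 (AddCircle.haarAddCircle : Measure (AddCircle (2 * π))) :=
  (memℒp_circ hΩ0 hΩπ g).toLp _


lemma fourierCoeff_circ (hΩ0 : 0 < Ω) (hΩπ : Ω < π) (g : Hs Ω) (n : ℤ) :
    fourierCoeff (circ Ω g) n = coeff Ω ⇑g (-n) := by
  have h2π : ((2 * π : ℝ) : ℂ) ≠ 0 := by
    simp [Real.pi_ne_zero]
  unfold circ
  rw [fourierCoeff_liftIoc_eq, fourierCoeffOn_eq_integral,
    intervalIntegral.integral_of_le (by linarith [Real.pi_pos])]
  have hint : ∀ x : ℝ, (fourier (-n) (x : AddCircle (-π + 2 * π - -π))) • ext0 Ω g x =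
      Set.indicator (Set.Icc (-Ω) Ω)
        (fun x : ℝ => g x * Complex.exp (Complex.I * (x : ℂ) * ((-n : ℤ) : ℂ))) x := by
    intro x
    by_cases hx : x ∈ Set.Icc (-Ω) Ω
    · rw [Set.indicator_of_mem hx]
      unfold ext0
      rw [Set.indicator_of_mem hx, fourier_coe_apply, smul_eq_mul, mul_comm]
      congr 1
      have : (-π + 2 * π - -π : ℝ) = 2 * π := by ring
      rw [this]
      congr 1
      have hπ : (π : ℂ) ≠ 0 := Complex.ofReal_ne_zero.mpr Real.pi_ne_zero
      push_cast
      field_simp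
    · unfold ext0
      rw [Set.indicator_of_notMem hx, Set.indicator_of_notMem hx, smul_zero]
  rw [show (∫ x in Set.Ioc (-π) (-π + 2 * π),
        (fourier (-n) (x : AddCircle (-π + 2 * π - -π))) • ext0 Ω g x) =
      ∫ x in Set.Ioc (-π) (-π + 2 * π), Set.indicator (Set.Icc (-Ω) Ω)
        (fun x : ℝ => g x * Complex.exp (Complex.I * (x : ℂ) * ((-n : ℤ) : ℂ))) x from
    integral_congr_ae (Filter.Eventually.of_forall fun x => hint x)]
  rw [setIntegral_indicator measurableSet_Icc,
    Set.inter_eq_right.mpr (Icc_subset_Ioc hΩ0 hΩπ)]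
  unfold coeff
  rw [show ((1 : ℝ) / (-π + 2 * π - -π)) • (∫ x in Set.Icc (-Ω) Ω,
      g x * Complex.exp (Complex.I * (x : ℂ) * ((-n : ℤ) : ℂ))) =
      (((1 : ℝ) / (-π + 2 * π - -π) : ℝ) : ℂ) * (∫ x in Set.Icc (-Ω) Ω,
      g x * Complex.exp (Complex.I * (x : ℂ) * ((-n : ℤ) : ℂ))) from Complex.real_smul]
  congr 1
  push_cast
  field_simp
  ring

lemma fourierCoeff_circL (hΩ0 : 0 < Ω) (hΩπ : Ω < π) (g : Hs Ω) (n : ℤ) :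
    fourierCoeff (⇑(circL hΩ0 hΩπ g)) n = coeff Ω ⇑g (-n) := by
  have hae : (⇑(circL hΩ0 hΩπ g) : AddCircle (2 * π) → ℂ)
      =ᵐ[AddCircle.haarAddCircle] circ Ω g := (memℒp_circ hΩ0 hΩπ g).coeFn_toLp
  calc fourierCoeff (⇑(circL hΩ0 hΩπ g)) n = fourierCoeff (circ Ω g) n := by
        unfold fourierCoeff
        exact integral_congr_ae (hae.mono fun z hz => by simp only [hz])
    _ = coeff Ω ⇑g (-n) := fourierCoeff_circ hΩ0 hΩπ g n

lemma norm_L2_sq (g : Hs Ω) : ‖g‖ ^ 2 = ∫ x in Set.Icc (-Ω) Ω, ‖g x‖ ^ 2 := by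
  have H₃ := congr_arg RCLike.re (@L2.inner_def ℝ ℂ ℂ _ _ _ _ _ g g)
  rw [← integral_re (L2.integrable_inner g g)] at H₃
  simp only [inner_self_eq_norm_sq] at H₃
  exact H₃

lemma tsum_coeff_sq (hΩ0 : 0 < Ω) (hΩπ : Ω < π) (g : Hs Ω) :
    ∑' t : ℤ, ‖coeff Ω ⇑g t‖ ^ 2 = (1 / (2 * π)) * ‖g‖ ^ 2 := by
  have h1 := tsum_sq_fourierCoeff (circL hΩ0 hΩπ g)
  have h2 : ∑' n : ℤ, ‖fourierCoeff (⇑(circL hΩ0 hΩπ g)) n‖ ^ 2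
      = ∑' t : ℤ, ‖coeff Ω ⇑g t‖ ^ 2 := by
    rw [show (fun n : ℤ => ‖fourierCoeff (⇑(circL hΩ0 hΩπ g)) n‖ ^ 2)
        = fun n : ℤ => ‖coeff Ω ⇑g (-n)‖ ^ 2 from
      funext fun n => by rw [fourierCoeff_circL hΩ0 hΩπ g n]]
    exact (Equiv.neg ℤ).tsum_eq (fun t => ‖coeff Ω ⇑g t‖ ^ 2)
  rw [← h2, h1]
  have h3 : (∫ z : AddCircle (2 * π), ‖(circL hΩ0 hΩπ g) z‖ ^ 2 ∂AddCircle.haarAddCircle)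
      = ∫ z : AddCircle (2 * π), ‖circ Ω g z‖ ^ 2 ∂AddCircle.haarAddCircle := by
    have hae : (⇑(circL hΩ0 hΩπ g) : AddCircle (2 * π) → ℂ)
        =ᵐ[AddCircle.haarAddCircle] circ Ω g := (memℒp_circ hΩ0 hΩπ g).coeFn_toLp
    refine integral_congr_ae (hae.mono fun z hz => ?_)
    simp only [hz]
  rw [h3, haar_eq_smul_volume, integral_smul_measure,
    ENNReal.toReal_inv, ENNReal.toReal_ofReal (by positivity)]
  rw [← AddCircle.integral_preimage (2 * π) (-π) (fun z : AddCircle (2 * π) => ‖circ Ω g z‖ ^ 2)]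
  have h4 : (∫ x in Set.Ioc (-π) (-π + 2 * π), ‖circ Ω g (x : AddCircle (2 * π))‖ ^ 2)
      = ∫ x in Set.Ioc (-π) (-π + 2 * π),
          Set.indicator (Set.Icc (-Ω) Ω) (fun x : ℝ => ‖g x‖ ^ 2) x := by
    refine integral_congr_ae ((circ_comp_mk_ae g).mono fun x hx => ?_)
    dsimp only at hx ⊢
    rw [hx]
    by_cases hmem : x ∈ Set.Icc (-Ω) Ω
    · rw [Set.indicator_of_mem hmem]
      unfold ext0
      rw [Set.indicator_of_mem hmem]
    · unfold ext0
      rw [Set.indicator_of_notMem hmem, Set.indicator_of_notMem hmem, norm_zero]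
      ring
  rw [h4, setIntegral_indicator measurableSet_Icc,
    Set.inter_eq_right.mpr (Icc_subset_Ioc hΩ0 hΩπ), ← norm_L2_sq g]
  rw [smul_eq_mul]
  ring


lemma memℓp_coeff (hΩ0 : 0 < Ω) (hΩπ : Ω < π) (g : Hs Ω) :
    Memℓp (fun t : ℤ => coeff Ω ⇑g t) 2 := by
  have h := lp.memℓp (fourierBasis.repr (circL hΩ0 hΩπ g))
  have hco : (⇑(fourierBasis.repr (circL hΩ0 hΩπ g)) : ℤ → ℂ)
      = fun n => coeff Ω ⇑g (-n) :=
    funext fun n => by rw [fourierBasis_repr, fourierCoeff_circL hΩ0 hΩπ g n]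
  rw [hco] at h
  exact memℓp_gen ((Equiv.neg ℤ).summable_iff.mp (h.summable (by norm_num)))

variable (hΩ0 : 0 < Ω) (hΩπ : Ω < π)

/-- The synthesis operator. -/
def Phi (g : Hs Ω) : E2 := ⟨fun t : ℤ => coeff Ω ⇑g t, memℓp_coeff hΩ0 hΩπ g⟩

lemma Phi_apply (g : Hs Ω) (t : ℤ) : (Phi hΩ0 hΩπ g : ℤ → ℂ) t = coeff Ω ⇑g t := rfl

lemma Phi_add (g h : Hs Ω) :
    Phi hΩ0 hΩπ (g + h) = Phi hΩ0 hΩπ g + Phi hΩ0 hΩπ h := by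
  apply lp.ext
  rw [lp.coeFn_add]
  funext t
  simp only [Phi_apply, Pi.add_apply, coeff_add g h]

lemma Phi_smul (c : ℂ) (g : Hs Ω) :
    Phi hΩ0 hΩπ (c • g) = c • Phi hΩ0 hΩπ g := by
  apply lp.ext
  rw [lp.coeFn_smul]
  funext t
  simp only [Phi_apply, Pi.smul_apply, coeff_smul c g]

lemma Phi_sub (g h : Hs Ω) :
    Phi hΩ0 hΩπ (g - h) = Phi hΩ0 hΩπ g - Phi hΩ0 hΩπ h := by
  have := Phi_add hΩ0 hΩπ (g - h) h
  rw [sub_add_cancel] at this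
  rw [this]
  abel

lemma norm_Phi_sq (g : Hs Ω) : ‖Phi hΩ0 hΩπ g‖ ^ 2 = (1 / (2 * π)) * ‖g‖ ^ 2 := by
  rw [E2_norm_sq]
  exact tsum_coeff_sq hΩ0 hΩπ g

/-- the Parseval constant. -/
def c0 : ℝ := Real.sqrt (1 / (2 * π))

lemma c0_pos : 0 < c0 := Real.sqrt_pos.mpr (by positivity)

lemma norm_Phi (g : Hs Ω) : ‖Phi hΩ0 hΩπ g‖ = c0 * ‖g‖ := by
  have h1 := norm_Phi_sq hΩ0 hΩπ g
  have h2 : ‖Phi hΩ0 hΩπ g‖ = Real.sqrt (‖Phi hΩ0 hΩπ g‖ ^ 2) :=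
    (Real.sqrt_sq (norm_nonneg _)).symm
  rw [h2, h1, Real.sqrt_mul (by positivity), Real.sqrt_sq (norm_nonneg _), c0]

lemma dist_Phi (g h : Hs Ω) :
    dist (Phi hΩ0 hΩπ g) (Phi hΩ0 hΩπ h) = c0 * dist g h := by
  rw [dist_eq_norm, dist_eq_norm, ← Phi_sub hΩ0 hΩπ, norm_Phi hΩ0 hΩπ]

lemma isComplete_range_Phi : IsComplete (Set.range (Phi hΩ0 hΩπ)) := by
  have hlip : LipschitzWith c0.toNNReal (Phi hΩ0 hΩπ) := by
    refine LipschitzWith.of_dist_le_mul fun g h => ?_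
    rw [dist_Phi hΩ0 hΩπ, Real.coe_toNNReal _ c0_pos.le]
  have hanti : AntilipschitzWith (c0⁻¹).toNNReal (Phi hΩ0 hΩπ) := by
    refine antilipschitzWith_iff_le_mul_dist.mpr fun g h => ?_
    rw [dist_Phi hΩ0 hΩπ, Real.coe_toNNReal _ (inv_nonneg.mpr c0_pos.le)]
    rw [← mul_assoc, inv_mul_cancel₀ c0_pos.ne', one_mul]
  exact hanti.isComplete_range hlip.uniformContinuous


lemma coeff_zero_fun (t : ℤ) : coeff Ω (fun _ => (0 : ℂ)) t = 0 := by
  unfold coeff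
  simp

/-- Key injectivity: a band-limited sequence vanishing off a finite set vanishes. -/
lemma coeff_eq_zero_of_vanish (h0 : 0 < Ω) (hπ : Ω < π) (S : Finset ℤ) (g : Hs Ω)
    (h : ∀ t : ℤ, t ∉ S → coeff Ω ⇑g t = 0) : ∀ t : ℤ, coeff Ω ⇑g t = 0 := by
  classical
  set c : ℤ → ℂ := fun n => fourierCoeff (⇑(circL h0 hπ g)) n with hc
  set S' : Finset ℤ := S.image (fun t => -t) with hS'
  have hsupp : ∀ n : ℤ, n ∉ S' → c n = 0 := by
    intro n hn
    have hnS : -n ∉ S := by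
      intro hmem
      exact hn (Finset.mem_image.mpr ⟨-n, hmem, by ring⟩)
    show fourierCoeff (⇑(circL h0 hπ g)) n = 0
    rw [fourierCoeff_circL h0 hπ g n]
    exact h (-n) hnS
  -- the L² function is equal (a.e.) to a trigonometric polynomial
  have hsum := hasSum_fourier_series_L2 (circL h0 hπ g)
  have hfin : HasSum (fun i : ℤ => c i • fourierLp (T := 2 * π) 2 i)
      (∑ i ∈ S', c i • fourierLp (T := 2 * π) 2 i) :=
    hasSum_sum_of_ne_finset_zero (fun i hi => by rw [hsupp i hi, zero_smul])
  have hQ : circL h0 hπ g = ∑ i ∈ S', c i • fourierLp (T := 2 * π) 2 i :=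
    hsum.unique hfin
  -- pass to pointwise a.e. statements
  have haeQ : ∀ (F : Finset ℤ), (⇑(∑ i ∈ F, c i • fourierLp (T := 2 * π) 2 i)
      : AddCircle (2 * π) → ℂ)
      =ᵐ[AddCircle.haarAddCircle] fun z => ∑ i ∈ F, c i • fourier i z := by
    intro F
    induction F using Finset.induction_on with
    | empty => simp only [Finset.sum_empty]; exact Lp.coeFn_zero (E := ℂ) 2 _
    | @insert a F ha ih =>
      rw [Finset.sum_insert ha]
      refine ((Lp.coeFn_add _ _).trans ?_)
      have h1 : (⇑(c a • fourierLp (T := 2 * π) 2 a) : AddCircle (2 * π) → ℂ)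
          =ᵐ[AddCircle.haarAddCircle] fun z => c a • fourier a z := by
        refine (Lp.coeFn_smul _ _).trans ?_
        filter_upwards [coeFn_fourierLp (T := 2 * π) 2 a] with z hz
        simp only [Pi.smul_apply, hz]
      filter_upwards [h1, ih] with z h1z ihz
      simp only [Pi.add_apply, h1z, ihz]
      rw [Finset.sum_insert ha]
  have hae1 : (circ Ω g : AddCircle (2 * π) → ℂ)
      =ᵐ[AddCircle.haarAddCircle] fun z => ∑ i ∈ S', c i • fourier i z := by
    have h0 : (⇑(circL h0 hπ g) : AddCircle (2 * π) → ℂ)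
        =ᵐ[AddCircle.haarAddCircle] circ Ω g := (memℒp_circ h0 hπ g).coeFn_toLp
    refine h0.symm.trans ?_
    rw [hQ]
    exact haeQ S'
  -- transfer to the real line
  have hae2 : ∀ᵐ x ∂(volume.restrict (Set.Ioc (-π) (-π + 2 * π))),
      ext0 Ω g x = ∑ i ∈ S', c i • fourier i (x : AddCircle (2 * π)) := by
    have hvol : ∀ᵐ z ∂(volume : Measure (AddCircle (2 * π))),
        circ Ω g z = ∑ i ∈ S', c i • fourier i z := by
      rw [AddCircle.volume_eq_smul_haarAddCircle]
      exact Measure.ae_smul_measure hae1 _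
    have hmap : ∀ᵐ (x : ℝ) ∂((volume : Measure ℝ).restrict (Set.Ioc (-π) (-π + 2 * π))),
        circ Ω g (x : AddCircle (2 * π))
          = ∑ i ∈ S', c i • fourier i (x : AddCircle (2 * π)) := by
      rw [← (AddCircle.measurePreserving_mk (2 * π) (-π)).map_eq] at hvol
      exact ae_of_ae_map AddCircle.measurable_mk'.aemeasurable hvol
    filter_upwards [hmap, circ_comp_mk_ae g] with x h1 h2
    rw [← h2]
    exact h1
  -- the trigonometric polynomial as an entire function
  set pC : ℂ → ℂ := fun z => ∑ i ∈ S', c i • Complex.exp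
    (2 * (π : ℂ) * Complex.I * (i : ℂ) * z / ((2 * π : ℝ) : ℂ)) with hpC
  have hpc : ∀ x : ℝ, (∑ i ∈ S', c i • fourier i (x : AddCircle (2 * π))) = pC x := by
    intro x
    refine Finset.sum_congr rfl fun i _ => ?_
    rw [fourier_coe_apply]
  have hdiff : Differentiable ℂ pC := by
    refine Differentiable.fun_sum fun i _ => ?_
    exact (((differentiable_const _).mul differentiable_id).div_const _).cexp.const_smul (c i)
  -- pC vanishes a.e. on (Ω, π]
  have haeJ : ∀ᵐ (x : ℝ) ∂(volume.restrict (Set.Ioc Ω π)), pC (x : ℂ) = 0 := by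
    have hsub : Set.Ioc Ω π ⊆ Set.Ioc (-π) (-π + 2 * π) := by
      intro x hx
      simp only [Set.mem_Ioc] at hx ⊢
      constructor <;> linarith [h0, hx.1, hx.2, Real.pi_pos]
    have h1 := ae_restrict_of_ae_restrict_of_subset hsub hae2
    filter_upwards [h1, ae_restrict_mem measurableSet_Ioc] with x hx1 hx2
    have hnot : x ∉ Set.Icc (-Ω) Ω := by
      simp only [Set.mem_Icc, not_and_or, not_le]
      right
      exact hx2.1
    rw [← hpc x, ← hx1]
    unfold ext0
    rw [Set.indicator_of_notMem hnot]
  -- hence pC vanishes on the open interval (Ω, π)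
  have hzero_on : ∀ x : ℝ, x ∈ Set.Ioo Ω π → pC (x : ℂ) = 0 := by
    by_contra hcon
    push_neg at hcon
    obtain ⟨x0, hx0, hx0ne⟩ := hcon
    have hopen : IsOpen ({x : ℝ | pC (x : ℂ) ≠ 0} ∩ Set.Ioo Ω π) := by
      refine IsOpen.inter ?_ isOpen_Ioo
      exact isOpen_compl_singleton.preimage (hdiff.continuous.comp Complex.continuous_ofReal)
    have hnull : volume ({x : ℝ | ¬ (x ∈ Set.Ioc Ω π → pC (x : ℂ) = 0)}) = 0 := by
      have := (ae_restrict_iff' measurableSet_Ioc).mp haeJ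
      exact this
    have hsub2 : ({x : ℝ | pC (x : ℂ) ≠ 0} ∩ Set.Ioo Ω π)
        ⊆ {x : ℝ | ¬ (x ∈ Set.Ioc Ω π → pC (x : ℂ) = 0)} := by
      rintro x ⟨hx1, hx2⟩
      intro himp
      exact hx1 (himp ⟨hx2.1, hx2.2.le⟩)
    have hz0 : volume ({x : ℝ | pC (x : ℂ) ≠ 0} ∩ Set.Ioo Ω π) = 0 :=
      measure_mono_null hsub2 hnull
    have hpos := hopen.measure_pos volume ⟨x0, hx0ne, hx0⟩
    rw [hz0] at hpos
    exact lt_irrefl 0 hpos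
  -- by analyticity, pC vanishes identically
  have hEq : Set.EqOn pC 0 Set.univ := by
    have hana := analyticOnNhd_univ_iff_differentiable.mpr hdiff
    have hmid : (Ω + π) / 2 < π := by linarith
    have hev : ∀ᶠ (x : ℝ) in nhdsWithin ((Ω + π)/2) (Set.Ioi ((Ω + π)/2)), pC (x : ℂ) = 0 := by
      filter_upwards [Ioo_mem_nhdsGT_of_mem (⟨le_refl _, hmid⟩ :
        (Ω + π)/2 ∈ Set.Ico ((Ω + π)/2) π)] with x hx
      exact hzero_on x ⟨by linarith [hx.1], hx.2⟩
    have htend : Filter.Tendsto (fun x : ℝ => (x : ℂ))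
        (nhdsWithin ((Ω + π)/2) (Set.Ioi ((Ω + π)/2)))
        (nhdsWithin (((Ω + π)/2 : ℝ) : ℂ) {(((Ω + π)/2 : ℝ) : ℂ)}ᶜ) := by
      refine tendsto_nhdsWithin_of_tendsto_nhds_of_eventually_within _
        (Complex.continuous_ofReal.continuousAt.tendsto.mono_left nhdsWithin_le_nhds) ?_
      filter_upwards [self_mem_nhdsWithin] with x hx
      simp only [Set.mem_compl_iff, Set.mem_singleton_iff]
      intro hxx
      have hlt : (Ω + π)/2 < x := hx
      exact ne_of_gt hlt (Complex.ofReal_injective hxx)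
    have hfreq := htend.frequently (p := fun z : ℂ => pC z = 0) hev.frequently
    exact hana.eqOn_zero_of_preconnected_of_frequently_eq_zero isPreconnected_univ
      (Set.mem_univ _) hfreq
  -- conclude that g vanishes a.e.
  have hg0 : (⇑g : ℝ → ℂ) =ᵐ[μm Ω] fun _ => (0 : ℂ) := by
    have h1 : ∀ᵐ x ∂(volume.restrict (Set.Ioc (-π) (-π + 2 * π))), ext0 Ω g x = 0 := by
      filter_upwards [hae2] with x hx
      rw [hx, hpc x, hEq (Set.mem_univ _)]
      rfl
    have h2 := ae_restrict_of_ae_restrict_of_subset (Icc_subset_Ioc h0 hπ) h1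
    filter_upwards [h2, ae_restrict_mem measurableSet_Icc] with x hx1 hx2
    rw [← hx1]
    unfold ext0
    rw [Set.indicator_of_mem hx2]
  intro t
  rw [show coeff Ω ⇑g = coeff Ω (fun _ => (0:ℂ)) from coeff_congr_ae hg0]
  exact coeff_zero_fun t


section Proj

/-- finite version of the missing set. -/
def Msf (s : ℤ) (m : ℕ) : Finset ℤ := Finset.Icc s (s + m)

lemma mem_Msf_iff {s : ℤ} {m : ℕ} {t : ℤ} : t ∈ Msf s m ↔ t ∈ Ms s m := by
  rw [Msf, Ms, Finset.mem_Icc, Set.mem_Icc]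

/-- zero out the coordinates in the missing block. -/
def Pmap (s : ℤ) (m : ℕ) (y : E2) : E2 :=
  ⟨fun t => if t ∈ Msf s m then 0 else y t, memℓp_of_le y (fun i => by
    by_cases h : i ∈ Msf s m <;> simp [h])⟩

/-- keep only the coordinates in the missing block. -/
def Fmap (s : ℤ) (m : ℕ) (y : E2) : E2 :=
  ⟨fun t => if t ∈ Msf s m then y t else 0, memℓp_of_le y (fun i => by
    by_cases h : i ∈ Msf s m <;> simp [h])⟩

variable (s : ℤ) (m : ℕ)

lemma Pmap_apply (y : E2) (t : ℤ) :
    (Pmap s m y : ℤ → ℂ) t = if t ∈ Msf s m then 0 else y t := rfl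

lemma Fmap_apply (y : E2) (t : ℤ) :
    (Fmap s m y : ℤ → ℂ) t = if t ∈ Msf s m then y t else 0 := rfl

lemma Pmap_add_Fmap (y : E2) : Pmap s m y + Fmap s m y = y := by
  apply lp.ext
  rw [lp.coeFn_add]
  funext t
  simp only [Pi.add_apply, Pmap_apply, Fmap_apply]
  by_cases h : t ∈ Msf s m
  · simp [h]
  · simp [h]

lemma Pmap_add (y z : E2) : Pmap s m (y + z) = Pmap s m y + Pmap s m z := by
  apply lp.ext
  rw [lp.coeFn_add]
  funext t
  simp only [Pi.add_apply, Pmap_apply, lp.coeFn_add]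
  by_cases h : t ∈ Msf s m <;> simp [h]

lemma Pmap_smul (c : ℂ) (y : E2) : Pmap s m (c • y) = c • Pmap s m y := by
  apply lp.ext
  rw [lp.coeFn_smul]
  funext t
  simp only [Pi.smul_apply, Pmap_apply, lp.coeFn_smul]
  by_cases h : t ∈ Msf s m <;> simp [h]

lemma Pmap_sub (y z : E2) : Pmap s m (y - z) = Pmap s m y - Pmap s m z := by
  have := Pmap_add s m (y - z) z
  rw [sub_add_cancel] at this
  rw [this]
  abel

lemma norm_Pmap_le (y : E2) : ‖Pmap s m y‖ ≤ ‖y‖ := by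
  refine E2_norm_le fun i => ?_
  rw [Pmap_apply]
  by_cases h : i ∈ Msf s m <;> simp [h]

lemma lipschitz_Pmap : LipschitzWith 1 (Pmap s m) := by
  refine LipschitzWith.of_dist_le_mul fun y z => ?_
  rw [dist_eq_norm, dist_eq_norm, ← Pmap_sub s m, NNReal.coe_one, one_mul]
  exact norm_Pmap_le s m (y - z)

lemma single_coord (i : ℤ) (a : ℂ) (j : ℤ) :
    (lp.single (E := fun _ : ℤ => ℂ) 2 i a : ℤ → ℂ) j = if j = i then a else 0 := by
  rw [lp.single_apply]
  by_cases h : j = i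
  · subst h; simp
  · simp [h]

lemma single_add (i : ℤ) (a b : ℂ) :
    lp.single (E := fun _ : ℤ => ℂ) 2 i (a + b)
      = lp.single 2 i a + lp.single 2 i b := by
  apply lp.ext
  rw [lp.coeFn_add]
  funext j
  simp only [Pi.add_apply, single_coord]
  by_cases h : j = i <;> simp [h]

/-- reconstruction from the finitely many missing coordinates. -/
def cmaplin : ({t : ℤ // t ∈ Msf s m} → ℂ) →ₗ[ℂ] E2 where
  toFun := fun v => ∑ t : {t : ℤ // t ∈ Msf s m}, lp.single 2 (t : ℤ) (v t)
  map_add' := by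
    intro v w
    rw [← Finset.sum_add_distrib]
    exact Finset.sum_congr rfl fun t _ => single_add (t : ℤ) (v t) (w t)
  map_smul' := by
    intro c v
    dsimp only [RingHom.id_apply]
    rw [show (fun t : {t : ℤ // t ∈ Msf s m} =>
        lp.single (E := fun _ : ℤ => ℂ) 2 (t : ℤ) ((c • v) t))
        = fun (t : {t : ℤ // t ∈ Msf s m}) =>
            c • lp.single (E := fun _ : ℤ => ℂ) 2 (t : ℤ) (v t) from
      funext fun t => by
        rw [Pi.smul_apply]
        exact lp.single_smul (E := fun _ : ℤ => ℂ) 2 (t : ℤ) c (v t)]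
    rw [← Finset.smul_sum]

lemma cmap_cont : Continuous (cmaplin s m) :=
  (cmaplin s m).continuous_of_finiteDimensional

lemma cmap_coord (v : {t : ℤ // t ∈ Msf s m} → ℂ) (j : ℤ) :
    (cmaplin s m v : ℤ → ℂ) j = if h : j ∈ Msf s m then v ⟨j, h⟩ else 0 := by
  show (⇑(∑ t : {t : ℤ // t ∈ Msf s m},
    lp.single (E := fun _ : ℤ => ℂ) 2 (t : ℤ) (v t))) j = _
  rw [lp.coeFn_sum, Finset.sum_apply]
  by_cases h : j ∈ Msf s m
  · rw [dif_pos h]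
    rw [Finset.sum_eq_single (⟨j, h⟩ : {t : ℤ // t ∈ Msf s m})]
    · rw [single_coord]
      simp
    · intro b _ hb
      rw [single_coord]
      rw [if_neg]
      intro hj
      exact hb (by ext; exact hj.symm)
    · intro hj
      exact absurd (Finset.mem_univ _) hj
  · rw [dif_neg h]
    refine Finset.sum_eq_zero fun b _ => ?_
    rw [single_coord, if_neg]
    intro hj
    exact h (hj ▸ b.2)

lemma Fmap_eq_cmap (y : E2) : Fmap s m y = cmaplin s m (fun t => y (t : ℤ)) := by
  apply lp.ext
  funext j
  rw [show (⇑(cmaplin s m (fun t => y (t : ℤ)))) j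
    = if h : j ∈ Msf s m then y j else 0 from cmap_coord s m _ j]
  rw [Fmap_apply]
  by_cases h : j ∈ Msf s m <;> simp [h]


lemma Phi_zero : Phi hΩ0 hΩπ (0 : Hs Ω) = 0 := by
  have := Phi_sub hΩ0 hΩπ 0 0
  simpa using this

lemma exists_lowerBound (s : ℤ) (m : ℕ) :
    ∃ c : ℝ, 0 < c ∧ ∀ g : Hs Ω, c * ‖Phi hΩ0 hΩπ g‖ ≤ ‖Pmap s m (Phi hΩ0 hΩπ g)‖ := by
  by_contra hcon
  push_neg at hcon
  have hc : ∀ n : ℕ, ∃ g : Hs Ω,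
      ‖Pmap s m (Phi hΩ0 hΩπ g)‖ < (1/((n:ℝ)+1)) * ‖Phi hΩ0 hΩπ g‖ := fun n =>
    hcon (1/((n:ℝ)+1)) (by positivity)
  choose gs hgs using hc
  set y : ℕ → E2 := fun n => Phi hΩ0 hΩπ (gs n) with hy
  have hy0 : ∀ n, 0 < ‖y n‖ := by
    intro n
    rcases (norm_nonneg (y n)).lt_or_eq with h | h
    · exact h
    · exfalso
      have h' := hgs n
      rw [show Phi hΩ0 hΩπ (gs n) = y n from rfl, ← h, mul_zero] at h'
      exact absurd h' (not_lt.mpr (norm_nonneg _))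
  set u : ℕ → E2 := fun n => ((‖y n‖⁻¹ : ℝ) : ℂ) • y n with hu
  have hu_mem : ∀ n, u n ∈ Set.range (Phi hΩ0 hΩπ) := by
    intro n
    refine ⟨((‖y n‖⁻¹ : ℝ) : ℂ) • gs n, ?_⟩
    rw [Phi_smul]
  have hu_norm : ∀ n, ‖u n‖ = 1 := by
    intro n
    rw [hu]
    simp only []
    rw [norm_smul, Complex.norm_real, Real.norm_eq_abs, abs_inv, abs_norm,
      inv_mul_cancel₀ (hy0 n).ne']
  have hPu : ∀ n, ‖Pmap s m (u n)‖ ≤ 1/((n:ℝ)+1) := by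
    intro n
    have hptr : Pmap s m (u n) = ((‖y n‖⁻¹ : ℝ) : ℂ) • Pmap s m (y n) := Pmap_smul s m _ _
    rw [hptr, norm_smul, Complex.norm_real, Real.norm_eq_abs, abs_inv, abs_norm]
    have h8 := mul_le_mul_of_nonneg_left (hgs n).le
      (inv_nonneg.mpr (norm_nonneg (y n)))
    refine h8.trans ?_
    rw [mul_comm (1/((n:ℝ)+1)), ← mul_assoc, inv_mul_cancel₀ (hy0 n).ne', one_mul]
  set v : ℕ → ({t : ℤ // t ∈ Msf s m} → ℂ) := fun n t => u n (t : ℤ) with hv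
  have hvball : ∀ n, v n ∈ Metric.closedBall (0 : {t : ℤ // t ∈ Msf s m} → ℂ) 1 := by
    intro n
    rw [Metric.mem_closedBall, dist_zero_right]
    refine (pi_norm_le_iff_of_nonneg zero_le_one).mpr fun t => ?_
    calc ‖u n (t : ℤ)‖ ≤ ‖u n‖ := lp.norm_apply_le_norm (by norm_num) (u n) (t : ℤ)
      _ = 1 := hu_norm n
  obtain ⟨vl, -, φ, hφ, hconv⟩ := tendsto_subseq_of_bounded Metric.isBounded_closedBall hvball
  have hFt : Filter.Tendsto (fun k => Fmap s m (u (φ k))) Filter.atTop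
      (𝓝 (cmaplin s m vl)) := by
    have h1 : (fun k => Fmap s m (u (φ k))) = (cmaplin s m) ∘ (v ∘ φ) := by
      funext k
      exact Fmap_eq_cmap s m (u (φ k))
    rw [h1]
    exact ((cmap_cont s m).tendsto vl).comp hconv
  have hPt : Filter.Tendsto (fun k => Pmap s m (u (φ k))) Filter.atTop (𝓝 0) := by
    refine squeeze_zero_norm (fun k => hPu (φ k)) ?_
    exact tendsto_one_div_add_atTop_nhds_zero_nat.comp hφ.tendsto_atTop
  have huL : Filter.Tendsto (fun k => u (φ k)) Filter.atTop
      (𝓝 (0 + cmaplin s m vl)) := by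
    have h3 : (fun k => u (φ k))
        = fun k => Pmap s m (u (φ k)) + Fmap s m (u (φ k)) := by
      funext k
      rw [Pmap_add_Fmap]
    rw [h3]
    exact hPt.add hFt
  rw [zero_add] at huL
  set L := cmaplin s m vl with hL
  have hLmem : L ∈ Set.range (Phi hΩ0 hΩπ) :=
    (isComplete_range_Phi hΩ0 hΩπ).isClosed.mem_of_tendsto huL
      (Filter.Eventually.of_forall fun k => hu_mem (φ k))
  have hLnorm : ‖L‖ = 1 := by
    have h4 : Filter.Tendsto (fun k => ‖u (φ k)‖) Filter.atTop (𝓝 ‖L‖) :=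
      (continuous_norm.tendsto L).comp huL
    have h5 : Filter.Tendsto (fun k => ‖u (φ k)‖) Filter.atTop (𝓝 1) := by
      rw [show (fun k => ‖u (φ k)‖) = fun _ => (1:ℝ) from funext fun k => hu_norm (φ k)]
      exact tendsto_const_nhds
    exact tendsto_nhds_unique h4 h5
  have hPL : Pmap s m L = 0 := by
    have h6 : Filter.Tendsto (fun k => Pmap s m (u (φ k))) Filter.atTop
        (𝓝 (Pmap s m L)) := ((lipschitz_Pmap s m).continuous.tendsto L).comp huL
    exact tendsto_nhds_unique h6 hPt
  obtain ⟨gl, hgl⟩ := hLmem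
  have hvan : ∀ t : ℤ, t ∉ Msf s m → coeff Ω ⇑gl t = 0 := by
    intro t ht
    have h7 : (Pmap s m L : ℤ → ℂ) t = 0 := by
      rw [hPL]
      exact congrFun (lp.coeFn_zero (fun _ : ℤ => ℂ) 2) t
    rw [Pmap_apply, if_neg ht] at h7
    calc coeff Ω ⇑gl t = (Phi hΩ0 hΩπ gl : ℤ → ℂ) t := rfl
      _ = (L : ℤ → ℂ) t := by rw [hgl]
      _ = 0 := h7
  have hall := coeff_eq_zero_of_vanish hΩ0 hΩπ (Msf s m) gl hvan
  have hL0 : L = 0 := by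
    rw [← hgl]
    apply lp.ext
    funext t
    rw [show (⇑(Phi hΩ0 hΩπ gl)) t = coeff Ω ⇑gl t from rfl, hall t]
    exact (congrFun (lp.coeFn_zero (fun _ : ℤ => ℂ) 2) t).symm
  rw [hL0, norm_zero] at hLnorm
  exact one_ne_zero hLnorm.symm

end Proj
end Circle

section MinAux
open Complex

lemma proj_min {K : Submodule ℂ E2} [K.HasOrthogonalProjection] (u v : E2) (hv : v ∈ K) :
    ‖(K.orthogonalProjection u : E2) - u‖ ^ 2 ≤ ‖v - u‖ ^ 2 ∧
      (‖v - u‖ ^ 2 ≤ ‖(K.orthogonalProjection u : E2) - u‖ ^ 2 →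
        v = (K.orthogonalProjection u : E2)) := by
  set p : E2 := (K.orthogonalProjection u : E2) with hp
  have hinner : inner ℂ (v - p) (p - u) = (0:ℂ) := by
    have h1 : inner ℂ (u - p) (v - p) = (0:ℂ) :=
      K.starProjection_inner_eq_zero u (v - p)
        (K.sub_mem hv (K.orthogonalProjection u).2)
    have h2 : inner ℂ (v - p) (u - p) = (0:ℂ) := inner_eq_zero_symm.mp h1
    rw [show p - u = -(u - p) by abel, inner_neg_right, h2, neg_zero]
  have hpyth : ‖v - u‖ * ‖v - u‖ = ‖v - p‖ * ‖v - p‖ + ‖p - u‖ * ‖p - u‖ := by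
    have h3 := norm_add_sq_eq_norm_sq_add_norm_sq_of_inner_eq_zero (v - p) (p - u) hinner
    rw [show v - p + (p - u) = v - u by abel] at h3
    exact h3
  constructor
  · rw [pow_two, pow_two]
    nlinarith [mul_self_nonneg ‖v - p‖]
  · intro hle
    rw [pow_two, pow_two] at hle
    have h4 : ‖v - p‖ * ‖v - p‖ ≤ 0 := by nlinarith
    have h5 : ‖v - p‖ = 0 := by nlinarith [mul_self_nonneg ‖v - p‖, norm_nonneg (v - p)]
    have h6 : v - p = 0 := norm_eq_zero.mp h5
    rw [← sub_eq_zero]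
    exact h6

lemma tsum_formula (s : ℤ) (m : ℕ) (x w : ℤ → ℂ) (xe we : E2)
    (hx : ∀ t, (xe : ℤ → ℂ) t = x t) (hw : ∀ t, (we : ℤ → ℂ) t = w t) :
    ∑' t : {t : ℤ // t ∉ Ms s m}, ‖w (t:ℤ) - x (t:ℤ)‖ ^ 2
      = ‖Pmap s m (we - xe)‖ ^ 2 := by
  rw [E2_norm_sq]
  refine Eq.trans (tsum_subtype {t : ℤ | t ∉ Ms s m} (fun t => ‖w t - x t‖ ^ 2)) ?_
  refine tsum_congr fun t => ?_
  by_cases h : t ∈ Ms s m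
  · rw [Set.indicator_of_notMem (by simpa using h), Pmap_apply,
      if_pos (mem_Msf_iff.mpr h), norm_zero]
    ring
  · rw [Set.indicator_of_mem (by simpa using h), Pmap_apply,
      if_neg (fun hc => h (mem_Msf_iff.mp hc)), lp.coeFn_sub, Pi.sub_apply, hx, hw]

end MinAux
end BLaux

open BLaux in
theorem exists_unique_bandlimited_minimizer (Ω : ℝ) (hΩ0 : 0 < Ω) (hΩπ : Ω < Real.pi)
    (s : ℤ) (m : ℕ) (x : ℤ → ℂ) (hx : Summable fun t : ℤ => ‖x t‖ ^ 2) :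
    ∃ xh : ℤ → ℂ, IsBandLimited Ω xh ∧
      (∀ w : ℤ → ℂ, IsBandLimited Ω w →
        ∑' t : {t : ℤ // t ∉ Ms s m}, ‖xh (t : ℤ) - x (t : ℤ)‖ ^ 2 ≤
          ∑' t : {t : ℤ // t ∉ Ms s m}, ‖w (t : ℤ) - x (t : ℤ)‖ ^ 2) ∧
      (∀ w : ℤ → ℂ, IsBandLimited Ω w →
        (∀ w' : ℤ → ℂ, IsBandLimited Ω w' →
          ∑' t : {t : ℤ // t ∉ Ms s m}, ‖w (t : ℤ) - x (t : ℤ)‖ ^ 2 ≤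
            ∑' t : {t : ℤ // t ∉ Ms s m}, ‖w' (t : ℤ) - x (t : ℤ)‖ ^ 2) →
        ∀ t : ℤ, w t = xh t) := by
  classical
  have hxe : Memℓp x 2 := memℓp_gen (hx.congr fun t => by
    rw [show ((2:ENNReal)).toReal = ((2:ℕ):ℝ) by norm_num, Real.rpow_natCast])
  -- the subspace of off-block restrictions of band-limited sequences
  let K : Submodule ℂ E2 :=
    { carrier := Set.range (fun g : Hs Ω => Pmap s m (Phi hΩ0 hΩπ g))
      add_mem' := by
        rintro a b ⟨ga, rfl⟩ ⟨gb, rfl⟩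
        exact ⟨ga + gb, by dsimp only; rw [Phi_add, Pmap_add]⟩
      zero_mem' := ⟨0, by dsimp only; rw [Phi_zero]; simpa using Pmap_sub s m 0 0⟩
      smul_mem' := by
        rintro c a ⟨ga, rfl⟩
        exact ⟨c • ga, by dsimp only; rw [Phi_smul, Pmap_smul]⟩ }
  have hKc : IsComplete (K : Set E2) := by
    obtain ⟨c, hc, hlow⟩ := exists_lowerBound hΩ0 hΩπ s m
    have hpos : 0 < c * c0 := mul_pos hc c0_pos
    have hQsub : ∀ g h : Hs Ω,
        Pmap s m (Phi hΩ0 hΩπ g) - Pmap s m (Phi hΩ0 hΩπ h)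
          = Pmap s m (Phi hΩ0 hΩπ (g - h)) := by
      intro g h
      rw [Phi_sub, Pmap_sub]
    have hanti : AntilipschitzWith ((c * c0)⁻¹).toNNReal
        (fun g : Hs Ω => Pmap s m (Phi hΩ0 hΩπ g)) := by
      refine antilipschitzWith_iff_le_mul_dist.mpr fun g h => ?_
      rw [Real.coe_toNNReal _ (inv_nonneg.mpr hpos.le), dist_eq_norm, dist_eq_norm, hQsub]
      have h1 : c * c0 * ‖g - h‖ ≤ ‖Pmap s m (Phi hΩ0 hΩπ (g - h))‖ := by
        have h2 := hlow (g - h)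
        rw [norm_Phi hΩ0 hΩπ] at h2
        calc c * c0 * ‖g - h‖ = c * (c0 * ‖g - h‖) := by ring
          _ ≤ _ := h2
      calc ‖g - h‖ = (c * c0)⁻¹ * (c * c0 * ‖g - h‖) := by
            rw [← mul_assoc, inv_mul_cancel₀ hpos.ne', one_mul]
        _ ≤ (c * c0)⁻¹ * ‖Pmap s m (Phi hΩ0 hΩπ (g - h))‖ :=
            mul_le_mul_of_nonneg_left h1 (inv_nonneg.mpr hpos.le)
    have hlip : LipschitzWith c0.toNNReal
        (fun g : Hs Ω => Pmap s m (Phi hΩ0 hΩπ g)) := by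
      refine LipschitzWith.of_dist_le_mul fun g h => ?_
      rw [Real.coe_toNNReal _ c0_pos.le, dist_eq_norm, dist_eq_norm, hQsub]
      calc ‖Pmap s m (Phi hΩ0 hΩπ (g - h))‖ ≤ ‖Phi hΩ0 hΩπ (g - h)‖ :=
            norm_Pmap_le s m _
        _ = c0 * ‖g - h‖ := norm_Phi hΩ0 hΩπ _
    exact hanti.isComplete_range hlip.uniformContinuous
  haveI : CompleteSpace K := hKc.completeSpace_coe
  have hu : Memℓp x 2 := hxe
  obtain ⟨g0, hg0⟩ : ∃ g0 : Hs Ω,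
      Pmap s m (Phi hΩ0 hΩπ g0)
        = (K.orthogonalProjection (Pmap s m ⟨x, hxe⟩) : E2) :=
    (K.orthogonalProjection (Pmap s m ⟨x, hxe⟩)).2
  -- the minimizer
  have hxhBL : IsBandLimited Ω (fun t : ℤ => coeff Ω ⇑g0 t) :=
    ⟨⇑g0, Lp.memLp g0, fun t => rfl⟩
  have hBL : ∀ w : ℤ → ℂ, IsBandLimited Ω w →
      ∃ gw : Hs Ω, ∀ t : ℤ, w t = coeff Ω ⇑gw t := by
    rintro w ⟨g, hgmem, hgeq⟩
    refine ⟨hgmem.toLp g, fun t => ?_⟩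
    rw [hgeq t]
    exact (congrFun (coeff_congr_ae (Ω := Ω) hgmem.coeFn_toLp) t).symm
  have hval : ∀ (w : ℤ → ℂ) (gw : Hs Ω), (∀ t : ℤ, w t = coeff Ω ⇑gw t) →
      (∑' t : {t : ℤ // t ∉ Ms s m}, ‖w (t:ℤ) - x (t:ℤ)‖ ^ 2)
        = ‖Pmap s m (Phi hΩ0 hΩπ gw) - Pmap s m ⟨x, hxe⟩‖ ^ 2 := by
    intro w gw hwg
    rw [tsum_formula s m x w ⟨x, hxe⟩ (Phi hΩ0 hΩπ gw)
      (fun t => rfl) (fun t => (hwg t).symm), Pmap_sub]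
  have hminmain : ∀ w : ℤ → ℂ, IsBandLimited Ω w →
      ∑' t : {t : ℤ // t ∉ Ms s m}, ‖coeff Ω ⇑g0 (t:ℤ) - x (t:ℤ)‖ ^ 2 ≤
        ∑' t : {t : ℤ // t ∉ Ms s m}, ‖w (t:ℤ) - x (t:ℤ)‖ ^ 2 := by
    intro w hw
    obtain ⟨gw, hwg⟩ := hBL w hw
    rw [hval w gw hwg, hval (fun t : ℤ => coeff Ω ⇑g0 t) g0 (fun t => rfl), hg0]
    exact (proj_min (K := K) (Pmap s m ⟨x, hxe⟩) (Pmap s m (Phi hΩ0 hΩπ gw))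
      ⟨gw, rfl⟩).1
  refine ⟨fun t : ℤ => coeff Ω ⇑g0 t, hxhBL, hminmain, ?_⟩
  intro w hw hminw
  obtain ⟨gw, hwg⟩ := hBL w hw
  have h1 := hminw (fun t : ℤ => coeff Ω ⇑g0 t) hxhBL
  have heq : ‖Pmap s m (Phi hΩ0 hΩπ gw) - Pmap s m ⟨x, hxe⟩‖ ^ 2
      ≤ ‖(K.orthogonalProjection (Pmap s m ⟨x, hxe⟩) : E2) - Pmap s m ⟨x, hxe⟩‖ ^ 2 := by
    rw [← hg0, ← hval w gw hwg, ← hval (fun t : ℤ => coeff Ω ⇑g0 t) g0 (fun t => rfl)]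
    exact h1
  have hQeq : Pmap s m (Phi hΩ0 hΩπ gw) = Pmap s m (Phi hΩ0 hΩπ g0) := by
    rw [(proj_min (K := K) (Pmap s m ⟨x, hxe⟩) (Pmap s m (Phi hΩ0 hΩπ gw))
      ⟨gw, rfl⟩).2 heq, ← hg0]
  have hPzero : Pmap s m (Phi hΩ0 hΩπ (gw - g0)) = 0 := by
    rw [Phi_sub, Pmap_sub, hQeq, sub_self]
  have hvan : ∀ t : ℤ, t ∉ Msf s m → coeff Ω ⇑(gw - g0) t = 0 := by
    intro t ht
    have h7 := congrFun (congrArg (fun z : E2 => (z : ℤ → ℂ)) hPzero) t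
    simp only at h7
    rw [Pmap_apply, if_neg ht] at h7
    exact h7.trans (congrFun (lp.coeFn_zero (fun _ : ℤ => ℂ) 2) t)
  have hall := coeff_eq_zero_of_vanish hΩ0 hΩπ (Msf s m) (gw - g0) hvan
  intro t
  have h8 : coeff Ω ⇑gw t - coeff Ω ⇑g0 t = 0 := by
    calc coeff Ω ⇑gw t - coeff Ω ⇑g0 t
        = ((Phi hΩ0 hΩπ gw - Phi hΩ0 hΩπ g0 : E2) : ℤ → ℂ) t := by
          rw [lp.coeFn_sub]; rfl
      _ = ((Phi hΩ0 hΩπ (gw - g0) : E2) : ℤ → ℂ) t := by rw [Phi_sub]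
      _ = 0 := hall t
  rw [hwg t]
  exact sub_eq_zero.mp h8

end
end

section
/- Let 0 < Ω < π, s ∈ ℤ, m ∈ ℕ, and let y : ℤ → ℂ satisfy y(t) = 0 for all t ∈ ℤ \ M_s and y not identically zero. Then the sequence (h ∘ y)(t) = Σ_{u∈M_s} h(t−u) y(u) is square-summable and satisfies the strict inequality Σ_{t∈ℤ} |(h ∘ y)(t)|² < Σ_{t∈ℤ} |y(t)|². -/
open Real Set
open scoped ENNReal

/-- Ideal low-pass filter kernel: `h(n) = sin(Ω n)/(π n)` for `n ≠ 0`, `h(0) = Ω/π`. -/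
noncomputable def lowPass (Ω : ℝ) (n : ℤ) : ℝ :=
  if n = 0 then Ω / Real.pi else Real.sin (Ω * n) / (Real.pi * n)

lemma lowPass_neg (Ω : ℝ) (n : ℤ) : lowPass Ω (-n) = lowPass Ω n := by
  unfold lowPass
  rcases eq_or_ne n 0 with h | h
  · simp [h]
  · rw [if_neg (by simpa using h), if_neg h]
    push_cast
    rw [mul_neg, Real.sin_neg, mul_neg, neg_div_neg_eq]

lemma exp_int (Ω : ℝ) (k : ℤ) :
    ∫ x in (-Ω)..Ω, Complex.exp ((k : ℂ) * Complex.I * x) =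
      2 * Real.pi * (lowPass Ω k : ℝ) := by
  rcases eq_or_ne k 0 with h | h
  · simp [h, lowPass]
    have hπ : (Real.pi : ℂ) ≠ 0 := Complex.ofReal_ne_zero.mpr Real.pi_ne_zero
    field_simp
    ring
  · have hc : (k : ℂ) * Complex.I ≠ 0 := by
      simp [Complex.I_ne_zero, Complex.ext_iff]
      exact_mod_cast h
    rw [integral_exp_mul_complex hc, lowPass, if_neg h]
    push_cast
    rw [Complex.sin]
    have hπ : (Real.pi : ℂ) ≠ 0 := Complex.ofReal_ne_zero.mpr Real.pi_ne_zero
    have hk : (k : ℂ) ≠ 0 := by exact_mod_cast h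
    have h1 : Complex.exp ((k:ℂ) * Complex.I * (-Ω)) = (Complex.exp ((k:ℂ)*Complex.I*Ω))⁻¹ := by
      rw [← Complex.exp_neg]; ring_nf
    have h2 : Complex.exp (-((Ω:ℂ) * k) * Complex.I) = (Complex.exp ((k:ℂ)*Complex.I*Ω))⁻¹ := by
      rw [← Complex.exp_neg]; ring_nf
    have h3 : Complex.exp (((Ω:ℂ) * k) * Complex.I) = Complex.exp ((k:ℂ)*Complex.I*Ω) := by ring_nf
    rw [h1, h2, h3]
    have hE : Complex.exp ((k:ℂ)*Complex.I*Ω) ≠ 0 := Complex.exp_ne_zero _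
    have hI : Complex.I ≠ 0 := Complex.I_ne_zero
    field_simp
    ring_nf
    simp [Complex.I_sq]

noncomputable def trigPoly (s : ℤ) (m : ℕ) (y : ℤ → ℂ) (x : ℝ) : ℂ :=
  ∑ u ∈ Finset.Icc s (s + (m : ℤ)), y u * Complex.exp ((u : ℂ) * Complex.I * x)

lemma continuous_trigPoly (s : ℤ) (m : ℕ) (y : ℤ → ℂ) : Continuous (trigPoly s m y) := by
  unfold trigPoly
  exact continuous_finset_sum _ fun u _ => by fun_prop

lemma int_trig (s : ℤ) (m : ℕ) (y : ℤ → ℂ) (Ω : ℝ) (t : ℤ) :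
    ∫ x in (-Ω)..Ω, Complex.exp (-(t : ℂ) * Complex.I * x) * trigPoly s m y x
      = 2 * Real.pi * ∑ u ∈ Finset.Icc s (s + (m : ℤ)), (lowPass Ω (t - u) : ℂ) * y u := by
  have h1 : ∀ x : ℝ, Complex.exp (-(t : ℂ) * Complex.I * x) * trigPoly s m y x
      = ∑ u ∈ Finset.Icc s (s + (m : ℤ)),
          y u * Complex.exp (((u - t : ℤ) : ℂ) * Complex.I * x) := by
    intro x
    rw [trigPoly, Finset.mul_sum]
    refine Finset.sum_congr rfl fun u _ => ?_
    rw [mul_left_comm, ← Complex.exp_add]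
    congr 1
    push_cast
    ring
  simp_rw [h1]
  rw [intervalIntegral.integral_finset_sum fun u _ =>
    (Continuous.intervalIntegrable (by fun_prop) _ _)]
  rw [Finset.mul_sum]
  refine Finset.sum_congr rfl fun u hu => ?_
  rw [intervalIntegral.integral_const_mul, exp_int Ω (u - t),
    show lowPass Ω (u - t) = lowPass Ω (t - u) by rw [← neg_sub t u, lowPass_neg]]
  ring

lemma lowPass_pi (k : ℤ) : lowPass Real.pi k = if k = 0 then 1 else 0 := by
  unfold lowPass
  rcases eq_or_ne k 0 with h | h
  · simp [h, div_self Real.pi_ne_zero]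
  · rw [if_neg h, if_neg h, mul_comm, Real.sin_int_mul_pi, zero_div]

lemma int_trig_sq (s : ℤ) (m : ℕ) (y : ℤ → ℂ) :
    ∫ x in (-Real.pi)..Real.pi, ‖trigPoly s m y x‖ ^ 2
      = 2 * Real.pi * ∑ u ∈ Finset.Icc s (s + (m : ℤ)), ‖y u‖ ^ 2 := by
  set S := Finset.Icc s (s + (m : ℤ)) with hS
  have h1 : ∀ x : ℝ, ((‖trigPoly s m y x‖ ^ 2 : ℝ) : ℂ)
      = ∑ u ∈ S, ∑ v ∈ S,
          (y u * (starRingEnd ℂ) (y v)) * Complex.exp (((u - v : ℤ) : ℂ) * Complex.I * x) := by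
    intro x
    push_cast
    rw [← Complex.mul_conj']
    rw [trigPoly, map_sum, Finset.sum_mul_sum]
    refine Finset.sum_congr rfl fun u _ => Finset.sum_congr rfl fun v _ => ?_
    have hc : (starRingEnd ℂ) ((v : ℂ) * Complex.I * x) = -((v : ℂ) * Complex.I * x) := by
      simp [Complex.conj_I]
    rw [map_mul, ← Complex.exp_conj, hc, mul_mul_mul_comm, ← Complex.exp_add]
    congr 1
    push_cast
    ring
  have key : (∫ x in (-Real.pi)..Real.pi, ((‖trigPoly s m y x‖ ^ 2 : ℝ) : ℂ))
      = ((2 * Real.pi * ∑ u ∈ S, ‖y u‖ ^ 2 : ℝ) : ℂ) := by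
    simp_rw [h1]
    rw [intervalIntegral.integral_finset_sum fun u _ =>
      (Continuous.intervalIntegrable (continuous_finset_sum _ fun v _ => by fun_prop) _ _)]
    have h2 : ∀ u ∈ S, (∫ x in (-Real.pi)..Real.pi, ∑ v ∈ S,
        (y u * (starRingEnd ℂ) (y v)) * Complex.exp (((u - v : ℤ) : ℂ) * Complex.I * x))
        = ((2 * Real.pi * ‖y u‖ ^ 2 : ℝ) : ℂ) := by
      intro u hu
      rw [intervalIntegral.integral_finset_sum fun v _ =>
        (Continuous.intervalIntegrable (by fun_prop) _ _)]
      have h3 : ∀ v ∈ S, (∫ x in (-Real.pi)..Real.pi,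
          (y u * (starRingEnd ℂ) (y v)) * Complex.exp (((u - v : ℤ) : ℂ) * Complex.I * x))
          = if v = u then ((2 * Real.pi * ‖y u‖ ^ 2 : ℝ) : ℂ) else 0 := by
        intro v hv
        rw [intervalIntegral.integral_const_mul, exp_int Real.pi (u - v), lowPass_pi]
        rcases eq_or_ne v u with h | h
        · subst h
          rw [if_pos rfl, if_pos (sub_self v)]
          push_cast
          rw [mul_comm, mul_assoc, Complex.mul_conj']
          push_cast
          ring
        · rw [if_neg (sub_ne_zero.mpr (Ne.symm h)), if_neg h]
          push_cast
          ring
      rw [Finset.sum_congr rfl h3, Finset.sum_ite_eq' S u _, if_pos hu]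
    rw [Finset.sum_congr rfl h2]
    push_cast
    rw [Finset.mul_sum]
  rw [intervalIntegral.integral_ofReal] at key
  exact_mod_cast key

lemma finite_zeros (s : ℤ) (m : ℕ) (y : ℤ → ℂ)
    (hy : ∃ u ∈ Finset.Icc s (s + (m : ℤ)), y u ≠ 0) (a b : ℝ) (hab : b - a < 2 * Real.pi) :
    {x ∈ Set.Ioc a b | trigPoly s m y x = 0}.Finite := by
  obtain ⟨u0, hu0S, hu0⟩ := hy
  rw [Finset.mem_Icc] at hu0S
  set P : Polynomial ℂ :=
    ∑ k ∈ Finset.range (m + 1), Polynomial.C (y (s + k)) * Polynomial.X ^ k with hP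
  have hPcoeff : ∀ k : ℕ, P.coeff k = if k < m + 1 then y (s + k) else 0 := by
    intro k
    rw [hP, Polynomial.finset_sum_coeff]
    simp only [Polynomial.coeff_C_mul, Polynomial.coeff_X_pow, mul_ite, mul_one, mul_zero]
    rcases lt_or_ge k (m + 1) with h | h
    · rw [if_pos h, Finset.sum_eq_single k (fun j _ hj => by rw [if_neg (Ne.symm hj)])
        (fun hk => absurd (Finset.mem_range.mpr h) hk), if_pos rfl]
    · rw [if_neg (not_lt.mpr h)]
      refine Finset.sum_eq_zero fun j hj => ?_
      rw [Finset.mem_range] at hj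
      rw [if_neg (by omega)]
  have hPne : P ≠ 0 := by
    intro h0
    apply hu0
    have hk : u0 = s + ((u0 - s).toNat : ℤ) := by omega
    have := hPcoeff (u0 - s).toNat
    rw [h0, Polynomial.coeff_zero, if_pos (by omega)] at this
    rw [hk]
    exact this.symm
  have hval : ∀ x : ℝ, trigPoly s m y x
      = Complex.exp ((s : ℂ) * Complex.I * x) * P.eval (Complex.exp (Complex.I * x)) := by
    intro x
    rw [trigPoly, hP, Polynomial.eval_finset_sum, Finset.mul_sum,
      show Finset.Icc s (s + (m : ℤ))
        = Finset.map ⟨fun k : ℕ => s + k, fun a b h => by simp only [add_right_inj, Nat.cast_inj] at h; omega⟩ (Finset.range (m + 1)) from by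
        ext u
        simp only [Finset.mem_Icc, Finset.mem_map, Finset.mem_range, Function.Embedding.coeFn_mk]
        constructor
        · intro h; exact ⟨(u - s).toNat, by omega, show s + ((u - s).toNat : ℤ) = u by omega⟩
        · rintro ⟨k, hk, rfl⟩; show s ≤ s + (k : ℤ) ∧ s + (k : ℤ) ≤ s + m; omega,
      Finset.sum_map]
    refine Finset.sum_congr rfl fun k hk => ?_
    simp only [Function.Embedding.coeFn_mk, Polynomial.eval_mul, Polynomial.eval_C,
      Polynomial.eval_pow, Polynomial.eval_X]
    rw [← Complex.exp_nat_mul, mul_left_comm, ← Complex.exp_add]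
    congr 2
    show ((s + (k : ℤ) : ℤ) : ℂ) * Complex.I * x = _
    push_cast
    ring
  apply Set.Finite.of_finite_image (f := fun x : ℝ => Complex.exp (Complex.I * x))
  · apply Set.Finite.subset (P.roots.toFinset : Finset ℂ).finite_toSet
    rintro z ⟨x, ⟨hxI, hx0⟩, rfl⟩
    rw [Finset.mem_coe, Multiset.mem_toFinset, Polynomial.mem_roots hPne]
    have h := hval x
    rw [hx0] at h
    have := (mul_eq_zero.mp h.symm).resolve_left (Complex.exp_ne_zero _)
    exact this
  · intro x hx x' hx' hxx
    simp only at hxx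
    have h1 : Complex.exp (Complex.I * x - Complex.I * x') = 1 := by
      rw [Complex.exp_sub, hxx, div_self (Complex.exp_ne_zero _)]
    rw [Complex.exp_eq_one_iff] at h1
    obtain ⟨n, hn⟩ := h1
    have him := congrArg Complex.im hn
    simp [Complex.mul_im, Complex.sub_im] at him
    have hxx' : x - x' = n * (2 * Real.pi) := by
      push_cast at him ⊢
      linarith [him]
    have hb2 : |x - x'| < 2 * Real.pi := by
      rw [abs_sub_lt_iff]
      constructor
      · linarith [hx.1.2, hx'.1.1, hab]
      · linarith [hx'.1.2, hx.1.1, hab]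
    have hn0 : n = 0 := by
      by_contra hne
      have h1 : (1 : ℝ) ≤ |(n : ℝ)| := by exact_mod_cast Int.one_le_abs (by exact_mod_cast hne)
      have h2 : 2 * Real.pi ≤ |x - x'| := by
        rw [hxx', abs_mul, abs_of_pos (by positivity : (0:ℝ) < 2 * Real.pi)]
        nlinarith [Real.pi_pos]
      linarith
    have : x - x' = 0 := by rw [hxx', hn0]; simp
    linarith

instance : Fact (0 < 2 * Real.pi) := ⟨by positivity⟩

noncomputable def Fr (Ω : ℝ) (s : ℤ) (m : ℕ) (y : ℤ → ℂ) : ℝ → ℂ :=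
  (Set.Ioc (-Ω) Ω).indicator (trigPoly s m y)

noncomputable def Gc (Ω : ℝ) (s : ℤ) (m : ℕ) (y : ℤ → ℂ) : AddCircle (2 * Real.pi) → ℂ :=
  AddCircle.liftIoc (2 * Real.pi) (-Real.pi) (Fr Ω s m y)

lemma norm_trigPoly_le (s : ℤ) (m : ℕ) (y : ℤ → ℂ) (x : ℝ) :
    ‖trigPoly s m y x‖ ≤ ∑ u ∈ Finset.Icc s (s + (m : ℤ)), ‖y u‖ := by
  refine (norm_sum_le _ _).trans (Finset.sum_le_sum fun u _ => ?_)
  rw [norm_mul]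
  have h : ‖Complex.exp ((u : ℂ) * Complex.I * x)‖ = 1 := by
    rw [show (u : ℂ) * Complex.I * x = ((u * x : ℝ) : ℂ) * Complex.I by push_cast; ring]
    exact Complex.norm_exp_ofReal_mul_I _
  rw [h, mul_one]

lemma measurable_Gc (Ω : ℝ) (s : ℤ) (m : ℕ) (y : ℤ → ℂ) : Measurable (Gc Ω s m y) := by
  have h1 : Measurable (Fr Ω s m y) :=
    ((continuous_trigPoly s m y).measurable).indicator measurableSet_Ioc
  exact h1.comp (measurable_subtype_coe.comp
    (AddCircle.measurableEquivIoc (2 * Real.pi) (-Real.pi)).measurable)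

lemma memLp_Gc (Ω : ℝ) (s : ℤ) (m : ℕ) (y : ℤ → ℂ) :
    MeasureTheory.MemLp (Gc Ω s m y) 2 AddCircle.haarAddCircle := by
  apply MeasureTheory.MemLp.of_bound (measurable_Gc Ω s m y).aestronglyMeasurable
    (∑ u ∈ Finset.Icc s (s + (m : ℤ)), ‖y u‖)
  apply MeasureTheory.ae_of_all
  intro z
  show ‖Fr Ω s m y _‖ ≤ _
  exact (norm_indicator_le_norm_self _ _).trans (norm_trigPoly_le s m y _)

lemma fourierCoeff_Gc (Ω : ℝ) (hΩ0 : 0 < Ω) (hΩπ : Ω < Real.pi) (s : ℤ) (m : ℕ) (y : ℤ → ℂ)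
    (t : ℤ) :
    fourierCoeff (Gc Ω s m y) t
      = ∑ u ∈ Finset.Icc s (s + (m : ℤ)), (lowPass Ω (t - u) : ℂ) * y u := by
  have hπ := Real.pi_pos
  rw [Gc, fourierCoeff_eq_intervalIntegral _ t (-Real.pi)]
  rw [intervalIntegral.integral_of_le (by linarith)]
  rw [MeasureTheory.setIntegral_congr_fun (f := fun x : ℝ =>
        fourier (-t) ((x : ℝ) : AddCircle (2 * Real.pi)) •
          AddCircle.liftIoc (2 * Real.pi) (-Real.pi) (Fr Ω s m y) ((x : ℝ) : AddCircle (2 * Real.pi)))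
      (g := (Set.Ioc (-Ω) Ω).indicator
        (fun x : ℝ => Complex.exp (-(t : ℂ) * Complex.I * x) * trigPoly s m y x))
      measurableSet_Ioc ?_]
  · rw [MeasureTheory.setIntegral_indicator measurableSet_Ioc,
      Set.inter_eq_self_of_subset_right (Set.Ioc_subset_Ioc (by linarith) (by linarith)),
      ← intervalIntegral.integral_of_le (by linarith), int_trig]
    rw [Complex.real_smul]
    have h2π : ((2 * Real.pi : ℝ) : ℂ) ≠ 0 := by
      simp only [ne_eq, Complex.ofReal_eq_zero]
      positivity
    push_cast
    rw [← mul_assoc, one_div, inv_mul_cancel₀ (by push_cast at h2π ⊢; exact h2π), one_mul]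
  · intro x hx
    have hGx : AddCircle.liftIoc (2 * Real.pi) (-Real.pi) (Fr Ω s m y) ((x : ℝ) : AddCircle (2 * Real.pi))
        = Fr Ω s m y x := AddCircle.liftIoc_coe_apply hx
    beta_reduce
    rw [hGx]
    have hf : (fourier (-t) ((x : ℝ) : AddCircle (2 * Real.pi)) : ℂ)
        = Complex.exp (-(t : ℂ) * Complex.I * x) := by
      rw [fourier_coe_apply]
      congr 1
      push_cast
      rw [div_eq_iff (mul_ne_zero two_ne_zero (Complex.ofReal_ne_zero.mpr Real.pi_ne_zero))]
      ring
    rw [smul_eq_mul, hf, Fr]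
    by_cases hm : x ∈ Set.Ioc (-Ω) Ω
    · rw [Set.indicator_of_mem hm, Set.indicator_of_mem hm]
    · rw [Set.indicator_of_notMem hm, Set.indicator_of_notMem hm, mul_zero]

lemma integral_Gc_sq (Ω : ℝ) (hΩ0 : 0 < Ω) (hΩπ : Ω < Real.pi) (s : ℤ) (m : ℕ) (y : ℤ → ℂ) :
    ∫ z, ‖Gc Ω s m y z‖ ^ 2 ∂(AddCircle.haarAddCircle)
      = (1 / (2 * Real.pi)) * ∫ x in (-Ω)..Ω, ‖trigPoly s m y x‖ ^ 2 := by
  have hπ := Real.pi_pos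
  have h1 := AddCircle.integral_preimage (2 * Real.pi) (-Real.pi)
    (fun z => ‖Gc Ω s m y z‖ ^ 2)
  rw [AddCircle.volume_eq_smul_haarAddCircle, MeasureTheory.integral_smul_measure,
    ENNReal.toReal_ofReal (by positivity)] at h1
  have h2 : ∫ x in Set.Ioc (-Real.pi) (-Real.pi + 2 * Real.pi), ‖Gc Ω s m y x‖ ^ 2
      = ∫ x in (-Ω)..Ω, ‖trigPoly s m y x‖ ^ 2 := by
    rw [MeasureTheory.setIntegral_congr_fun (g := (Set.Ioc (-Ω) Ω).indicator
        (fun x : ℝ => ‖trigPoly s m y x‖ ^ 2)) measurableSet_Ioc ?_]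
    · rw [MeasureTheory.setIntegral_indicator measurableSet_Ioc,
        Set.inter_eq_self_of_subset_right (Set.Ioc_subset_Ioc (by linarith) (by linarith)),
        ← intervalIntegral.integral_of_le (by linarith)]
    · intro x hx
      have hGx : Gc Ω s m y ((x : ℝ) : AddCircle (2 * Real.pi)) = Fr Ω s m y x :=
        AddCircle.liftIoc_coe_apply hx
      beta_reduce
      rw [hGx, Fr]
      by_cases hm : x ∈ Set.Ioc (-Ω) Ω
      · rw [Set.indicator_of_mem hm, Set.indicator_of_mem hm]
      · rw [Set.indicator_of_notMem hm, Set.indicator_of_notMem hm, norm_zero]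
        ring
  rw [← h2, h1, smul_eq_mul]
  field_simp

theorem lowpass_of_finitely_supported_strict_contraction (Ω : ℝ) (hΩ0 : 0 < Ω)
    (hΩπ : Ω < Real.pi) (s : ℤ) (m : ℕ) (y : ℤ → ℂ)
    (hy0 : ∀ t : ℤ, t ∉ Ms s m → y t = 0) (hy : y ≠ 0) :
    (Summable fun t : ℤ =>
      ‖∑ u ∈ Finset.Icc s (s + (m : ℤ)), (lowPass Ω (t - u) : ℂ) * y u‖ ^ 2) ∧
    ∑' t : ℤ, ‖∑ u ∈ Finset.Icc s (s + (m : ℤ)), (lowPass Ω (t - u) : ℂ) * y u‖ ^ 2 <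
      ∑' t : ℤ, ‖y t‖ ^ 2 := by
  have hπ := Real.pi_pos
  have hy' : ∃ u ∈ Finset.Icc s (s + (m : ℤ)), y u ≠ 0 := by
    by_contra h
    push_neg at h
    apply hy
    funext t
    show y t = (0 : ℤ → ℂ) t
    by_cases ht : t ∈ Ms s m
    · simpa using h t (by simpa [Ms, Set.mem_Icc, Finset.mem_Icc] using ht)
    · simpa using hy0 t ht
  set g := (memLp_Gc Ω s m y).toLp (Gc Ω s m y) with hg
  have hae : ⇑g =ᵐ[AddCircle.haarAddCircle] Gc Ω s m y := MeasureTheory.MemLp.coeFn_toLp _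
  have hcoeff : ∀ n : ℤ, fourierCoeff (⇑g) n
      = ∑ u ∈ Finset.Icc s (s + (m : ℤ)), (lowPass Ω (n - u) : ℂ) * y u := by
    intro n
    rw [← fourierCoeff_Gc Ω hΩ0 hΩπ s m y n]
    unfold fourierCoeff
    apply MeasureTheory.integral_congr_ae
    filter_upwards [hae] with z hz
    rw [hz]
  have hsummable : Summable fun t : ℤ =>
      ‖∑ u ∈ Finset.Icc s (s + (m : ℤ)), (lowPass Ω (t - u) : ℂ) * y u‖ ^ 2 := by
    have hs := (lp.memℓp (fourierBasis.repr g)).summable (p := 2) (by norm_num)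
    refine hs.congr fun n => ?_
    rw [fourierBasis_repr, hcoeff n,
      show ENNReal.toReal 2 = ((2 : ℕ) : ℝ) by norm_num, Real.rpow_natCast]
  refine ⟨hsummable, ?_⟩
  have htsum_left : ∑' t : ℤ,
      ‖∑ u ∈ Finset.Icc s (s + (m : ℤ)), (lowPass Ω (t - u) : ℂ) * y u‖ ^ 2
      = (1 / (2 * Real.pi)) * ∫ x in (-Ω)..Ω, ‖trigPoly s m y x‖ ^ 2 := by
    calc ∑' t : ℤ, ‖∑ u ∈ Finset.Icc s (s + (m : ℤ)), (lowPass Ω (t - u) : ℂ) * y u‖ ^ 2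
        = ∑' t : ℤ, ‖fourierCoeff (⇑g) t‖ ^ 2 := tsum_congr fun t => by rw [hcoeff t]
      _ = ∫ z, ‖(⇑g) z‖ ^ 2 ∂AddCircle.haarAddCircle := tsum_sq_fourierCoeff g
      _ = ∫ z, ‖Gc Ω s m y z‖ ^ 2 ∂AddCircle.haarAddCircle := by
          apply MeasureTheory.integral_congr_ae
          filter_upwards [hae] with z hz
          rw [hz]
      _ = (1 / (2 * Real.pi)) * ∫ x in (-Ω)..Ω, ‖trigPoly s m y x‖ ^ 2 :=
          integral_Gc_sq Ω hΩ0 hΩπ s m y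
  have htsum_right : ∑' t : ℤ, ‖y t‖ ^ 2
      = (1 / (2 * Real.pi)) * ∫ x in (-Real.pi)..Real.pi, ‖trigPoly s m y x‖ ^ 2 := by
    rw [int_trig_sq, tsum_eq_sum (s := Finset.Icc s (s + (m : ℤ)))
      (fun t ht => by
        rw [hy0 t (by simpa [Ms, Set.mem_Icc, Finset.mem_Icc] using ht), norm_zero]
        norm_num)]
    field_simp
  rw [htsum_left, htsum_right]
  set φ : ℝ → ℝ := fun x => ‖trigPoly s m y x‖ ^ 2 with hφ
  have hφc : Continuous φ := by
    have h := continuous_trigPoly s m y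
    fun_prop
  have hii : ∀ a b : ℝ, IntervalIntegrable φ MeasureTheory.volume a b :=
    fun a b => hφc.intervalIntegrable a b
  have hpos : 0 < ∫ x in Ω..Real.pi, φ x := by
    rw [intervalIntegral.integral_pos_iff_support_of_nonneg_ae
      (MeasureTheory.ae_of_all _ fun x => sq_nonneg _) (hii Ω Real.pi)]
    refine ⟨hΩπ, ?_⟩
    have hZ : {x ∈ Set.Ioc Ω Real.pi | trigPoly s m y x = 0}.Finite :=
      finite_zeros s m y hy' Ω Real.pi (by linarith)
    have hsub : Set.Ioc Ω Real.pi \ {x ∈ Set.Ioc Ω Real.pi | trigPoly s m y x = 0}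
        ⊆ Function.support φ ∩ Set.Ioc Ω Real.pi := by
      rintro x ⟨hx1, hx2⟩
      refine ⟨?_, hx1⟩
      rw [Function.mem_support, hφ]
      intro h0
      exact hx2 ⟨hx1, norm_eq_zero.mp ((pow_eq_zero_iff (two_ne_zero)).mp h0)⟩
    calc (0 : ℝ≥0∞)
        < MeasureTheory.volume
            (Set.Ioc Ω Real.pi \ {x ∈ Set.Ioc Ω Real.pi | trigPoly s m y x = 0}) := by
          rw [MeasureTheory.measure_diff_null (hZ.countable.measure_zero _), Real.volume_Ioc]
          exact ENNReal.ofReal_pos.mpr (by linarith)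
      _ ≤ _ := MeasureTheory.measure_mono hsub
  have h1 := intervalIntegral.integral_add_adjacent_intervals
    (hii (-Real.pi) (-Ω)) (hii (-Ω) Ω)
  have h2 := intervalIntegral.integral_add_adjacent_intervals
    (hii (-Real.pi) Ω) (hii Ω Real.pi)
  have hnneg : 0 ≤ ∫ x in (-Real.pi)..(-Ω), φ x :=
    intervalIntegral.integral_nonneg (by linarith) (fun x _ => sq_nonneg _)
  have hlt : ∫ x in (-Ω)..Ω, φ x < ∫ x in (-Real.pi)..Real.pi, φ x := by linarith
  have h2π : (0 : ℝ) < 1 / (2 * Real.pi) := by positivity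
  exact mul_lt_mul_of_pos_left hlt h2π
end

section
/- Let 0 < Ω < π and m ∈ ℕ, and let A be the (m+1)×(m+1) real matrix with entries A_{p,k} = h(p−k) for p, k ∈ {0, 1, ..., m}. Then ‖A v‖₂ < ‖v‖₂ (Euclidean norms on ℂ^{m+1}) for every nonzero v ∈ ℂ^{m+1}, and consequently the matrix I_{m+1} − A is invertible, where I_{m+1} is the (m+1)×(m+1) identity matrix. -/
set_option maxHeartbeats 1000000


open Real

open intervalIntegral Finset

noncomputable def trig {n : ℕ} (w : Fin n → ℂ) (θ : ℝ) : ℂ :=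
  ∑ k, w k * Complex.exp (-(k:ℂ) * Complex.I * θ)

lemma cont_e (c : ℂ) : Continuous fun θ : ℝ => Complex.exp (c * θ) :=
  Complex.continuous_exp.comp (continuous_const.mul Complex.continuous_ofReal)

lemma cont_trig {n : ℕ} (w : Fin n → ℂ) : Continuous (trig w) :=
  continuous_finset_sum _ fun k _ => continuous_const.mul (cont_e _)

lemma conj_trig {n : ℕ} (w : Fin n → ℂ) (θ : ℝ) :
    (starRingEnd ℂ) (trig w θ) = ∑ l : Fin n, (starRingEnd ℂ) (w l) * Complex.exp ((l:ℂ) * Complex.I * θ) := by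
  rw [trig, map_sum]
  refine Finset.sum_congr rfl fun l _ => ?_
  rw [map_mul, ← Complex.exp_conj]
  congr 1
  simp [Complex.conj_ofReal]

lemma exp_integral (j : ℤ) (a : ℝ) :
    ∫ θ in (-a)..a, Complex.exp ((j:ℂ) * Complex.I * θ) =
      if j = 0 then ((2*a : ℝ):ℂ) else ((2 * Real.sin (j * a) / j : ℝ):ℂ) := by
  rcases eq_or_ne j 0 with rfl | hj
  · simp [two_mul]
  · rw [if_neg hj]
    have h := integral_exp_mul_complex (by simp [hj] : (j:ℂ)*Complex.I ≠ 0) (a := -a) (b := a)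
    have h2 : ∀ θ : ℝ, (j:ℂ)*Complex.I*θ = ((j*θ:ℝ):ℂ)*Complex.I := by
      intro θ; push_cast; ring
    rw [h, h2 a, h2 (-a), Complex.exp_mul_I, Complex.exp_mul_I]
    have : ((j:ℝ) * -a) = -(j*a) := by ring
    rw [this]
    push_cast [Real.cos_neg, Real.sin_neg]
    have hj' : (j:ℂ) ≠ 0 := by exact_mod_cast hj
    field_simp
    simp only [Complex.cos_neg, Complex.sin_neg]
    ring

lemma exp_integral_pi (j : ℤ) :
    ∫ θ in (-Real.pi)..Real.pi, Complex.exp ((j:ℂ) * Complex.I * θ) =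
      if j = 0 then ((2*Real.pi : ℝ):ℂ) else 0 := by
  rw [exp_integral]
  rcases eq_or_ne j 0 with rfl | hj
  · simp
  · simp [hj, Real.sin_int_mul_pi]

lemma exp_integral_lowPass {Ω : ℝ} (hΩ0 : 0 < Ω) (j : ℤ) :
    ∫ θ in (-Ω)..Ω, Complex.exp ((j:ℂ) * Complex.I * θ) =
      (2*Real.pi : ℝ) * ((lowPass Ω j : ℝ) : ℂ) := by
  rw [exp_integral, lowPass]
  rcases eq_or_ne j 0 with rfl | hj
  · rw [if_pos rfl, if_pos rfl]
    have hπ : (Real.pi:ℂ) ≠ 0 := Complex.ofReal_ne_zero.mpr Real.pi_ne_zero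
    push_cast
    field_simp
  · rw [if_neg hj, if_neg hj]
    have hj' : (j:ℝ) ≠ 0 := by exact_mod_cast hj
    have hπ : Real.pi ≠ 0 := Real.pi_ne_zero
    have hπ' : (Real.pi:ℂ) ≠ 0 := Complex.ofReal_ne_zero.mpr Real.pi_ne_zero
    have hj'' : (j:ℂ) ≠ 0 := by exact_mod_cast hj
    push_cast
    rw [mul_comm (Ω:ℂ) (j:ℂ)]
    field_simp

lemma trig_mul_conj_integral {n : ℕ} (w u : Fin n → ℂ) (a : ℝ) :
    ∫ θ in (-a)..a, trig w θ * (starRingEnd ℂ) (trig u θ)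
      = ∑ l : Fin n, ∑ k : Fin n, w k * (starRingEnd ℂ) (u l) *
          ∫ θ in (-a)..a, Complex.exp ((((l:ℤ) - (k:ℤ) : ℤ):ℂ) * Complex.I * θ) := by
  have hpt : ∀ θ : ℝ, trig w θ * (starRingEnd ℂ) (trig u θ)
      = ∑ l : Fin n, ∑ k : Fin n, w k * (starRingEnd ℂ) (u l) *
          Complex.exp ((((l:ℤ) - (k:ℤ) : ℤ):ℂ) * Complex.I * θ) := by
    intro θ
    rw [conj_trig, trig, Finset.mul_sum]
    refine Finset.sum_congr rfl fun l _ => ?_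
    rw [Finset.sum_mul]
    refine Finset.sum_congr rfl fun k _ => ?_
    rw [mul_assoc, mul_comm (Complex.exp _), ← mul_assoc, ← mul_assoc, mul_assoc _ _ (Complex.exp _),
      ← Complex.exp_add]
    congr 2
    push_cast
    ring
  simp only [hpt]
  have hint : ∀ (c : ℂ) (z : ℂ), IntervalIntegrable (fun θ : ℝ => z * Complex.exp (c * θ)) MeasureTheory.volume (-a) a :=
    fun c z => (continuous_const.mul (cont_e c)).intervalIntegrable _ _
  have h1 : ∀ l : Fin n, IntervalIntegrable (fun θ : ℝ => ∑ k : Fin n, w k * (starRingEnd ℂ) (u l) *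
      Complex.exp ((((l:ℤ) - (k:ℤ) : ℤ):ℂ) * Complex.I * θ)) MeasureTheory.volume (-a) a :=
    fun l => ((continuous_finset_sum _ fun k _ => continuous_const.mul (cont_e _)).intervalIntegrable _ _)
  rw [intervalIntegral.integral_finset_sum (fun l _ => h1 l)]
  refine Finset.sum_congr rfl fun l _ => ?_
  rw [intervalIntegral.integral_finset_sum (fun k _ => hint _ _)]
  exact Finset.sum_congr rfl fun k _ => intervalIntegral.integral_const_mul _ _

lemma trig_mul_conj_pi {n : ℕ} (w u : Fin n → ℂ) :
    ∫ θ in (-Real.pi)..Real.pi, trig w θ * (starRingEnd ℂ) (trig u θ)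
      = ((2*Real.pi:ℝ):ℂ) * ∑ l : Fin n, (starRingEnd ℂ) (u l) * w l := by
  rw [trig_mul_conj_integral, Finset.mul_sum]
  refine Finset.sum_congr rfl fun l _ => ?_
  rw [Finset.sum_eq_single l]
  · rw [exp_integral_pi, if_pos (by simp)]
    ring
  · intro k _ hk
    rw [exp_integral_pi, if_neg, mul_zero]
    intro h
    exact hk (by ext; omega)
  · intro h; exact absurd (Finset.mem_univ l) h

lemma trig_mul_conj_lowPass {Ω : ℝ} (hΩ0 : 0 < Ω) {n : ℕ} (w u : Fin n → ℂ) :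
    ∫ θ in (-Ω)..Ω, trig w θ * (starRingEnd ℂ) (trig u θ)
      = ((2*Real.pi:ℝ):ℂ) * ∑ l : Fin n, (starRingEnd ℂ) (u l) *
          ∑ k : Fin n, ((lowPass Ω ((l:ℤ)-(k:ℤ)) : ℝ):ℂ) * w k := by
  rw [trig_mul_conj_integral, Finset.mul_sum]
  refine Finset.sum_congr rfl fun l _ => ?_
  rw [Finset.mul_sum, Finset.mul_sum]
  refine Finset.sum_congr rfl fun k _ => ?_
  rw [exp_integral_lowPass hΩ0]
  ring

lemma normSq_integral (f : ℝ → ℂ) (a b : ℝ) :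
    ((∫ θ in a..b, Complex.normSq (f θ) : ℝ) : ℂ) = ∫ θ in a..b, f θ * (starRingEnd ℂ) (f θ) := by
  rw [← intervalIntegral.integral_ofReal]
  congr 1
  ext θ
  exact (Complex.mul_conj _).symm

lemma trig_sub {n : ℕ} (w u : Fin n → ℂ) (θ : ℝ) :
    trig (w - u) θ = trig w θ - trig u θ := by
  simp [trig, sub_mul, Finset.sum_sub_distrib]

lemma lowPass_even (Ω : ℝ) (j : ℤ) : lowPass Ω (-j) = lowPass Ω j := by
  unfold lowPass
  rcases eq_or_ne j 0 with rfl | hj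
  · simp
  · rw [if_neg (by simpa using hj), if_neg hj]
    push_cast
    rw [mul_neg, Real.sin_neg, mul_neg, neg_div_neg_eq]

lemma parseval {n : ℕ} (w : Fin n → ℂ) :
    ∫ θ in (-Real.pi)..Real.pi, Complex.normSq (trig w θ)
      = 2 * Real.pi * ∑ l : Fin n, Complex.normSq (w l) := by
  have := normSq_integral (trig w) (-Real.pi) Real.pi
  rw [trig_mul_conj_pi w w] at this
  apply Complex.ofReal_inj.mp
  rw [this]
  push_cast
  rw [Finset.mul_sum, Finset.mul_sum]
  refine Finset.sum_congr rfl fun l _ => ?_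
  rw [mul_comm ((starRingEnd ℂ) (w l)), Complex.mul_conj]

lemma mono_split {Ω : ℝ} (hΩ0 : 0 < Ω) (hΩπ : Ω < Real.pi) (f : ℝ → ℝ)
    (hf : Continuous f) (h0 : ∀ x, 0 ≤ f x) :
    (∫ θ in (-Ω)..Ω, f θ) + ∫ θ in Ω..Real.pi, f θ ≤ ∫ θ in (-Real.pi)..Real.pi, f θ := by
  have hint : ∀ a b : ℝ, IntervalIntegrable f MeasureTheory.volume a b :=
    fun a b => hf.intervalIntegrable a b
  rw [← intervalIntegral.integral_add_adjacent_intervals (a := -Real.pi) (b := -Ω)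
    (c := Real.pi) (hint _ _) (hint _ _),
    ← intervalIntegral.integral_add_adjacent_intervals (a := -Ω) (b := Ω)
    (c := Real.pi) (hint _ _) (hint _ _)]
  have h1 : 0 ≤ ∫ θ in (-Real.pi)..(-Ω), f θ :=
    intervalIntegral.integral_nonneg (by linarith) (fun x _ => h0 x)
  linarith [le_refl (∫ θ in (-Ω)..Ω, f θ)]

lemma bessel {Ω : ℝ} (hΩ0 : 0 < Ω) (hΩπ : Ω < Real.pi) {n : ℕ} (v : Fin n → ℂ)
    (c : Fin n → ℂ)
    (hc : ∀ l : Fin n, c l = ∑ k : Fin n, ((lowPass Ω ((l:ℤ)-(k:ℤ)) : ℝ):ℂ) * v k) :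
    2 * Real.pi * ∑ l : Fin n, Complex.normSq (c l)
      ≤ ∫ θ in (-Ω)..Ω, Complex.normSq (trig v θ) := by
  set Sc : ℝ := ∑ l : Fin n, Complex.normSq (c l) with hSc
  have hi : ∀ (w u : Fin n → ℂ) (a b : ℝ), IntervalIntegrable
      (fun θ => trig w θ * (starRingEnd ℂ) (trig u θ)) MeasureTheory.volume a b :=
    fun w u a b => ((cont_trig w).mul (Complex.continuous_conj.comp (cont_trig u))).intervalIntegrable _ _
  have hsumA : ∑ l : Fin n, (starRingEnd ℂ) (c l) *
      (∑ k : Fin n, ((lowPass Ω ((l:ℤ)-(k:ℤ)) : ℝ):ℂ) * v k) = ((Sc : ℝ):ℂ) := by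
    rw [hSc]
    push_cast
    refine Finset.sum_congr rfl fun l _ => ?_
    rw [← hc l, mul_comm, Complex.mul_conj]
  have keyA : ∫ θ in (-Ω)..Ω, trig v θ * (starRingEnd ℂ) (trig c θ) = ((2*Real.pi*Sc : ℝ):ℂ) := by
    rw [trig_mul_conj_lowPass hΩ0 v c, hsumA]
    push_cast
    ring
  have hsumB : ∑ l : Fin n, (starRingEnd ℂ) (v l) *
      (∑ k : Fin n, ((lowPass Ω ((l:ℤ)-(k:ℤ)) : ℝ):ℂ) * c k) = ((Sc : ℝ):ℂ) := by
    have step1 : ∀ l : Fin n, (starRingEnd ℂ) (v l) *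
        (∑ k : Fin n, ((lowPass Ω ((l:ℤ)-(k:ℤ)) : ℝ):ℂ) * c k)
        = ∑ k : Fin n, (((lowPass Ω ((l:ℤ)-(k:ℤ)) : ℝ):ℂ) * (starRingEnd ℂ) (v l)) * c k := by
      intro l
      rw [Finset.mul_sum]
      exact Finset.sum_congr rfl fun k _ => by ring
    simp only [step1]
    rw [Finset.sum_comm]
    have step2 : ∀ k : Fin n, ∑ l : Fin n,
        (((lowPass Ω ((l:ℤ)-(k:ℤ)) : ℝ):ℂ) * (starRingEnd ℂ) (v l)) * c k
        = (starRingEnd ℂ) (c k) * c k := by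
      intro k
      rw [← Finset.sum_mul]
      congr 1
      rw [hc k, map_sum]
      refine Finset.sum_congr rfl fun l _ => ?_
      rw [map_mul, Complex.conj_ofReal, ← lowPass_even Ω ((k:ℤ)-(l:ℤ)), neg_sub]
    simp only [step2]
    rw [hSc]
    push_cast
    refine Finset.sum_congr rfl fun k _ => ?_
    rw [mul_comm, Complex.mul_conj]
  have keyB : ∫ θ in (-Ω)..Ω, trig c θ * (starRingEnd ℂ) (trig v θ) = ((2*Real.pi*Sc : ℝ):ℂ) := by
    rw [trig_mul_conj_lowPass hΩ0 c v, hsumB]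
    push_cast
    ring
  have expand : ∀ θ : ℝ, trig (v - c) θ * (starRingEnd ℂ) (trig (v - c) θ)
      = trig v θ * (starRingEnd ℂ) (trig v θ) - trig v θ * (starRingEnd ℂ) (trig c θ)
        - trig c θ * (starRingEnd ℂ) (trig v θ) + trig c θ * (starRingEnd ℂ) (trig c θ) := by
    intro θ
    rw [trig_sub, map_sub]
    ring
  have hI : ∫ θ in (-Ω)..Ω, trig (v - c) θ * (starRingEnd ℂ) (trig (v - c) θ)
      = (∫ θ in (-Ω)..Ω, trig v θ * (starRingEnd ℂ) (trig v θ)) - ((2*Real.pi*Sc : ℝ):ℂ)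
        - ((2*Real.pi*Sc : ℝ):ℂ) + ∫ θ in (-Ω)..Ω, trig c θ * (starRingEnd ℂ) (trig c θ) := by
    simp only [expand]
    rw [intervalIntegral.integral_add (((hi v v _ _).sub (hi v c _ _)).sub (hi c v _ _)) (hi c c _ _),
        intervalIntegral.integral_sub ((hi v v _ _).sub (hi v c _ _)) (hi c v _ _),
        intervalIntegral.integral_sub (hi v v _ _) (hi v c _ _), keyA, keyB]
  have hreal : ∫ θ in (-Ω)..Ω, Complex.normSq (trig (v - c) θ)
      = (∫ θ in (-Ω)..Ω, Complex.normSq (trig v θ)) - 2*Real.pi*Sc - 2*Real.pi*Sc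
        + ∫ θ in (-Ω)..Ω, Complex.normSq (trig c θ) := by
    apply Complex.ofReal_inj.mp
    rw [Complex.ofReal_add, Complex.ofReal_sub, Complex.ofReal_sub,
      normSq_integral (trig (v - c)), normSq_integral (trig v), normSq_integral (trig c), hI]
  have h0 : 0 ≤ ∫ θ in (-Ω)..Ω, Complex.normSq (trig (v - c) θ) :=
    intervalIntegral.integral_nonneg (by linarith) fun x _ => Complex.normSq_nonneg _
  have hJle : (∫ θ in (-Ω)..Ω, Complex.normSq (trig c θ)) ≤ 2 * Real.pi * Sc := by
    have hms := mono_split hΩ0 hΩπ (fun θ => Complex.normSq (trig c θ))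
      (Complex.continuous_normSq.comp (cont_trig c)) (fun x => Complex.normSq_nonneg _)
    have h2 : 0 ≤ ∫ θ in Ω..Real.pi, Complex.normSq (trig c θ) :=
      intervalIntegral.integral_nonneg (by linarith) fun x _ => Complex.normSq_nonneg _
    rw [parseval c] at hms
    linarith
  linarith

lemma trig_ne_zero_somewhere {n : ℕ} (v : Fin n → ℂ) (hv : v ≠ 0) {a b : ℝ}
    (hab : a < b) (hlen : b - a ≤ 2 * Real.pi) :
    ∃ θ ∈ Set.Ioo a b, trig v θ ≠ 0 := by
  by_contra hcon
  push_neg at hcon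
  set q : Polynomial ℂ := ∑ k : Fin n, Polynomial.C (v k) * Polynomial.X ^ (k:ℕ) with hq
  have heval : ∀ θ : ℝ, Polynomial.eval (Complex.exp (-Complex.I * θ)) q = trig v θ := by
    intro θ
    rw [hq, Polynomial.eval_finset_sum, trig]
    refine Finset.sum_congr rfl fun k _ => ?_
    rw [Polynomial.eval_mul, Polynomial.eval_C, Polynomial.eval_pow, Polynomial.eval_X,
      ← Complex.exp_nat_mul]
    congr 1
    ring
  have hinj : Set.InjOn (fun θ : ℝ => Complex.exp (-Complex.I * θ)) (Set.Ioo a b) := by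
    intro x hx y hy hxy
    simp only at hxy
    rw [Complex.exp_eq_exp_iff_exists_int] at hxy
    obtain ⟨j, hj⟩ := hxy
    have h2 : Complex.I * ((y:ℂ) - x) = Complex.I * ((j:ℂ) * (2 * (Real.pi:ℂ))) := by
      linear_combination hj
    have h3 := mul_left_cancel₀ Complex.I_ne_zero h2
    have h4 : y - x = (j:ℝ) * (2 * Real.pi) := by exact_mod_cast h3
    have hj0 : j = 0 := by
      rcases lt_trichotomy j 0 with h | h | h
      · have hle : (j:ℝ) ≤ -1 := by exact_mod_cast (by omega : j ≤ -1)
        nlinarith [Real.pi_pos, hx.1, hx.2, hy.1, hy.2]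
      · exact h
      · have hle : (1:ℝ) ≤ (j:ℝ) := by exact_mod_cast (by omega : 1 ≤ j)
        nlinarith [Real.pi_pos, hx.1, hx.2, hy.1, hy.2]
    rw [hj0] at h4
    push_cast at h4
    linarith
  have hroots : Set.Infinite {x : ℂ | q.IsRoot x} := by
    refine Set.Infinite.mono ?_ (((Set.Ioo_infinite hab).image hinj))
    rintro z ⟨θ, hθ, rfl⟩
    show Polynomial.IsRoot q _
    rw [Polynomial.IsRoot, heval θ, hcon θ hθ]
  have hq0 : q = 0 := Polynomial.eq_zero_of_infinite_isRoot q hroots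
  apply hv
  funext k
  have hcoeff : q.coeff (k:ℕ) = v k := by
    rw [hq, Polynomial.finset_sum_coeff]
    rw [Finset.sum_eq_single k]
    · rw [Polynomial.coeff_C_mul, Polynomial.coeff_X_pow, if_pos rfl, mul_one]
    · intro j _ hjk
      rw [Polynomial.coeff_C_mul, Polynomial.coeff_X_pow, if_neg, mul_zero]
      intro h
      exact hjk (by ext; omega)
    · intro h
      exact absurd (Finset.mem_univ k) h
  rw [hq0, Polynomial.coeff_zero] at hcoeff
  exact hcoeff.symm

lemma integral_normSq_pos {Ω : ℝ} (hΩ0 : 0 < Ω) (hΩπ : Ω < Real.pi) {n : ℕ}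
    (v : Fin n → ℂ) (hv : v ≠ 0) :
    0 < ∫ θ in Ω..Real.pi, Complex.normSq (trig v θ) := by
  obtain ⟨θ₀, hθ₀, hne⟩ := trig_ne_zero_somewhere v hv (a := Ω) (b := Real.pi) hΩπ
    (by linarith [Real.pi_pos])
  set f : ℝ → ℝ := fun θ => Complex.normSq (trig v θ) with hf
  have hfc : Continuous f := Complex.continuous_normSq.comp (cont_trig v)
  have hfpos : 0 < f θ₀ := Complex.normSq_pos.mpr hne
  have hopen : IsOpen {x : ℝ | 0 < f x} := isOpen_lt continuous_const hfc
  obtain ⟨δ, hδ, hball⟩ := Metric.isOpen_iff.mp hopen θ₀ hfpos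
  set a' : ℝ := max Ω (θ₀ - δ/2) with ha'
  set b' : ℝ := min Real.pi (θ₀ + δ/2) with hb'
  have ha'θ : a' < θ₀ := max_lt hθ₀.1 (by linarith)
  have hθb' : θ₀ < b' := lt_min hθ₀.2 (by linarith)
  have hab' : a' < b' := ha'θ.trans hθb'
  have hsub : ∀ x ∈ Set.Ioo a' b', 0 < f x := by
    intro x hx
    apply hball
    rw [Metric.mem_ball, Real.dist_eq, abs_sub_lt_iff]
    constructor
    · have := hx.2
      have := min_le_right Real.pi (θ₀ + δ/2)
      simp only [hb'] at *
      linarith [hx.2, min_le_right Real.pi (θ₀ + δ/2)]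
    · linarith [hx.1, le_max_right Ω (θ₀ - δ/2)]
  have hmid : 0 < ∫ θ in a'..b', f θ :=
    intervalIntegral.intervalIntegral_pos_of_pos_on (hfc.intervalIntegrable _ _) hsub hab'
  have h1 : 0 ≤ ∫ θ in Ω..a', f θ :=
    intervalIntegral.integral_nonneg (le_max_left _ _) fun x _ => Complex.normSq_nonneg _
  have h2 : 0 ≤ ∫ θ in b'..Real.pi, f θ :=
    intervalIntegral.integral_nonneg (min_le_left _ _) fun x _ => Complex.normSq_nonneg _
  have hsplit : ∫ θ in Ω..Real.pi, f θ
      = (∫ θ in Ω..a', f θ) + (∫ θ in a'..b', f θ) + ∫ θ in b'..Real.pi, f θ := by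
    rw [intervalIntegral.integral_add_adjacent_intervals (hfc.intervalIntegrable _ _)
      (hfc.intervalIntegrable _ _),
      intervalIntegral.integral_add_adjacent_intervals (hfc.intervalIntegrable _ _)
      (hfc.intervalIntegrable _ _)]
  rw [hsplit]
  linarith

theorem lowpass_matrix_contraction_and_invertibility (Ω : ℝ) (hΩ0 : 0 < Ω)
    (hΩπ : Ω < Real.pi) (m : ℕ) (A : Matrix (Fin (m + 1)) (Fin (m + 1)) ℝ)
    (hA : ∀ p k : Fin (m + 1), A p k = lowPass Ω ((p : ℤ) - (k : ℤ))) :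
    (∀ v : Fin (m + 1) → ℂ, v ≠ 0 →
      Real.sqrt (∑ p : Fin (m + 1), ‖(A.map (fun a : ℝ => (a : ℂ))).mulVec v p‖ ^ 2) <
        Real.sqrt (∑ p : Fin (m + 1), ‖v p‖ ^ 2)) ∧
    IsUnit ((1 : Matrix (Fin (m + 1)) (Fin (m + 1)) ℝ) - A) := by
  have key : ∀ v : Fin (m + 1) → ℂ, v ≠ 0 →
      Real.sqrt (∑ p : Fin (m + 1), ‖(A.map (fun a : ℝ => (a : ℂ))).mulVec v p‖ ^ 2) <
        Real.sqrt (∑ p : Fin (m + 1), ‖v p‖ ^ 2) := by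
    intro v hv
    set c : Fin (m + 1) → ℂ := (A.map (fun a : ℝ => (a : ℂ))).mulVec v with hcdef
    have hc : ∀ l : Fin (m + 1), c l = ∑ k : Fin (m + 1),
        ((lowPass Ω ((l:ℤ)-(k:ℤ)) : ℝ):ℂ) * v k := by
      intro l
      rw [hcdef]
      simp [Matrix.mulVec, dotProduct, Matrix.map_apply, hA]
    have hb := bessel hΩ0 hΩπ v c hc
    have hpos := integral_normSq_pos hΩ0 hΩπ v hv
    have hms := mono_split hΩ0 hΩπ (fun θ => Complex.normSq (trig v θ))
      (Complex.continuous_normSq.comp (cont_trig v)) (fun x => Complex.normSq_nonneg _)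
    have hpars := parseval v
    have hSlt : ∑ l : Fin (m + 1), Complex.normSq (c l)
        < ∑ l : Fin (m + 1), Complex.normSq (v l) := by
      have h2π : (0:ℝ) < 2 * Real.pi := by positivity
      have := (mul_lt_mul_iff_right₀ h2π (b := ∑ l : Fin (m + 1), Complex.normSq (c l))
        (c := ∑ l : Fin (m + 1), Complex.normSq (v l)))
      apply this.mp
      rw [hpars] at hms
      linarith
    apply Real.sqrt_lt_sqrt
    · positivity
    · simpa only [Complex.sq_norm] using hSlt
  refine ⟨key, ?_⟩
  rw [Matrix.isUnit_iff_isUnit_det, isUnit_iff_ne_zero]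
  intro hdet
  obtain ⟨x, hx0, hx⟩ := Matrix.exists_mulVec_eq_zero_iff.mpr hdet
  have hAx : A.mulVec x = x := by
    have h1 : (1 - A).mulVec x = x - A.mulVec x := by
      rw [Matrix.sub_mulVec, Matrix.one_mulVec]
    rw [h1] at hx
    funext i
    have := congrFun hx i
    simp only [Pi.sub_apply, Pi.zero_apply, sub_eq_zero] at this
    exact this.symm
  set w : Fin (m + 1) → ℂ := fun i => ((x i : ℝ) : ℂ) with hw
  have hw0 : w ≠ 0 := by
    intro h
    apply hx0
    funext i
    have := congrFun h i
    simpa [hw] using this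
  have hAw : (A.map (fun a : ℝ => (a : ℂ))).mulVec w = w := by
    funext p
    have hreal := congrFun hAx p
    simp only [Matrix.mulVec, dotProduct] at hreal ⊢
    rw [hw]
    push_cast [← hreal]
    simp [Matrix.map_apply]
  have := key w hw0
  rw [hAw] at this
  exact lt_irrefl _ this
end

section
/- Let 0 < Ω < π, s ∈ ℤ, let x : ℤ → ℂ be square-summable, and let x̂ be the unique Ω-band-limited sequence minimizing Σ_{t∈ℤ, t≠s} |w(t) − x(t)|² over all Ω-band-limited sequences w. Then the series Σ_{t∈ℤ, t≠s} x(t) · sinc(Ω(s−t)) converges absolutely and x̂(s) = (Ω/(π−Ω)) · Σ_{t∈ℤ, t≠s} x(t) · sinc(Ω(s−t)). -/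
open MeasureTheory Real Set

/-- `sinc u = sin u / u` for `u ≠ 0`, `sinc 0 = 1`. -/
noncomputable def rsinc (u : ℝ) : ℝ := if u = 0 then 1 else Real.sin u / u



open Complex AddCircle
open scoped ComplexConjugate

local instance inst_s6 : Fact (0 < 2 * Real.pi) := ⟨Real.two_pi_pos⟩

lemma rsinc_zero : rsinc 0 = 1 := if_pos rfl

lemma rsinc_neg (u : ℝ) : rsinc (-u) = rsinc u := by
  unfold rsinc
  rcases eq_or_ne u 0 with h | h
  · simp [h]
  · rw [if_neg (neg_ne_zero.2 h), if_neg h, Real.sin_neg, neg_div_neg_eq]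

lemma abs_rsinc_le_one (u : ℝ) : |rsinc u| ≤ 1 := by
  unfold rsinc
  rcases eq_or_ne u 0 with h | h
  · simp [h]
  · rw [if_neg h, abs_div, div_le_one (abs_pos.2 h)]
    exact Real.abs_sin_le_abs

lemma abs_rsinc_le_inv (u : ℝ) (h : u ≠ 0) : |rsinc u| ≤ 1 / |u| := by
  unfold rsinc
  rw [if_neg h, abs_div, div_le_div_iff₀ (abs_pos.2 h) (abs_pos.2 h), one_mul]
  calc |Real.sin u| * |u| ≤ 1 * |u| := by
        have := Real.abs_sin_le_one u
        nlinarith [abs_nonneg u, abs_nonneg (Real.sin u)]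
    _ = |u| := one_mul _

-- the ℓ² bound for sinc sequence
lemma summable_sq_rsinc (Ω : ℝ) (hΩ0 : 0 < Ω) (s : ℤ) :
    Summable fun t : ℤ => ‖((rsinc (Ω * ((t : ℝ) - (s : ℝ)))) : ℂ)‖ ^ 2 := by
  have base : Summable fun n : ℤ => (1:ℝ) / (n:ℝ) ^ 2 :=
    (Real.summable_one_div_int_pow (p := 2)).2 one_lt_two
  have ind : Summable fun n : ℤ => (if n = 0 then (1:ℝ) else 0) :=
    summable_of_finite_support <| (Set.finite_singleton (0:ℤ)).subset (by
      intro n hn; simp only [Function.mem_support] at hn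
      by_contra h; exact hn (if_neg h))
  have maj : Summable fun n : ℤ => (if n = 0 then (1:ℝ) else 0) + (Ω⁻¹)^2 * ((1:ℝ)/(n:ℝ)^2) :=
    ind.add (base.mul_left _)
  have key : Summable fun n : ℤ => ‖((rsinc (Ω * (n : ℝ))) : ℂ)‖ ^ 2 := by
    apply Summable.of_nonneg_of_le (fun n => by positivity) _ maj
    intro n
    rcases eq_or_ne n 0 with rfl | hn
    · simp only [Int.cast_zero, mul_zero, rsinc_zero, if_pos rfl]
      norm_num
      try positivity
    · have hn' : ((n:ℝ)) ≠ 0 := Int.cast_ne_zero.2 hn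
      have hu : Ω * (n:ℝ) ≠ 0 := mul_ne_zero hΩ0.ne' hn'
      have h1 : ‖((rsinc (Ω * (n : ℝ))) : ℂ)‖ = |rsinc (Ω * (n:ℝ))| := by
        rw [Complex.norm_real]; rfl
      have h2 := abs_rsinc_le_inv _ hu
      have h3 : ‖((rsinc (Ω * (n : ℝ))) : ℂ)‖ ^ 2 ≤ (1 / |Ω * (n:ℝ)|) ^ 2 := by
        rw [h1]; exact pow_le_pow_left₀ (abs_nonneg _) h2 2
      refine h3.trans ?_
      rw [if_neg hn]
      rw [abs_mul, abs_of_pos hΩ0]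
      have : (1 / (Ω * |(n:ℝ)|)) ^ 2 = (Ω⁻¹)^2 * (1/((n:ℝ))^2) := by
        rw [div_pow, one_pow, mul_pow, _root_.sq_abs]
        field_simp
      rw [this]
      exact le_add_of_nonneg_left (by positivity)
  -- now shift by s
  have hinj : Function.Injective (fun t : ℤ => t - s) := fun a b h => by
    simpa using congrArg (· + s) h
  have := key.comp_injective (i := fun t : ℤ => t - s) hinj
  refine this.congr fun t => ?_
  simp only [Function.comp]
  push_cast
  ring_nf


lemma integral_exp_I_mul (Ω : ℝ) (hΩ0 : 0 < Ω) (m : ℝ) :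
    ∫ ω in Icc (-Ω) Ω, Complex.exp (Complex.I * (ω:ℂ) * (m:ℂ)) =
      2 * (Ω:ℂ) * (rsinc (Ω * m) : ℂ) := by
  have hle : (-Ω : ℝ) ≤ Ω := by linarith
  have h1 : ∫ ω in Icc (-Ω) Ω, Complex.exp (Complex.I * (ω:ℂ) * (m:ℂ)) =
      ∫ ω in (-Ω)..Ω, Complex.exp ((Complex.I * (m:ℂ)) * (ω:ℂ)) := by
    rw [intervalIntegral.integral_of_le hle, integral_Icc_eq_integral_Ioc]
    congr 1; ext ω; ring_nf
  rw [h1]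
  rcases eq_or_ne m 0 with rfl | hm
  · simp only [Complex.ofReal_zero, mul_zero, zero_mul, Complex.exp_zero, mul_zero]
    rw [intervalIntegral.integral_const]
    simp [rsinc, smul_eq_mul]
    push_cast
    ring
  · have hc : Complex.I * (m:ℂ) ≠ 0 :=
      mul_ne_zero Complex.I_ne_zero (Complex.ofReal_ne_zero.2 hm)
    rw [integral_exp_mul_complex hc]
    have hsin : Complex.exp (Complex.I * (m:ℂ) * (Ω:ℂ)) -
        Complex.exp (Complex.I * (m:ℂ) * (-Ω:ℝ)) =
        2 * Complex.I * Complex.sin ((m * Ω : ℝ) : ℂ) := by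
      rw [Complex.sin]
      push_cast
      ring_nf
      rw [Complex.exp_neg]
      field_simp [Complex.exp_ne_zero]
      ring_nf
      rw [Complex.I_sq]; ring
    rw [hsin]
    have hm' : (m:ℂ) ≠ 0 := Complex.ofReal_ne_zero.2 hm
    have hΩm : Ω * m ≠ 0 := mul_ne_zero hΩ0.ne' hm
    rw [rsinc, if_neg hΩm]
    rw [show ((Real.sin (Ω*m) / (Ω*m) : ℝ) : ℂ) = Complex.sin ((Ω*m:ℝ):ℂ) / ((Ω:ℂ)*(m:ℂ)) by
      push_cast [Complex.ofReal_sin]; ring]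
    rw [show ((m * Ω : ℝ):ℂ) = ((Ω*m:ℝ):ℂ) by push_cast; ring]
    have hΩ' : (Ω:ℂ) ≠ 0 := Complex.ofReal_ne_zero.2 hΩ0.ne'
    field_simp [Complex.I_ne_zero]
    try field_simp
    try ring

set_option maxHeartbeats 1000000

variable {Ω : ℝ}

/-- lift of the zero-extension of `g` to the circle of circumference `2π`. -/
noncomputable def blLift (Ω : ℝ) (g : ℝ → ℂ) : AddCircle (2 * Real.pi) → ℂ :=
  AddCircle.liftIoc (2 * Real.pi) (-Real.pi) ((Icc (-Ω) Ω).indicator g)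

lemma Icc_subset_Ioc (hΩπ : Ω < Real.pi) :
    Icc (-Ω) Ω ⊆ Ioc (-Real.pi) (-Real.pi + 2 * Real.pi) := by
  intro y hy
  have h1 := hy.1; have h2 := hy.2
  constructor <;> [skip; skip] <;> simp only [mem_Icc] at * <;> linarith

lemma blLift_stronglyMeasurable (g : ℝ → ℂ) (hgm : StronglyMeasurable g) :
    StronglyMeasurable (blLift Ω g) := by
  have : blLift Ω g = fun z =>
      ((Icc (-Ω) Ω).indicator g) ((AddCircle.measurableEquivIoc (2*Real.pi) (-Real.pi)) z : ℝ) :=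
    rfl
  rw [this]
  exact (hgm.indicator measurableSet_Icc).comp_measurable
    (measurable_subtype_coe.comp (AddCircle.measurableEquivIoc _ _).measurable)

lemma blLift_memℒp (hΩπ : Ω < Real.pi) (g : ℝ → ℂ) (hgm : StronglyMeasurable g)
    (hg : MemLp g 2 (volume.restrict (Icc (-Ω) Ω))) :
    MemLp (blLift Ω g) 2 haarAddCircle := by
  have hmp := AddCircle.measurePreserving_mk (2*Real.pi) (-Real.pi)
  have hsm := blLift_stronglyMeasurable (Ω := Ω) g hgm
  have hvol : MemLp (blLift Ω g) 2 (volume : Measure (AddCircle (2*Real.pi))) := by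
    rw [← hmp.map_eq]
    rw [memLp_map_measure_iff hsm.aestronglyMeasurable hmp.measurable.aemeasurable]
    have hcomp : (blLift Ω g ∘ (QuotientAddGroup.mk : ℝ → AddCircle (2*Real.pi)))
        =ᵐ[volume.restrict (Ioc (-Real.pi) (-Real.pi + 2*Real.pi))]
        (Icc (-Ω) Ω).indicator g := by
      filter_upwards [self_mem_ae_restrict measurableSet_Ioc] with y hy
      exact AddCircle.liftIoc_coe_apply hy
    rw [MemLp] at *
    refine MemLp.ae_eq hcomp.symm ?_
    constructor
    · exact (hgm.indicator measurableSet_Icc).aestronglyMeasurable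
    · rw [eLpNorm_indicator_eq_eLpNorm_restrict measurableSet_Icc,
        Measure.restrict_restrict measurableSet_Icc,
        inter_eq_left.2 (Icc_subset_Ioc hΩπ)]
      exact hg.2
  have hhaar : (haarAddCircle : Measure (AddCircle (2*Real.pi)))
      = (ENNReal.ofReal (2*Real.pi))⁻¹ • (volume : Measure (AddCircle (2*Real.pi))) := by
    rw [AddCircle.volume_eq_smul_haarAddCircle, smul_smul,
      ENNReal.inv_mul_cancel (by simp [Real.pi_pos]) ENNReal.ofReal_ne_top, one_smul]
  rw [hhaar]
  exact hvol.smul_measure (by simp [Real.pi_pos])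

/-- the Lp element. -/
noncomputable def blToLp (hΩπ : Ω < Real.pi) (g : ℝ → ℂ) (hgm : StronglyMeasurable g)
    (hg : MemLp g 2 (volume.restrict (Icc (-Ω) Ω))) :
    Lp ℂ 2 (haarAddCircle (T := 2 * Real.pi)) :=
  (blLift_memℒp hΩπ g hgm hg).toLp _

lemma coeff_blToLp (hΩπ : Ω < Real.pi) (g : ℝ → ℂ) (hgm : StronglyMeasurable g)
    (hg : MemLp g 2 (volume.restrict (Icc (-Ω) Ω))) (n : ℤ) :
    fourierCoeff (((blToLp hΩπ g hgm hg : Lp ℂ 2 (haarAddCircle (T := 2 * Real.pi))) :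
        AddCircle (2 * Real.pi) → ℂ)) n
      = (1 / (2 * (Real.pi : ℂ))) *
        ∫ ω in Icc (-Ω) Ω, g ω * Complex.exp (-(Complex.I * (ω:ℂ) * (n:ℂ))) := by
  have h1 : fourierCoeff (((blToLp hΩπ g hgm hg : Lp ℂ 2 (haarAddCircle (T := 2 * Real.pi))) :
        AddCircle (2 * Real.pi) → ℂ)) n = fourierCoeff (blLift Ω g) n := by
    unfold fourierCoeff
    apply integral_congr_ae
    have hae := MemLp.coeFn_toLp (blLift_memℒp hΩπ g hgm hg)
    filter_upwards [hae] with z hz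
    rw [blToLp]
    rw [hz]
  rw [h1, blLift, fourierCoeff_liftIoc_eq, fourierCoeffOn_eq_integral]
  have hle : (-Real.pi : ℝ) ≤ -Real.pi + 2 * Real.pi := by linarith [Real.pi_pos]
  rw [intervalIntegral.integral_of_le hle]
  simp only [fourier_coe_apply, smul_eq_mul]
  have hmain : ∫ x in Ioc (-Real.pi) (-Real.pi + 2*Real.pi),
      Complex.exp (2 * (Real.pi:ℂ) * Complex.I * ((-n : ℤ):ℂ) * (x:ℂ) /
        ((-Real.pi + 2*Real.pi - -Real.pi : ℝ):ℂ)) * ((Icc (-Ω) Ω).indicator g x)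
      = ∫ ω in Icc (-Ω) Ω, g ω * Complex.exp (-(Complex.I * (ω:ℂ) * (n:ℂ))) := by
    have hT : ((-Real.pi + 2*Real.pi - -Real.pi : ℝ):ℂ) = 2 * (Real.pi:ℂ) := by
      push_cast; ring
    have hpt : ∀ x : ℝ, Complex.exp (2 * (Real.pi:ℂ) * Complex.I * ((-n : ℤ):ℂ) * (x:ℂ) /
        ((-Real.pi + 2*Real.pi - -Real.pi : ℝ):ℂ)) * ((Icc (-Ω) Ω).indicator g x)
        = (Icc (-Ω) Ω).indicator
            (fun ω => g ω * Complex.exp (-(Complex.I * (ω:ℂ) * (n:ℂ)))) x := by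
      intro x
      have hexp : Complex.exp (2 * (Real.pi:ℂ) * Complex.I * ((-n : ℤ):ℂ) * (x:ℂ) /
          ((-Real.pi + 2*Real.pi - -Real.pi : ℝ):ℂ)) = Complex.exp (-(Complex.I * (x:ℂ) * (n:ℂ))) := by
        rw [hT]
        congr 1
        have hpi : (Real.pi : ℂ) ≠ 0 := Complex.ofReal_ne_zero.2 Real.pi_ne_zero
        field_simp
        push_cast
        ring
      rw [hexp]
      by_cases hx : x ∈ Icc (-Ω) Ω
      · rw [Set.indicator_of_mem hx, Set.indicator_of_mem hx, mul_comm]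
      · rw [Set.indicator_of_notMem hx, Set.indicator_of_notMem hx, mul_zero]
    simp_rw [hpt]
    rw [setIntegral_indicator measurableSet_Icc,
      inter_eq_right.2 (fun y hy => _root_.Icc_subset_Ioc hΩπ hy)]
  rw [hmain, show (1 / (-Real.pi + 2*Real.pi - -Real.pi) : ℝ) = 1/(2*Real.pi) by ring,
    Complex.real_smul]
  push_cast
  ring_nf
  congr 2
  congr 1
  funext ω
  ring_nf

lemma inner_blToLp (hΩπ : Ω < Real.pi) (g₁ g₂ : ℝ → ℂ)
    (hgm₁ : StronglyMeasurable g₁) (hg₁ : MemLp g₁ 2 (volume.restrict (Icc (-Ω) Ω)))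
    (hgm₂ : StronglyMeasurable g₂) (hg₂ : MemLp g₂ 2 (volume.restrict (Icc (-Ω) Ω))) :
    (inner ℂ (blToLp hΩπ g₁ hgm₁ hg₁) (blToLp hΩπ g₂ hgm₂ hg₂) : ℂ)
      = (1 / (2 * (Real.pi : ℂ))) * ∫ ω in Icc (-Ω) Ω, conj (g₁ ω) * g₂ ω := by
  rw [MeasureTheory.L2.inner_def]
  have h1 : ∫ a, (inner ℂ ((blToLp hΩπ g₁ hgm₁ hg₁ : Lp ℂ 2 _) a)
      ((blToLp hΩπ g₂ hgm₂ hg₂ : Lp ℂ 2 _) a) : ℂ) ∂(haarAddCircle (T := 2*Real.pi))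
      = ∫ a, conj (blLift Ω g₁ a) * blLift Ω g₂ a ∂(haarAddCircle (T := 2*Real.pi)) := by
    apply integral_congr_ae
    filter_upwards [MemLp.coeFn_toLp (blLift_memℒp hΩπ g₁ hgm₁ hg₁),
      MemLp.coeFn_toLp (blLift_memℒp hΩπ g₂ hgm₂ hg₂)] with z h₁ h₂
    rw [RCLike.inner_apply]
    rw [show ((blToLp hΩπ g₁ hgm₁ hg₁ : Lp ℂ 2 _) : AddCircle (2*Real.pi) → ℂ) z
        = blLift Ω g₁ z from h₁,
      show ((blToLp hΩπ g₂ hgm₂ hg₂ : Lp ℂ 2 _) : AddCircle (2*Real.pi) → ℂ) z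
        = blLift Ω g₂ z from h₂]
    exact mul_comm _ _
  rw [h1]
  have h2 : ∫ a, conj (blLift Ω g₁ a) * blLift Ω g₂ a ∂(haarAddCircle (T := 2*Real.pi))
      = (1 / (2*Real.pi)) • ∫ a, conj (blLift Ω g₁ a) * blLift Ω g₂ a
          ∂(volume : Measure (AddCircle (2*Real.pi))) := by
    rw [AddCircle.volume_eq_smul_haarAddCircle, integral_smul_measure]
    rw [ENNReal.toReal_ofReal Real.two_pi_pos.le, smul_smul]
    rw [show (1 / (2*Real.pi)) * (2*Real.pi) = 1 by field_simp, one_smul]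
  rw [h2, ← AddCircle.integral_preimage (2*Real.pi) (-Real.pi)
    (fun a => conj (blLift Ω g₁ a) * blLift Ω g₂ a)]
  have h3 : ∫ y in Ioc (-Real.pi) (-Real.pi + 2*Real.pi),
      conj (blLift Ω g₁ (↑y)) * blLift Ω g₂ (↑y)
      = ∫ ω in Icc (-Ω) Ω, conj (g₁ ω) * g₂ ω := by
    have hpt : ∀ y ∈ Ioc (-Real.pi) (-Real.pi + 2*Real.pi),
        conj (blLift Ω g₁ (↑y)) * blLift Ω g₂ (↑y)
        = (Icc (-Ω) Ω).indicator (fun ω => conj (g₁ ω) * g₂ ω) y := by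
      intro y hy
      rw [blLift, blLift, AddCircle.liftIoc_coe_apply hy, AddCircle.liftIoc_coe_apply hy]
      by_cases hmem : y ∈ Icc (-Ω) Ω
      · rw [Set.indicator_of_mem hmem, Set.indicator_of_mem hmem, Set.indicator_of_mem hmem]
      · rw [Set.indicator_of_notMem hmem, Set.indicator_of_notMem hmem,
          Set.indicator_of_notMem hmem, map_zero, zero_mul]
    rw [setIntegral_congr_fun measurableSet_Ioc hpt,
      setIntegral_indicator measurableSet_Icc,
      inter_eq_right.2 (fun y hy => _root_.Icc_subset_Ioc hΩπ hy)]
  rw [h3, Complex.real_smul]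
  push_cast
  ring_nf

lemma summable_sq_coeff (f : Lp ℂ 2 (haarAddCircle (T := 2 * Real.pi))) :
    Summable fun t : ℤ => ‖fourierCoeff ((f : AddCircle (2 * Real.pi) → ℂ)) (-t)‖ ^ 2 := by
  have h0 : Summable fun i : ℤ =>
      ‖(fourierBasis (T := 2 * Real.pi)).repr f i‖ ^ ((2 : ENNReal)).toReal :=
    (lp.memℓp ((fourierBasis (T := 2 * Real.pi)).repr f)).summable (by norm_num)
  have h1 : Summable fun i : ℤ =>
      ‖fourierCoeff ((f : AddCircle (2 * Real.pi) → ℂ)) i‖ ^ 2 := by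
    refine h0.congr fun i => ?_
    rw [fourierBasis_repr]
    rw [show ((2:ENNReal)).toReal = (2:ℝ) by norm_num]
    rw [← Real.rpow_natCast _ 2]
    norm_num
  exact ((Equiv.neg ℤ).summable_iff
    (f := fun i : ℤ => ‖fourierCoeff ((f : AddCircle (2 * Real.pi) → ℂ)) i‖ ^ 2)).2 h1

lemma parseval_pair (f h : Lp ℂ 2 (haarAddCircle (T := 2 * Real.pi))) :
    Summable (fun t : ℤ => conj (fourierCoeff ((f : AddCircle (2 * Real.pi) → ℂ)) (-t)) *
        fourierCoeff ((h : AddCircle (2 * Real.pi) → ℂ)) (-t)) ∧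
    ∑' t : ℤ, conj (fourierCoeff ((f : AddCircle (2 * Real.pi) → ℂ)) (-t)) *
        fourierCoeff ((h : AddCircle (2 * Real.pi) → ℂ)) (-t) = (inner ℂ f h : ℂ) := by
  set b := fourierBasis (T := 2 * Real.pi)
  have key : ∀ i : ℤ, (inner ℂ f ((b i)) : ℂ) *
      inner ℂ ((b i)) h
      = conj (fourierCoeff ((f : AddCircle (2 * Real.pi) → ℂ)) i) *
        fourierCoeff ((h : AddCircle (2 * Real.pi) → ℂ)) i := by
    intro i
    have hf : (inner ℂ ((b i)) f : ℂ)
        = fourierCoeff ((f : AddCircle (2 * Real.pi) → ℂ)) i := by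
      rw [← fourierBasis_repr]; exact (HilbertBasis.repr_apply_apply b f i).symm
    have hh : (inner ℂ ((b i)) h : ℂ)
        = fourierCoeff ((h : AddCircle (2 * Real.pi) → ℂ)) i := by
      rw [← fourierBasis_repr]; exact (HilbertBasis.repr_apply_apply b h i).symm
    rw [← inner_conj_symm, hf, hh]
  have hsum := b.summable_inner_mul_inner f h
  have htsum := b.tsum_inner_mul_inner f h
  have hsum' : Summable (fun i : ℤ =>
      conj (fourierCoeff ((f : AddCircle (2 * Real.pi) → ℂ)) i) *
        fourierCoeff ((h : AddCircle (2 * Real.pi) → ℂ)) i) :=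
    hsum.congr key
  have htsum' : ∑' i : ℤ, conj (fourierCoeff ((f : AddCircle (2 * Real.pi) → ℂ)) i) *
        fourierCoeff ((h : AddCircle (2 * Real.pi) → ℂ)) i = (inner ℂ f h : ℂ) :=
    (tsum_congr key).symm.trans htsum
  constructor
  · exact ((Equiv.neg ℤ).summable_iff).2 hsum'
  · have heq := (Equiv.neg ℤ).tsum_eq (fun i : ℤ =>
      conj (fourierCoeff ((f : AddCircle (2 * Real.pi) → ℂ)) i) *
        fourierCoeff ((h : AddCircle (2 * Real.pi) → ℂ)) i)
    simp only [Equiv.neg_apply] at heq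
    rw [heq]
    exact htsum'

instance finIcc (a b : ℝ) : IsFiniteMeasure (volume.restrict (Icc a b)) :=
  ⟨by rw [Measure.restrict_apply_univ]; exact measure_Icc_lt_top⟩

lemma norm_exp_I_mul (ω m : ℝ) : ‖Complex.exp (Complex.I * (ω:ℂ) * (m:ℂ))‖ = 1 := by
  rw [Complex.norm_exp]
  have : (Complex.I * (ω:ℂ) * (m:ℂ)).re = 0 := by
    simp [Complex.mul_re, Complex.mul_im]
  rw [this, Real.exp_zero]

lemma norm_exp_neg_I_mul (ω m : ℝ) : ‖Complex.exp (-(Complex.I * (ω:ℂ) * (m:ℂ)))‖ = 1 := by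
  rw [Complex.norm_exp]
  have : (-(Complex.I * (ω:ℂ) * (m:ℂ))).re = 0 := by
    simp [Complex.mul_re, Complex.mul_im]
  rw [this, Real.exp_zero]

lemma integrable_mul_exp {Ω : ℝ} (g : ℝ → ℂ)
    (hg : MemLp g 2 (volume.restrict (Icc (-Ω) Ω))) (t : ℤ) :
    Integrable (fun ω : ℝ => g ω * Complex.exp (Complex.I * (ω:ℂ) * (t:ℂ)))
      (volume.restrict (Icc (-Ω) Ω)) := by
  have hgi : Integrable g (volume.restrict (Icc (-Ω) Ω)) := hg.integrable one_le_two
  have := hgi.bdd_mul (f := fun ω : ℝ => Complex.exp (Complex.I * (ω:ℂ) * (t:ℂ)))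
    (c := 1) (Continuous.aestronglyMeasurable (by continuity)) (ae_of_all _ fun ω => le_of_eq (norm_exp_I_mul ω t))
  exact this.congr (Filter.Eventually.of_forall fun ω => mul_comm _ _)

lemma isBandLimited_add_mul {Ω : ℝ} {x y : ℤ → ℂ} (hx : IsBandLimited Ω x)
    (hy : IsBandLimited Ω y) (c : ℂ) : IsBandLimited Ω (fun t => x t + c * y t) := by
  obtain ⟨g₁, hg₁, hx1⟩ := hx
  obtain ⟨g₂, hg₂, hy1⟩ := hy
  refine ⟨fun ω => g₁ ω + c * g₂ ω, ?_, ?_⟩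
  · exact hg₁.add (hg₂.const_mul c)
  · intro t
    have h1 := integrable_mul_exp g₁ hg₁ t
    have h2 := integrable_mul_exp g₂ hg₂ t
    have : ∫ ω in Icc (-Ω) Ω, (g₁ ω + c * g₂ ω) * Complex.exp (Complex.I * (ω:ℂ) * (t:ℂ))
        = (∫ ω in Icc (-Ω) Ω, g₁ ω * Complex.exp (Complex.I * (ω:ℂ) * (t:ℂ)))
          + c * ∫ ω in Icc (-Ω) Ω, g₂ ω * Complex.exp (Complex.I * (ω:ℂ) * (t:ℂ)) := by
      rw [← integral_const_mul c, ← integral_add h1 (h2.const_mul c)]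
      congr 1; ext ω; ring
    show x t + c * y t = _
    rw [this, hx1 t, hy1 t]
    ring

lemma rep {Ω : ℝ} (hΩπ : Ω < Real.pi) {x : ℤ → ℂ} (hbl : IsBandLimited Ω x) :
    ∃ (g : ℝ → ℂ) (hgm : StronglyMeasurable g)
      (hg : MemLp g 2 (volume.restrict (Icc (-Ω) Ω))),
    (∀ t : ℤ, x t = fourierCoeff (((blToLp hΩπ g hgm hg : Lp ℂ 2 _) :
        AddCircle (2 * Real.pi) → ℂ)) (-t)) ∧
    (∀ t : ℤ, x t = (1 / (2 * (Real.pi : ℂ))) *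
      ∫ ω in Icc (-Ω) Ω, g ω * Complex.exp (Complex.I * (ω:ℂ) * (t:ℂ))) := by
  obtain ⟨g₀, hg₀, hx⟩ := hbl
  have hmk := hg₀.1.stronglyMeasurable_mk
  have heq : g₀ =ᵐ[volume.restrict (Icc (-Ω) Ω)] hg₀.1.mk g₀ := hg₀.1.ae_eq_mk
  have hg : MemLp (hg₀.1.mk g₀) 2 (volume.restrict (Icc (-Ω) Ω)) := hg₀.ae_eq heq
  have hform : ∀ t : ℤ, x t = (1 / (2 * (Real.pi : ℂ))) *
      ∫ ω in Icc (-Ω) Ω, hg₀.1.mk g₀ ω * Complex.exp (Complex.I * (ω:ℂ) * (t:ℂ)) := by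
    intro t
    rw [hx t]
    congr 1
    apply integral_congr_ae
    filter_upwards [heq] with ω hω
    rw [hω]
  refine ⟨hg₀.1.mk g₀, hmk, hg, fun t => ?_, hform⟩
  rw [coeff_blToLp, hform t]
  congr 1
  apply integral_congr_ae
  refine Filter.Eventually.of_forall fun ω => ?_
  show _ * Complex.exp _ = _ * Complex.exp _
  have : -(Complex.I * (ω:ℂ) * ((-t : ℤ):ℂ)) = Complex.I * (ω:ℂ) * (t:ℂ) := by
    push_cast; ring
  rw [this]

noncomputable def gK (Ω : ℝ) (s : ℤ) : ℝ → ℂ :=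
  fun ω => ((Real.pi / Ω : ℝ) : ℂ) * Complex.exp (-(Complex.I * (ω:ℂ) * (s:ℂ)))

noncomputable def Kf (Ω : ℝ) (s : ℤ) : ℤ → ℂ :=
  fun t => ((rsinc (Ω * ((s : ℝ) - (t : ℝ)))) : ℂ)

lemma gK_sm (Ω : ℝ) (s : ℤ) : StronglyMeasurable (gK Ω s) :=
  (by unfold gK; continuity : Continuous (gK Ω s)).stronglyMeasurable

lemma gK_memℒp (Ω : ℝ) (s : ℤ) : MemLp (gK Ω s) 2 (volume.restrict (Icc (-Ω) Ω)) := by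
  refine MemLp.of_bound (gK_sm Ω s).aestronglyMeasurable |Real.pi/Ω| (ae_of_all _ fun ω => ?_)
  have h1 : ‖Complex.exp (-(Complex.I * (ω:ℂ) * (s:ℂ)))‖ = 1 := norm_exp_neg_I_mul ω s
  rw [gK, norm_mul, h1, mul_one, Complex.norm_real]
  exact le_of_eq (Real.norm_eq_abs _)

lemma gK_integral {Ω : ℝ} (hΩ0 : 0 < Ω) (s t : ℤ) :
    ∫ ω in Icc (-Ω) Ω, gK Ω s ω * Complex.exp (Complex.I * (ω:ℂ) * (t:ℂ))
      = ((Real.pi/Ω : ℝ):ℂ) * (2 * (Ω:ℂ) * ((rsinc (Ω * ((t:ℝ) - (s:ℝ)))) : ℂ)) := by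
  have hpt : ∀ ω : ℝ, gK Ω s ω * Complex.exp (Complex.I * (ω:ℂ) * (t:ℂ))
      = ((Real.pi/Ω : ℝ):ℂ) * Complex.exp (Complex.I * (ω:ℂ) * (((t:ℝ) - (s:ℝ) : ℝ):ℂ)) := by
    intro ω
    rw [gK, mul_assoc, ← Complex.exp_add]
    congr 2
    push_cast
    ring
  simp_rw [hpt]
  rw [integral_const_mul, integral_exp_I_mul Ω hΩ0]

lemma Kf_formula {Ω : ℝ} (hΩ0 : 0 < Ω) (s t : ℤ) :
    Kf Ω s t = (1 / (2 * (Real.pi : ℂ))) *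
      ∫ ω in Icc (-Ω) Ω, gK Ω s ω * Complex.exp (Complex.I * (ω:ℂ) * (t:ℂ)) := by
  rw [gK_integral hΩ0, Kf]
  have h1 : (rsinc (Ω * ((s : ℝ) - (t : ℝ)))) = (rsinc (Ω * ((t : ℝ) - (s : ℝ)))) := by
    rw [show Ω * ((s : ℝ) - (t : ℝ)) = -(Ω * ((t : ℝ) - (s : ℝ))) by ring, rsinc_neg]
  rw [h1]
  have hπ : (Real.pi : ℂ) ≠ 0 := Complex.ofReal_ne_zero.2 Real.pi_ne_zero
  have hΩ : (Ω : ℂ) ≠ 0 := Complex.ofReal_ne_zero.2 hΩ0.ne'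
  push_cast
  field_simp

lemma Kf_bandLimited {Ω : ℝ} (hΩ0 : 0 < Ω) (s : ℤ) : IsBandLimited Ω (Kf Ω s) :=
  ⟨gK Ω s, gK_memℒp Ω s, fun t => Kf_formula hΩ0 s t⟩

lemma Kf_coeff {Ω : ℝ} (hΩ0 : 0 < Ω) (hΩπ : Ω < Real.pi) (s t : ℤ) :
    Kf Ω s t = fourierCoeff (((blToLp hΩπ (gK Ω s) (gK_sm Ω s) (gK_memℒp Ω s) : Lp ℂ 2 _) :
      AddCircle (2 * Real.pi) → ℂ)) (-t) := by
  rw [coeff_blToLp, Kf_formula hΩ0 s t]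
  congr 1
  apply integral_congr_ae
  refine Filter.Eventually.of_forall fun ω => ?_
  show _ * Complex.exp _ = _ * Complex.exp _
  have : -(Complex.I * (ω:ℂ) * ((-t : ℤ):ℂ)) = Complex.I * (ω:ℂ) * (t:ℂ) := by
    push_cast; ring
  rw [this]

lemma cnorm_add_sq (z w : ℂ) : ‖z + w‖^2 = ‖z‖^2 + 2*(conj z * w).re + ‖w‖^2 := by
  rw [Complex.sq_norm, Complex.sq_norm, Complex.sq_norm, Complex.normSq_add]
  have : (z * conj w).re = (conj z * w).re := by
    simp [Complex.mul_re, Complex.conj_re, Complex.conj_im]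
    try ring
  rw [this]
  try ring

lemma sum_split (f : ℤ → ℂ) (hf : Summable f) (s : ℤ) :
    ∑' t : ℤ, f t = f s + ∑' t : {t : ℤ // t ≠ s}, f (t : ℤ) := by
  classical
  rw [Summable.tsum_eq_add_tsum_ite hf s]
  congr 1
  have h1 : ∑' t : {t : ℤ // t ≠ s}, f (t : ℤ) = ∑' n : ℤ, ({t : ℤ | t ≠ s}).indicator f n := by
    exact tsum_subtype {t : ℤ | t ≠ s} f
  rw [h1]
  apply tsum_congr
  intro n
  by_cases h : n = s
  · simp [Set.indicator_apply, h]
  · simp [Set.indicator_apply, h]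

lemma summable_mul_of_sq {ι : Type*} (a b : ι → ℂ)
    (ha : Summable fun i => ‖a i‖^2) (hb : Summable fun i => ‖b i‖^2) :
    Summable fun i => ‖a i * b i‖ := by
  apply Summable.of_nonneg_of_le (fun i => norm_nonneg _) _ ((ha.add hb).mul_left (1/2))
  intro i
  rw [norm_mul]
  nlinarith [norm_nonneg (a i), norm_nonneg (b i), sq_nonneg (‖a i‖ - ‖b i‖)]

open scoped ComplexConjugate in
lemma orth {ι : Type*} (D K : ι → ℂ)
    (hD2 : Summable fun i => ‖D i‖^2) (hK2 : Summable fun i => ‖K i‖^2)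
    (hmin : ∀ c : ℂ, ∑' i, ‖D i‖^2 ≤ ∑' i, ‖D i + c * K i‖^2) :
    ∑' i, conj (D i) * K i = 0 := by
  have hD2' : Summable fun i => ‖conj (D i)‖^2 :=
    hD2.congr fun i => by rw [RCLike.norm_conj]
  have hq : Summable fun i => conj (D i) * K i :=
    Summable.of_norm (summable_mul_of_sq _ _ hD2' hK2)
  set B := ∑' i, conj (D i) * K i with hBdef
  set S := ∑' i, ‖K i‖^2 with hSdef
  have hS0 : 0 ≤ S := tsum_nonneg fun i => sq_nonneg _
  have key : ∀ c : ℂ, 0 ≤ 2*(c * B).re + ‖c‖^2 * S := by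
    intro c
    have hexp : ∀ i, ‖D i + c * K i‖^2
        = ‖D i‖^2 + (2*(c * (conj (D i) * K i)).re + ‖c‖^2 * ‖K i‖^2) := by
      intro i
      rw [cnorm_add_sq]
      have h1 : (conj (D i) * (c * K i)) = c * (conj (D i) * K i) := by ring
      rw [h1, norm_mul, mul_pow]
      ring
    have hcq : Summable fun i => c * (conj (D i) * K i) := hq.mul_left c
    have hre : Summable fun i => (2:ℝ)*(c * (conj (D i) * K i)).re :=
      (Complex.hasSum_re hcq.hasSum).summable.mul_left 2
    have hcK : Summable fun i => ‖c‖^2 * ‖K i‖^2 := hK2.mul_left _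
    have hretsum : ∑' i, (2:ℝ)*(c * (conj (D i) * K i)).re = 2*(c*B).re := by
      rw [tsum_mul_left]
      congr 1
      have h2 : (c * B) = ∑' i, c * (conj (D i) * K i) := by
        rw [hBdef, tsum_mul_left]
      rw [h2]
      exact ((Complex.hasSum_re hcq.hasSum).tsum_eq)
    have h3 := hmin c
    rw [tsum_congr hexp, Summable.tsum_add hD2 (hre.add hcK), Summable.tsum_add hre hcK,
      hretsum, tsum_mul_left] at h3
    have h5 : ∑' (x : ι), ‖K x‖ ^ 2 = S := rfl
    rw [h5] at h3
    linarith [h3]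
  by_contra hB
  have hBpos : 0 < ‖B‖^2 := pow_pos (norm_pos_iff.2 hB) 2
  set ε : ℝ := min 1 (1/(S+1)) with hεdef
  have hε0 : 0 < ε := lt_min one_pos (one_div_pos.2 (by linarith))
  have hεS : ε * S < 2 := by
    have h5 : ε ≤ 1/(S+1) := min_le_right _ _
    have h6 : 1/(S+1) * S < 2 := by
      rw [div_mul_eq_mul_div, div_lt_iff₀ (by linarith)]
      linarith
    nlinarith [hS0, hε0]
  have := key (-(ε:ℂ) * conj B)
  have hcB : ((-(ε:ℂ) * conj B) * B).re = -ε * ‖B‖^2 := by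
    have : (-(ε:ℂ) * conj B) * B = -(ε:ℂ) * ((‖B‖^2 : ℝ) : ℂ) := by
      rw [mul_assoc, mul_comm (conj B) B, Complex.mul_conj, Complex.normSq_eq_norm_sq]
    rw [this, show -(ε:ℂ) * ((‖B‖^2:ℝ):ℂ) = (((-ε * ‖B‖^2 : ℝ)):ℂ) by push_cast; ring,
      Complex.ofReal_re]
  have hcn : ‖-(ε:ℂ) * conj B‖^2 = ε^2 * ‖B‖^2 := by
    rw [norm_mul, mul_pow, norm_neg, RCLike.norm_conj]
    congr 1
    rw [Complex.norm_real, Real.norm_eq_abs, _root_.sq_abs]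
  rw [hcB, hcn] at this
  nlinarith [this, mul_pos (mul_pos hε0 hBpos) (sub_pos.2 hεS)]


theorem single_missing_value_recovery_formula (Ω : ℝ) (hΩ0 : 0 < Ω) (hΩπ : Ω < Real.pi)
    (s : ℤ) (x : ℤ → ℂ) (hx : Summable fun t : ℤ => ‖x t‖ ^ 2)
    (xh : ℤ → ℂ) (hbl : IsBandLimited Ω xh)
    (hmin : ∀ w : ℤ → ℂ, IsBandLimited Ω w →
      ∑' t : {t : ℤ // t ≠ s}, ‖xh (t : ℤ) - x (t : ℤ)‖ ^ 2 ≤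
        ∑' t : {t : ℤ // t ≠ s}, ‖w (t : ℤ) - x (t : ℤ)‖ ^ 2) :
    Summable (fun t : {t : ℤ // t ≠ s} =>
      ‖x (t : ℤ) * (rsinc (Ω * ((s : ℝ) - (t : ℤ))) : ℂ)‖) ∧
    xh s = ((Ω / (Real.pi - Ω) : ℝ) : ℂ) *
      ∑' t : {t : ℤ // t ≠ s}, x (t : ℤ) * (rsinc (Ω * ((s : ℝ) - (t : ℤ))) : ℂ) := by
  obtain ⟨g₁, m₁, p₁, hco, hfo⟩ := rep hΩπ hbl
  set fxh := blToLp hΩπ g₁ m₁ p₁ with hfxh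
  set fK := blToLp hΩπ (gK Ω s) (gK_sm Ω s) (gK_memℒp Ω s) with hfK
  have hxh2 : Summable fun t : ℤ => ‖xh t‖^2 :=
    (summable_sq_coeff fxh).congr fun t => by rw [← hco t]
  have hK2 : Summable fun t : ℤ => ‖Kf Ω s t‖^2 := by
    refine (summable_sq_rsinc Ω hΩ0 s).congr fun t => ?_
    rw [Kf, show Ω * ((s:ℝ) - (t:ℝ)) = -(Ω * ((t:ℝ) - (s:ℝ))) by ring, rsinc_neg]
  have part1 : Summable (fun t : {t : ℤ // t ≠ s} => ‖x (t:ℤ) * Kf Ω s (t:ℤ)‖) :=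
    summable_mul_of_sq (fun t : {t : ℤ // t ≠ s} => x (t:ℤ))
      (fun t => Kf Ω s (t:ℤ)) (hx.subtype _) (hK2.subtype _)
  obtain ⟨hPsum, hPtsum⟩ := parseval_pair fK fxh
  have hcoe : ∀ t : ℤ, conj (fourierCoeff ((fK : Lp ℂ 2 _) : AddCircle (2*Real.pi) → ℂ) (-t)) *
      fourierCoeff ((fxh : Lp ℂ 2 _) : AddCircle (2*Real.pi) → ℂ) (-t) = Kf Ω s t * xh t := by
    intro t
    rw [← Kf_coeff hΩ0 hΩπ s t, ← hco t, Kf, Complex.conj_ofReal]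
  have hKxh_sum : Summable fun t : ℤ => Kf Ω s t * xh t := hPsum.congr hcoe
  have hKxh : ∑' t : ℤ, Kf Ω s t * xh t = (inner ℂ fK fxh : ℂ) :=
    (tsum_congr hcoe).symm.trans hPtsum
  have hinner : (inner ℂ fK fxh : ℂ) = ((Real.pi/Ω : ℝ):ℂ) * xh s := by
    rw [hfK, hfxh, inner_blToLp]
    have hptc : ∀ ω : ℝ, conj (gK Ω s ω) * g₁ ω
        = ((Real.pi/Ω : ℝ):ℂ) * (g₁ ω * Complex.exp (Complex.I * (ω:ℂ) * (s:ℂ))) := by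
      intro ω
      rw [gK, map_mul, Complex.conj_ofReal, ← Complex.exp_conj]
      have hc : conj (-(Complex.I * (ω:ℂ) * (s:ℂ))) = Complex.I * (ω:ℂ) * (s:ℂ) := by
        simp only [map_neg, map_mul, Complex.conj_I, Complex.conj_ofReal, map_intCast]
        ring
      rw [hc]
      ring
    simp_rw [hptc]
    rw [integral_const_mul, hfo s]
    ring
  have hD2' : Summable fun t : {t : ℤ // t ≠ s} => ‖xh (t:ℤ) - x (t:ℤ)‖^2 := by
    have hmaj : Summable fun t : {t : ℤ // t ≠ s} => 2*(‖xh (t:ℤ)‖^2 + ‖x (t:ℤ)‖^2) :=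
      ((hxh2.subtype _).add (hx.subtype _)).mul_left 2
    refine Summable.of_nonneg_of_le (fun t => sq_nonneg _) (fun t => ?_) hmaj
    have h1 := norm_sub_le (xh (t:ℤ)) (x (t:ℤ))
    nlinarith [norm_nonneg (xh (t:ℤ)), norm_nonneg (x (t:ℤ)), norm_nonneg (xh (t:ℤ) - x (t:ℤ)),
      sq_nonneg (‖xh (t:ℤ)‖ - ‖x (t:ℤ)‖)]
  have hminc : ∀ c : ℂ, ∑' t : {t : ℤ // t ≠ s}, ‖xh (t:ℤ) - x (t:ℤ)‖^2
      ≤ ∑' t : {t : ℤ // t ≠ s}, ‖(xh (t:ℤ) - x (t:ℤ)) + c * Kf Ω s (t:ℤ)‖^2 := by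
    intro c
    have hw := hmin (fun t => xh t + c * Kf Ω s t)
      (isBandLimited_add_mul hbl (Kf_bandLimited hΩ0 s) c)
    refine hw.trans (le_of_eq (tsum_congr fun t => ?_))
    congr 1
    ring
  have horth := orth (fun t : {t : ℤ // t ≠ s} => xh (t:ℤ) - x (t:ℤ))
    (fun t => Kf Ω s (t:ℤ)) hD2' (hK2.subtype _) hminc
  have horth2 : ∑' t : {t : ℤ // t ≠ s}, (xh (t:ℤ) - x (t:ℤ)) * Kf Ω s (t:ℤ) = 0 := by
    have hfun : ∀ t : {t : ℤ // t ≠ s}, (xh (t:ℤ) - x (t:ℤ)) * Kf Ω s (t:ℤ)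
        = star (conj (xh (t:ℤ) - x (t:ℤ)) * Kf Ω s (t:ℤ)) := by
      intro t
      rw [star_mul']
      rw [show (star (conj (xh (t:ℤ) - x (t:ℤ))) : ℂ) = xh (t:ℤ) - x (t:ℤ) from
        Complex.conj_conj _]
      rw [show (star (Kf Ω s (t:ℤ)) : ℂ) = Kf Ω s (t:ℤ) by rw [Kf]; exact Complex.conj_ofReal _]
      try ring
    rw [tsum_congr hfun, ← tsum_star, horth, star_zero]
  have hxhK_sub : Summable fun t : {t : ℤ // t ≠ s} => xh (t:ℤ) * Kf Ω s (t:ℤ) :=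
    (hKxh_sum.congr fun t => mul_comm _ _).subtype _
  have hxK_sub : Summable fun t : {t : ℤ // t ≠ s} => x (t:ℤ) * Kf Ω s (t:ℤ) :=
    Summable.of_norm part1
  have hsplit : ∑' t : {t : ℤ // t ≠ s}, xh (t:ℤ) * Kf Ω s (t:ℤ)
      = ∑' t : {t : ℤ // t ≠ s}, x (t:ℤ) * Kf Ω s (t:ℤ) := by
    have h2 := horth2
    rw [tsum_congr (fun t : {t : ℤ // t ≠ s} =>
      sub_mul (xh (t:ℤ)) (x (t:ℤ)) (Kf Ω s (t:ℤ))), Summable.tsum_sub hxhK_sub hxK_sub] at h2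
    exact sub_eq_zero.1 h2
  have hKfs : Kf Ω s s = 1 := by
    rw [Kf, show Ω * ((s:ℝ) - (s:ℝ)) = 0 by ring, rsinc_zero]
    norm_num
  have hsumxhK : Summable fun t : ℤ => xh t * Kf Ω s t :=
    hKxh_sum.congr fun t => mul_comm _ _
  have htotal : ∑' t : ℤ, xh t * Kf Ω s t = ((Real.pi/Ω : ℝ):ℂ) * xh s := by
    rw [tsum_congr (fun t : ℤ => mul_comm (xh t) (Kf Ω s t)), hKxh, hinner]
  have hsub_val : ∑' t : {t : ℤ // t ≠ s}, xh (t:ℤ) * Kf Ω s (t:ℤ)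
      = ((Real.pi/Ω : ℝ):ℂ) * xh s - xh s := by
    have h3 := sum_split (fun t => xh t * Kf Ω s t) hsumxhK s
    rw [htotal, hKfs, mul_one] at h3
    rw [eq_sub_iff_add_eq, add_comm]
    exact h3.symm
  have hfinal : ∑' t : {t : ℤ // t ≠ s}, x (t:ℤ) * Kf Ω s (t:ℤ)
      = ((Real.pi/Ω : ℝ):ℂ) * xh s - xh s := by
    rw [← hsplit]
    exact hsub_val
  constructor
  · exact part1
  · show xh s = ((Ω / (Real.pi - Ω) : ℝ) : ℂ) *
      ∑' t : {t : ℤ // t ≠ s}, x (t:ℤ) * Kf Ω s (t:ℤ)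
    rw [hfinal]
    have hπΩ : (Real.pi:ℂ) - (Ω:ℂ) ≠ 0 := by
      rw [show (Real.pi:ℂ) - (Ω:ℂ) = ((Real.pi - Ω : ℝ):ℂ) by push_cast; ring]
      exact Complex.ofReal_ne_zero.2 (by linarith)
    have hΩc : (Ω:ℂ) ≠ 0 := Complex.ofReal_ne_zero.2 hΩ0.ne'
    push_cast
    field_simp
end

section
/- Let 0 < Ω < π and let x : ℤ → ℂ be an Ω-band-limited sequence. Then for every s ∈ ℤ, the series Σ_{t∈ℤ, t≠s} x(t) · sinc(Ω(s−t)) converges absolutely and x(s) = (Ω/(π−Ω)) · Σ_{t∈ℤ, t≠s} x(t) · sinc(Ω(s−t)). -/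
open MeasureTheory Real Set
open scoped ENNReal

instance BL.fact2pi : Fact (0 < 2 * π) := ⟨by positivity⟩

/-- Integral of a complex exponential over a symmetric interval, in terms of `rsinc`. -/
lemma BL.lemB (Ω : ℝ) (hΩ0 : 0 < Ω) (m : ℝ) :
    ∫ ω in Set.Icc (-Ω) Ω, Complex.exp (Complex.I * ω * (-m : ℂ)) =
      2 * Ω * (rsinc (Ω * m) : ℂ) := by
  rcases eq_or_ne m 0 with hm | hm
  · subst hm
    simp [rsinc, Real.volume_Icc]
    rw [max_eq_left (by linarith)]
    push_cast; ring
  have h1 : ∫ ω in Set.Icc (-Ω) Ω, Complex.exp (Complex.I * ω * (-m : ℂ)) =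
      ∫ ω in (-Ω)..Ω, Complex.exp ((-(m:ℂ)*Complex.I) * ω) := by
    rw [MeasureTheory.integral_Icc_eq_integral_Ioc, ← intervalIntegral.integral_of_le (by linarith)]
    congr 1; ext ω; ring_nf
  rw [h1, integral_exp_mul_complex (by simp [hm, Complex.ext_iff])]
  have hΩm : Ω * m ≠ 0 := mul_ne_zero (ne_of_gt hΩ0) hm
  rw [show (-(m:ℂ)*Complex.I)*(Ω:ℂ) = -((Ω*m:ℝ):ℂ)*Complex.I by push_cast; ring,
      show (-(m:ℂ)*Complex.I)*(((-Ω):ℝ):ℂ) = ((Ω*m:ℝ):ℂ)*Complex.I by push_cast; ring]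
  have hs : ((Real.sin (Ω*m) : ℝ) : ℂ) =
      (Complex.exp (-((Ω*m:ℝ):ℂ)*Complex.I) - Complex.exp (((Ω*m:ℝ):ℂ)*Complex.I))
        * Complex.I / 2 := by
    rw [Complex.ofReal_sin, Complex.sin]
  rw [rsinc, if_neg hΩm]
  rw [Complex.ofReal_div, hs]
  have hI := Complex.I_ne_zero
  have hmC : (m:ℂ) ≠ 0 := by exact_mod_cast hm
  have hΩC : (Ω:ℂ) ≠ 0 := by exact_mod_cast ne_of_gt hΩ0
  field_simp
  ring_nf
  simp [Complex.I_sq]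
  ring

/-- Fourier coefficients of the periodization of a function supported in `[-Ω, Ω]`. -/
lemma BL.lemA (Ω : ℝ) (hΩ0 : 0 < Ω) (hΩπ : Ω < π) (f : ℝ → ℂ) (n : ℤ) :
    fourierCoeff (AddCircle.liftIoc (2*π) (-π) ((Set.Icc (-Ω) Ω).indicator f)) n
      = (1/(2*(π:ℂ))) * ∫ ω in Set.Icc (-Ω) Ω, f ω * Complex.exp (Complex.I * ω * (-(n:ℂ))) := by
  have hsub : Set.Icc (-Ω) Ω ⊆ Set.Ioc (-π) (-π + 2*π) := by
    intro y hy
    constructor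
    · linarith [hy.1]
    · linarith [hy.2]
  rw [fourierCoeff_eq_intervalIntegral _ n (-π)]
  have key : (∫ x in (-π)..(-π + 2*π), (fourier (-n) (x : AddCircle (2*π))) •
      (AddCircle.liftIoc (2*π) (-π) ((Set.Icc (-Ω) Ω).indicator f) (x : AddCircle (2*π))))
      = ∫ ω in Set.Icc (-Ω) Ω, f ω * Complex.exp (Complex.I * ω * (-(n:ℂ))) := by
    rw [intervalIntegral.integral_of_le (by linarith [Real.pi_pos])]
    have step1 : ∀ x ∈ Set.Ioc (-π) (-π + 2*π),
        (fourier (-n) (x : AddCircle (2*π))) •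
          (AddCircle.liftIoc (2*π) (-π) ((Set.Icc (-Ω) Ω).indicator f) (x : AddCircle (2*π)))
        = (Set.Icc (-Ω) Ω).indicator
            (fun ω => f ω * Complex.exp (Complex.I * ω * (-(n:ℂ)))) x := by
      intro x hx
      rw [AddCircle.liftIoc_coe_apply hx, fourier_coe_apply, smul_eq_mul]
      by_cases hmem : x ∈ Set.Icc (-Ω) Ω
      · rw [Set.indicator_of_mem hmem, Set.indicator_of_mem hmem]
        rw [mul_comm]
        congr 2
        have hpi : (π:ℂ) ≠ 0 := by exact_mod_cast Real.pi_ne_zero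
        field_simp
        push_cast
        ring
      · rw [Set.indicator_of_notMem hmem, Set.indicator_of_notMem hmem, mul_zero]
    rw [setIntegral_congr_fun measurableSet_Ioc step1,
        setIntegral_indicator measurableSet_Icc,
        Set.inter_eq_self_of_subset_right hsub]
  rw [key, Complex.real_smul]
  push_cast
  ring_nf
  congr 2
  refine integral_congr_ae (Filter.Eventually.of_forall fun ω => ?_)
  dsimp only
  ring_nf

/-- The periodization of an `L²` function supported in `[-Ω, Ω]` is in `L²` of the circle. -/
lemma BL.lemC (Ω : ℝ) (hΩπ : Ω < π) (f : ℝ → ℂ)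
    (hmeas : StronglyMeasurable f)
    (hf : MemLp f 2 (volume.restrict (Set.Icc (-Ω) Ω))) :
    MemLp (AddCircle.liftIoc (2*π) (-π) ((Set.Icc (-Ω) Ω).indicator f)) 2
      (AddCircle.haarAddCircle : Measure (AddCircle (2*π))) := by
  set F : ℝ → ℂ := (Set.Icc (-Ω) Ω).indicator f with hF
  have hsub : Set.Icc (-Ω) Ω ⊆ Set.Ioc (-π) (-π + 2*π) := fun y hy =>
    ⟨by linarith [hy.1, hy.2], by linarith [hy.1, hy.2]⟩
  have hFmeas : StronglyMeasurable F := hmeas.indicator measurableSet_Icc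
  have hlift_meas : StronglyMeasurable (AddCircle.liftIoc (2*π) (-π) F) := by
    have : AddCircle.liftIoc (2*π) (-π) F =
        F ∘ (fun z : AddCircle (2*π) => ((AddCircle.measurableEquivIoc (2*π) (-π) z : ℝ))) := rfl
    rw [this]
    exact hFmeas.comp_measurable
      (measurable_subtype_coe.comp (AddCircle.measurableEquivIoc (2*π) (-π)).measurable)
  have hF2 : MemLp F 2 (volume.restrict (Set.Ioc (-π) (-π + 2*π))) := by
    rw [hF, memLp_indicator_iff_restrict measurableSet_Icc,
        Measure.restrict_restrict measurableSet_Icc,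
        Set.inter_eq_self_of_subset_left hsub]
    exact hf
  have hvol : MemLp (AddCircle.liftIoc (2*π) (-π) F) 2 (volume : Measure (AddCircle (2*π))) := by
    rw [← (AddCircle.measurePreserving_mk (2*π) (-π)).map_eq,
        memLp_map_measure_iff hlift_meas.aestronglyMeasurable AddCircle.measurable_mk'.aemeasurable]
    apply hF2.ae_eq
    filter_upwards [ae_restrict_mem measurableSet_Ioc] with y hy
    exact (AddCircle.liftIoc_coe_apply hy).symm
  have hh : (AddCircle.haarAddCircle : Measure (AddCircle (2*π))) =
      (ENNReal.ofReal (2*π))⁻¹ • (volume : Measure (AddCircle (2*π))) := by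
    rw [AddCircle.volume_eq_smul_haarAddCircle, ← smul_assoc, smul_eq_mul,
        ENNReal.inv_mul_cancel (by simp [Real.pi_pos]) ENNReal.ofReal_ne_top, one_smul]
  rw [hh]
  exact hvol.smul_measure (by simp [Real.pi_pos])

lemma BL.fourierCoeff_congr_ae {f g : AddCircle (2*π) → ℂ}
    (h : f =ᵐ[(AddCircle.haarAddCircle : Measure (AddCircle (2*π)))] g) (n : ℤ) :
    fourierCoeff f n = fourierCoeff g n := by
  unfold fourierCoeff
  exact integral_congr_ae (h.mono fun x hx => by dsimp only; rw [hx])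

lemma BL.fourierCoeff_zero_eq_integral (f : AddCircle (2*π) → ℂ) :
    fourierCoeff f 0 = ∫ t : AddCircle (2*π), f t ∂AddCircle.haarAddCircle := by
  unfold fourierCoeff
  simp [fourier_zero]

set_option maxHeartbeats 1000000 in
theorem bandlimited_single_value_formula (Ω : ℝ) (hΩ0 : 0 < Ω) (hΩπ : Ω < Real.pi)
    (x : ℤ → ℂ) (hx : IsBandLimited Ω x) :
    ∀ s : ℤ,
      Summable (fun t : {t : ℤ // t ≠ s} =>
        ‖x (t : ℤ) * (rsinc (Ω * ((s : ℝ) - (t : ℤ))) : ℂ)‖) ∧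
      x s = ((Ω / (Real.pi - Ω) : ℝ) : ℂ) *
        ∑' t : {t : ℤ // t ≠ s}, x (t : ℤ) * (rsinc (Ω * ((s : ℝ) - (t : ℤ))) : ℂ) := by
  intro s
  obtain ⟨g, hg, hxg⟩ := hx
  -- replace g by a strongly measurable representative
  set g1 : ℝ → ℂ := hg.1.mk g with hg1def
  have hg1meas : StronglyMeasurable g1 := hg.1.stronglyMeasurable_mk
  have hgg1 : g =ᵐ[volume.restrict (Set.Icc (-Ω) Ω)] g1 := hg.1.ae_eq_mk
  have hg1mem : MemLp g1 2 (volume.restrict (Set.Icc (-Ω) Ω)) := hg.ae_eq hgg1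
  have hx' : ∀ t : ℤ, x t = (1 / (2 * (Real.pi : ℂ))) *
      ∫ ω in Set.Icc (-Ω) Ω, g1 ω * Complex.exp (Complex.I * (ω : ℂ) * (t : ℂ)) := by
    intro t
    rw [hxg t]
    congr 1
    exact integral_congr_ae (hgg1.mono fun ω hω => by dsimp only; rw [hω])
  -- the kernel function
  set K : ℝ → ℂ := fun ω => ((π/Ω : ℝ) : ℂ) * Complex.exp (Complex.I * ω * (-(s:ℂ))) with hKdef
  have hKmeas : StronglyMeasurable K := by
    apply Continuous.stronglyMeasurable
    continuity
  haveI : IsFiniteMeasure (volume.restrict (Set.Icc (-Ω) Ω)) :=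
    ⟨by rw [Measure.restrict_apply_univ]; exact measure_Icc_lt_top⟩
  have hKmem : MemLp K 2 (volume.restrict (Set.Icc (-Ω) Ω)) := by
    apply MemLp.of_bound hKmeas.aestronglyMeasurable (|π/Ω|)
    filter_upwards with ω
    rw [hKdef]
    simp only [norm_mul, Complex.norm_real]
    have : ‖Complex.exp (Complex.I * ω * (-(s:ℂ)))‖ = 1 := by
      rw [show Complex.I * ω * (-(s:ℂ)) = ((-(s:ℝ) * ω : ℝ) : ℂ) * Complex.I by push_cast; ring]
      exact Complex.norm_exp_ofReal_mul_I _
    rw [this, mul_one]; rfl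
  -- lifts to the circle
  have memF := BL.lemC Ω hΩπ g1 hg1meas hg1mem
  have memK := BL.lemC Ω hΩπ K hKmeas hKmem
  set Flp := memF.toLp _ with hFlp
  set Klp := memK.toLp _ with hKlp
  -- Fourier coefficients
  have hrF : ∀ n : ℤ, fourierBasis.repr Flp n = x (-n) := by
    intro n
    rw [fourierBasis_repr, BL.fourierCoeff_congr_ae memF.coeFn_toLp n, BL.lemA Ω hΩ0 hΩπ g1 n,
      hx' (-n)]
    push_cast
    ring_nf
    congr 2
    refine integral_congr_ae (Filter.Eventually.of_forall fun ω => ?_)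
    dsimp only
    ring_nf
  have hrK : ∀ n : ℤ, fourierBasis.repr Klp n = ((rsinc (Ω * ((n:ℝ) + (s:ℝ))) : ℝ) : ℂ) := by
    intro n
    rw [fourierBasis_repr, BL.fourierCoeff_congr_ae memK.coeFn_toLp n, BL.lemA Ω hΩ0 hΩπ K n]
    have : ∀ ω : ℝ, K ω * Complex.exp (Complex.I * ω * (-(n:ℂ)))
        = ((π/Ω : ℝ) : ℂ) * Complex.exp (Complex.I * ω * (-(((n:ℝ) + (s:ℝ) : ℝ)):ℂ)) := by
      intro ω
      rw [hKdef]
      rw [mul_assoc, ← Complex.exp_add]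
      congr 2
      push_cast
      ring
    simp_rw [this]
    rw [MeasureTheory.integral_const_mul, BL.lemB Ω hΩ0 ((n:ℝ) + (s:ℝ))]
    have hπ : (π:ℂ) ≠ 0 := by exact_mod_cast Real.pi_ne_zero
    have hΩC : (Ω:ℂ) ≠ 0 := by exact_mod_cast ne_of_gt hΩ0
    push_cast
    field_simp
  -- Parseval
  have hinner_eq : (inner ℂ Klp Flp : ℂ)
      = ∑' n : ℤ, (starRingEnd ℂ) (fourierBasis.repr Klp n) * (fourierBasis.repr Flp n) := by
    rw [← fourierBasis.repr.inner_map_map Klp Flp, lp.inner_eq_tsum]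
    congr 1; funext n; rw [RCLike.inner_apply, mul_comm]
  -- compute the inner product directly
  have hinner_val : (inner ℂ Klp Flp : ℂ) = ((π/Ω : ℝ) : ℂ) * x s := by
    rw [MeasureTheory.L2.inner_def]
    have hae : (fun a => (inner ℂ (Klp a) (Flp a) : ℂ))
        =ᵐ[(AddCircle.haarAddCircle : Measure (AddCircle (2*π)))]
        (fun a => (starRingEnd ℂ)
            (AddCircle.liftIoc (2*π) (-π) ((Set.Icc (-Ω) Ω).indicator K) a) *
          (AddCircle.liftIoc (2*π) (-π) ((Set.Icc (-Ω) Ω).indicator g1) a)) := by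
      filter_upwards [memK.coeFn_toLp, memF.coeFn_toLp] with a ha hb
      rw [RCLike.inner_apply, ha, hb, mul_comm]
    rw [integral_congr_ae hae]
    have hfun : (fun a => (starRingEnd ℂ)
            (AddCircle.liftIoc (2*π) (-π) ((Set.Icc (-Ω) Ω).indicator K) a) *
          (AddCircle.liftIoc (2*π) (-π) ((Set.Icc (-Ω) Ω).indicator g1) a))
        = AddCircle.liftIoc (2*π) (-π)
            ((Set.Icc (-Ω) Ω).indicator (fun ω => (starRingEnd ℂ) (K ω) * g1 ω)) := by
      funext a
      simp only [AddCircle.liftIoc, Function.comp_apply, Set.restrict_apply]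
      by_cases hmem : (((AddCircle.equivIoc (2*π) (-π)) a : ℝ)) ∈ Set.Icc (-Ω) Ω
      · simp [Set.indicator_of_mem hmem]
      · simp [Set.indicator_of_notMem hmem]
    rw [hfun, ← BL.fourierCoeff_zero_eq_integral, BL.lemA Ω hΩ0 hΩπ _ 0]
    have : ∀ ω ∈ Set.Icc (-Ω) Ω, ((starRingEnd ℂ) (K ω) * g1 ω) *
          Complex.exp (Complex.I * ω * (-((0:ℤ):ℂ)))
        = ((π/Ω : ℝ) : ℂ) * (g1 ω * Complex.exp (Complex.I * ω * (s:ℂ))) := by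
      intro ω _
      have hconjK : (starRingEnd ℂ) (K ω)
          = ((π/Ω : ℝ) : ℂ) * Complex.exp (Complex.I * ω * (s:ℂ)) := by
        rw [hKdef]
        dsimp only
        rw [map_mul, Complex.conj_ofReal, ← Complex.exp_conj]
        congr 1
        simp only [map_mul, map_neg, Complex.conj_I, Complex.conj_ofReal, map_intCast]
        ring
      rw [hconjK]
      simp only [Int.cast_zero, neg_zero, mul_zero, Complex.exp_zero, mul_one]
      ring
    rw [setIntegral_congr_fun measurableSet_Icc this, MeasureTheory.integral_const_mul, hx' s]
    ring
  -- the coefficient product sequence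
  set c : ℤ → ℂ := fun n : ℤ =>
    (starRingEnd ℂ) (fourierBasis.repr Klp n) * (fourierBasis.repr Flp n) with hcdef
  -- square-summability of the coefficients
  have hK2 : Summable (fun n : ℤ => ‖fourierBasis.repr Klp n‖^(2:ℕ)) := by
    have h := (lp.memℓp (fourierBasis.repr Klp)).summable (by norm_num)
    have h2 : ((2:ℝ≥0∞)).toReal = ((2:ℕ):ℝ) := by norm_num
    rw [h2] at h
    simpa [Real.rpow_natCast] using h
  have hF2 : Summable (fun n : ℤ => ‖fourierBasis.repr Flp n‖^(2:ℕ)) := by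
    have h := (lp.memℓp (fourierBasis.repr Flp)).summable (by norm_num)
    have h2 : ((2:ℝ≥0∞)).toReal = ((2:ℕ):ℝ) := by norm_num
    rw [h2] at h
    simpa [Real.rpow_natCast] using h
  have hsummc : Summable (fun n : ℤ => ‖c n‖) := by
    apply Summable.of_nonneg_of_le (fun n => norm_nonneg _) _ ((hK2.add hF2).div_const 2)
    intro n
    rw [hcdef]
    dsimp only
    rw [norm_mul, RCLike.norm_conj]
    nlinarith [sq_nonneg (‖fourierBasis.repr Klp n‖ - ‖fourierBasis.repr Flp n‖),
      norm_nonneg (fourierBasis.repr Klp n), norm_nonneg (fourierBasis.repr Flp n)]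
  -- the sequence in the statement
  set h : ℤ → ℂ := fun t : ℤ => x t * ((rsinc (Ω * ((s:ℝ) - (t:ℝ))) : ℝ) : ℂ) with hhdef
  have hch : ∀ t : ℤ, c (-t) = h t := by
    intro t
    rw [hcdef, hhdef]
    dsimp only
    rw [hrK (-t), hrF (-t), neg_neg, Complex.conj_ofReal,
      show (((-t : ℤ):ℝ)) + (s:ℝ) = (s:ℝ) - (t:ℝ) by push_cast; ring, mul_comm]
  have hnormch : (fun t : ℤ => ‖h t‖) = (fun n : ℤ => ‖c n‖) ∘ (fun t : ℤ => -t) := by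
    funext t
    simp only [Function.comp_apply, hch t]
  have hsumnorm_h : Summable (fun t : ℤ => ‖h t‖) := by
    rw [hnormch]
    exact hsummc.comp_injective neg_injective
  have hsummh : Summable h := hsumnorm_h.of_norm
  have htsum_all : ∑' t : ℤ, h t = ((π/Ω : ℝ) : ℂ) * x s := by
    calc ∑' t : ℤ, h t = ∑' t : ℤ, c (-t) := tsum_congr fun t => (hch t).symm
    _ = ∑' n : ℤ, c n := (Equiv.neg ℤ).tsum_eq c
    _ = inner ℂ Klp Flp := hinner_eq.symm
    _ = ((π/Ω : ℝ) : ℂ) * x s := hinner_val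
  have hsplit : ∑' t : ℤ, h t = h s + ∑' t : {t : ℤ // t ≠ s}, h (t : ℤ) := by
    rw [hsummh.tsum_eq_add_tsum_ite s]
    congr 1
    refine (tsum_congr fun n => ?_).trans (tsum_subtype {t : ℤ | t ≠ s} h).symm
    by_cases hn : n = s
    · simp [hn, Set.indicator]
    · simp [hn, Set.indicator]
  have hhs : h s = x s := by
    rw [hhdef]
    dsimp only
    rw [show Ω * ((s:ℝ) - (s:ℝ)) = 0 by ring]
    simp [rsinc]
  have hSS : ∑' t : {t : ℤ // t ≠ s}, h (t : ℤ) = ((π/Ω : ℝ) : ℂ) * x s - x s := by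
    have h1 := hsplit
    rw [htsum_all, hhs] at h1
    linear_combination -h1
  constructor
  · exact hsumnorm_h.subtype {t : ℤ | t ≠ s}
  · have hgoal : x s = ((Ω / (Real.pi - Ω) : ℝ) : ℂ) * ∑' t : {t : ℤ // t ≠ s}, h (t : ℤ) := by
      rw [hSS]
      have hπΩ : ((π : ℂ) - Ω) ≠ 0 := by
        have : ((π - Ω : ℝ) : ℂ) ≠ 0 :=
          Complex.ofReal_ne_zero.mpr (ne_of_gt (by linarith))
        push_cast at this
        exact this
      have hΩC : (Ω : ℂ) ≠ 0 := Complex.ofReal_ne_zero.mpr (ne_of_gt hΩ0)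
      push_cast
      field_simp
    exact hgoal
end

section
/- Let ω₀ ∈ (0, π], m ∈ ℕ, M = {0, 1, ..., m}, and let x : ℤ → ℂ satisfy Σ_{t∈ℤ} |t|^m |x(t)| < ∞. Then there exists a unique sequence x̂ : ℤ → ℂ such that x̂(t) = x(t) for all t ∈ ℤ \ M and Σ_{t∈ℤ} (−it)^p e^{−iω₀t} x̂(t) = 0 for every p ∈ {0, 1, ..., m} (all these series converging absolutely). Moreover, the vector y = (x̂(0), x̂(1), ..., x̂(m)) ∈ ℂ^{m+1} is the unique solution of the linear system B(ω₀) y = z, where z_p = −Σ_{t∈ℤ\M} (−it)^p e^{−iω₀t} x(t). -/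
open Real Matrix

/-- The matrix `B(ω)` with entries `B(ω)_{p,k} = (-i k)^p e^{-iωk}`. -/
noncomputable def Bmat (m : ℕ) (ω : ℝ) : Matrix (Fin (m + 1)) (Fin (m + 1)) ℂ :=
  Matrix.of fun p k : Fin (m + 1) =>
    (-Complex.I * ((k : ℕ) : ℂ)) ^ (p : ℕ) * Complex.exp (-Complex.I * (ω : ℂ) * ((k : ℕ) : ℂ))

lemma Bmat_det_isUnit (m : ℕ) (ω : ℝ) : IsUnit (Bmat m ω).det := by
  have hB : Bmat m ω = (Matrix.vandermonde (fun k : Fin (m+1) => -Complex.I * ((k:ℕ):ℂ)))ᵀ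
      * Matrix.diagonal (fun k : Fin (m+1) => Complex.exp (-Complex.I * (ω:ℂ) * ((k:ℕ):ℂ))) := by
    ext p k
    simp [Bmat, Matrix.mul_diagonal, Matrix.vandermonde, Matrix.transpose_apply]
  rw [hB, Matrix.det_mul, Matrix.det_transpose, Matrix.det_vandermonde, Matrix.det_diagonal]
  apply IsUnit.mul
  · rw [isUnit_iff_ne_zero]
    apply Finset.prod_ne_zero_iff.2
    intro i _
    apply Finset.prod_ne_zero_iff.2
    intro j hj
    rw [Finset.mem_Ioi] at hj
    have hji : ((j:ℕ):ℂ) ≠ ((i:ℕ):ℂ) := by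
      have : (j:ℕ) ≠ (i:ℕ) := by
        intro h; exact absurd (Fin.ext h) (ne_of_gt hj)
      exact_mod_cast this
    intro h
    apply hji
    have h2 : (-Complex.I) * ((j:ℕ):ℂ) = (-Complex.I) * ((i:ℕ):ℂ) := sub_eq_zero.1 h
    exact mul_left_cancel₀ (by simp [Complex.I_ne_zero]) h2
  · rw [isUnit_iff_ne_zero]
    exact Finset.prod_ne_zero_iff.2 fun k _ => Complex.exp_ne_zero _


lemma norm_term (ω : ℝ) (p : ℕ) (t : ℤ) :
    ‖(-Complex.I * (t : ℂ)) ^ p * Complex.exp (-Complex.I * (ω : ℂ) * (t : ℂ))‖ = |(t:ℝ)|^p := by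
  simp [norm_mul, norm_pow, Complex.norm_exp, Complex.norm_intCast]

lemma summable_aux (ω : ℝ) (m : ℕ) (x w : ℤ → ℂ)
    (hx : Summable fun t : ℤ => |(t:ℝ)|^m * ‖x t‖)
    (hw : ∀ t, t ∉ Set.Icc (0:ℤ) (m:ℤ) → w t = x t) (p : ℕ) (hp : p ≤ m) :
    Summable fun t : ℤ =>
      ‖(-Complex.I * (t:ℂ))^p * Complex.exp (-Complex.I * (ω:ℂ) * (t:ℂ)) * w t‖ := by
  apply Summable.of_norm_bounded_eventually hx
  have hfin : (Set.Icc (0:ℤ) (m:ℤ)).Finite := Set.finite_Icc _ _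
  filter_upwards [hfin.compl_mem_cofinite] with t ht
  have ht' : t ∉ Set.Icc (0:ℤ) (m:ℤ) := ht
  rw [norm_norm, norm_mul, norm_term, hw t ht']
  have h1 : (1:ℝ) ≤ |(t:ℝ)| := by
    rw [Set.mem_Icc] at ht'
    have h2 : (1:ℤ) ≤ |t| := Int.one_le_abs (by omega)
    calc (1:ℝ) ≤ |(t:ℤ)| := by exact_mod_cast h2
    _ = |(t:ℝ)| := by push_cast [Int.cast_abs]; rfl
  exact mul_le_mul_of_nonneg_right (pow_le_pow_right₀ h1 hp) (norm_nonneg _)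

def iccEquiv (m : ℕ) : Fin (m+1) ≃ (Set.Icc (0:ℤ) (m:ℤ)) where
  toFun k := ⟨((k:ℕ):ℤ), by
    rw [Set.mem_Icc]
    exact ⟨Int.natCast_nonneg _, by exact_mod_cast Nat.lt_succ_iff.mp k.isLt⟩⟩
  invFun t := ⟨(t:ℤ).toNat, by
    have := t.2; rw [Set.mem_Icc] at this; omega⟩
  left_inv k := by ext; simp
  right_inv t := by
    apply Subtype.ext
    exact Int.toNat_of_nonneg (by have := t.2; rw [Set.mem_Icc] at this; exact this.1)

lemma tsum_split (m : ℕ) (g : ℤ → ℂ) (hg : Summable g) :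
    ∑' t : ℤ, g t = (∑ k : Fin (m+1), g ((k:ℕ):ℤ))
      + ∑' t : {t : ℤ // t ∉ Set.Icc (0:ℤ) (m:ℤ)}, g t := by
  have h := hg.tsum_subtype_add_tsum_subtype_compl (Set.Icc (0:ℤ) (m:ℤ))
  have h1 : ∑' (t : Set.Icc (0:ℤ) (m:ℤ)), g t = ∑ k : Fin (m+1), g ((k:ℕ):ℤ) := by
    rw [← (iccEquiv m).tsum_eq (fun t : Set.Icc (0:ℤ) (m:ℤ) => g ↑t)]
    rw [tsum_fintype]
    rfl
  have h2 : ∑' (t : ↥(Set.Icc (0:ℤ) (m:ℤ))ᶜ), g ↑t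
      = ∑' t : {t : ℤ // t ∉ Set.Icc (0:ℤ) (m:ℤ)}, g ↑t := rfl
  rw [← h, h1, h2]

theorem exists_unique_degenerate_extension (ω₀ : ℝ) (hω₀ : ω₀ ∈ Set.Ioc 0 Real.pi)
    (m : ℕ) (x : ℤ → ℂ) (hx : Summable fun t : ℤ => |(t : ℝ)| ^ m * ‖x t‖) :
    ∃ xh : ℤ → ℂ,
      ((∀ t : ℤ, t ∉ Set.Icc (0 : ℤ) m → xh t = x t) ∧
        ∀ p : Fin (m + 1),
          Summable (fun t : ℤ =>
            ‖(-Complex.I * (t : ℂ)) ^ (p : ℕ) * Complex.exp (-Complex.I * (ω₀ : ℂ) * (t : ℂ)) * xh t‖) ∧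
          ∑' t : ℤ,
            (-Complex.I * (t : ℂ)) ^ (p : ℕ) * Complex.exp (-Complex.I * (ω₀ : ℂ) * (t : ℂ)) * xh t = 0) ∧
      (∀ y : ℤ → ℂ,
        ((∀ t : ℤ, t ∉ Set.Icc (0 : ℤ) m → y t = x t) ∧
          ∀ p : Fin (m + 1),
            Summable (fun t : ℤ =>
              ‖(-Complex.I * (t : ℂ)) ^ (p : ℕ) * Complex.exp (-Complex.I * (ω₀ : ℂ) * (t : ℂ)) * y t‖) ∧
            ∑' t : ℤ,
              (-Complex.I * (t : ℂ)) ^ (p : ℕ) * Complex.exp (-Complex.I * (ω₀ : ℂ) * (t : ℂ)) * y t = 0) →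
        y = xh) ∧
      ((Bmat m ω₀).mulVec (fun k : Fin (m + 1) => xh ((k : ℕ) : ℤ)) =
        (fun p : Fin (m + 1) =>
          -∑' t : {t : ℤ // t ∉ Set.Icc (0 : ℤ) m},
            (-Complex.I * ((t : ℤ) : ℂ)) ^ (p : ℕ) *
              Complex.exp (-Complex.I * (ω₀ : ℂ) * ((t : ℤ) : ℂ)) * x (t : ℤ)) ∧
        ∀ v : Fin (m + 1) → ℂ,
          (Bmat m ω₀).mulVec v =
            (fun p : Fin (m + 1) =>
              -∑' t : {t : ℤ // t ∉ Set.Icc (0 : ℤ) m},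
                (-Complex.I * ((t : ℤ) : ℂ)) ^ (p : ℕ) *
                  Complex.exp (-Complex.I * (ω₀ : ℂ) * ((t : ℤ) : ℂ)) * x (t : ℤ)) →
          v = fun k : Fin (m + 1) => xh ((k : ℕ) : ℤ)) := by
  classical
  have hdet := Bmat_det_isUnit m ω₀
  set f : Fin (m+1) → ℤ → ℂ := fun p t =>
    (-Complex.I * (t:ℂ))^(p:ℕ) * Complex.exp (-Complex.I * (ω₀:ℂ) * (t:ℂ)) with hf
  set z : Fin (m+1) → ℂ := fun p => -∑' t : {t : ℤ // t ∉ Set.Icc (0:ℤ) (m:ℤ)},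
      f p t * x t with hzdef
  set y : Fin (m+1) → ℂ := (Bmat m ω₀)⁻¹.mulVec z with hydef
  have hBy : (Bmat m ω₀).mulVec y = z := by
    rw [hydef, Matrix.mulVec_mulVec, Matrix.mul_nonsing_inv _ hdet, Matrix.one_mulVec]
  have hBinj : ∀ v w : Fin (m+1) → ℂ,
      (Bmat m ω₀).mulVec v = (Bmat m ω₀).mulVec w → v = w := by
    intro v w h
    have := congrArg ((Bmat m ω₀)⁻¹.mulVec) h
    rwa [Matrix.mulVec_mulVec, Matrix.mulVec_mulVec, Matrix.nonsing_inv_mul _ hdet,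
      Matrix.one_mulVec, Matrix.one_mulVec] at this
  set xh : ℤ → ℂ := fun t =>
    if h : 0 ≤ t ∧ t ≤ (m:ℤ) then y ⟨t.toNat, by omega⟩ else x t with hxhdef
  have hxh_off : ∀ t : ℤ, t ∉ Set.Icc (0:ℤ) (m:ℤ) → xh t = x t := by
    intro t ht
    rw [Set.mem_Icc] at ht
    simp only [hxhdef, dif_neg ht]
  have hxh_k : ∀ k : Fin (m+1), xh ((k:ℕ):ℤ) = y k := by
    intro k
    have h1 : 0 ≤ ((k:ℕ):ℤ) ∧ ((k:ℕ):ℤ) ≤ (m:ℤ) :=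
      ⟨Int.natCast_nonneg _, by exact_mod_cast Nat.lt_succ_iff.mp k.isLt⟩
    simp only [hxhdef, dif_pos h1]
    congr 1
  have hxh_vec : (fun k : Fin (m+1) => xh ((k:ℕ):ℤ)) = y := funext hxh_k
  -- B_{p,k} = f p (k:ℤ)
  have hBf : ∀ p k : Fin (m+1), Bmat m ω₀ p k = f p ((k:ℕ):ℤ) := by
    intro p k
    simp only [Bmat, Matrix.of_apply, hf]
    norm_cast
  -- sum formula for any w agreeing off Icc
  have hkey : ∀ (w : ℤ → ℂ), (∀ t : ℤ, t ∉ Set.Icc (0:ℤ) (m:ℤ) → w t = x t) →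
      ∀ p : Fin (m+1),
        Summable (fun t : ℤ => ‖f p t * w t‖) ∧
        ∑' t : ℤ, f p t * w t
          = (Bmat m ω₀).mulVec (fun k => w ((k:ℕ):ℤ)) p - z p := by
    intro w hw p
    have hs : Summable fun t : ℤ => ‖f p t * w t‖ :=
      summable_aux ω₀ m x w hx hw p (Nat.lt_succ_iff.mp p.isLt)
    refine ⟨hs, ?_⟩
    have hs' : Summable fun t : ℤ => f p t * w t := hs.of_norm
    rw [tsum_split m _ hs']
    have h2 : ∑' t : {t : ℤ // t ∉ Set.Icc (0:ℤ) (m:ℤ)}, f p t * w t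
        = ∑' t : {t : ℤ // t ∉ Set.Icc (0:ℤ) (m:ℤ)}, f p t * x t :=
      tsum_congr fun t => by rw [hw t t.2]
    rw [h2]
    have h3 : (∑ k : Fin (m+1), f p ((k:ℕ):ℤ) * w ((k:ℕ):ℤ))
        = (Bmat m ω₀).mulVec (fun k => w ((k:ℕ):ℤ)) p := by
      rw [Matrix.mulVec]
      simp only [dotProduct]
      exact Finset.sum_congr rfl fun k _ => by rw [hBf]
    rw [h3, hzdef]
    ring
  have hxh_prop : ∀ p : Fin (m+1),
      Summable (fun t : ℤ => ‖f p t * xh t‖) ∧ ∑' t : ℤ, f p t * xh t = 0 := by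
    intro p
    obtain ⟨hs, heq⟩ := hkey xh hxh_off p
    refine ⟨hs, ?_⟩
    rw [heq, hxh_vec, hBy, sub_self]
  refine ⟨xh, ⟨hxh_off, hxh_prop⟩, ?_, ?_, ?_⟩
  · -- uniqueness of xh
    intro w ⟨hw_off, hw_prop⟩
    have hBw : (Bmat m ω₀).mulVec (fun k => w ((k:ℕ):ℤ)) = z := by
      funext p
      obtain ⟨_, heq⟩ := hkey w hw_off p
      have h0 := (hw_prop p).2
      rw [heq] at h0
      linear_combination h0
    have hvk : (fun k : Fin (m+1) => w ((k:ℕ):ℤ)) = y := by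
      apply hBinj; rw [hBw, hBy]
    funext t
    by_cases ht : t ∈ Set.Icc (0:ℤ) (m:ℤ)
    · rw [Set.mem_Icc] at ht
      set k : Fin (m+1) := ⟨t.toNat, by omega⟩ with hk
      have htk : ((k:ℕ):ℤ) = t := by simp [hk, Int.toNat_of_nonneg ht.1]
      calc w t = w ((k:ℕ):ℤ) := by rw [htk]
      _ = y k := congrFun hvk k
      _ = xh ((k:ℕ):ℤ) := (hxh_k k).symm
      _ = xh t := by rw [htk]
    · rw [hw_off t ht, hxh_off t ht]
  · rw [hxh_vec]; exact hBy
  · intro v hv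
    rw [hxh_vec]
    exact hBinj v y (by rw [hBy]; exact hv)
end

section
/- Let ω₀ ∈ (0, π], m ∈ ℕ and M = {0, 1, ..., m}. Suppose x, y : ℤ → ℂ both satisfy Σ_{t∈ℤ} |t|^m |x(t)| < ∞ and Σ_{t∈ℤ} |t|^m |y(t)| < ∞, both satisfy Σ_{t∈ℤ} (−it)^p e^{−iω₀t} x(t) = 0 and Σ_{t∈ℤ} (−it)^p e^{−iω₀t} y(t) = 0 for every p ∈ {0, 1, ..., m}, and x(t) = y(t) for all t ∈ ℤ \ M. Then x(t) = y(t) for all t ∈ ℤ. (Thus the class X₀ of sequences degenerate of order m is recoverable.) -/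
open Real

lemma degen_aux_summable (ω₀ : ℝ) (m p : ℕ) (hp : p ≤ m) (x : ℤ → ℂ)
    (hx : Summable fun t : ℤ => |(t : ℝ)| ^ m * ‖x t‖) :
    Summable (fun t : ℤ => (-Complex.I * (t : ℂ)) ^ p *
      Complex.exp (-Complex.I * (ω₀ : ℂ) * (t : ℂ)) * x t) := by
  have hind : Summable (fun t : ℤ => Set.indicator ({0} : Set ℤ) (fun _ => ‖x 0‖) t) := by
    apply summable_of_finite_support
    exact (Set.finite_singleton 0).subset (Function.support_subset_iff'.2
      (fun t ht => Set.indicator_of_notMem ht _))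
  apply Summable.of_norm
  refine Summable.of_nonneg_of_le (fun t => norm_nonneg _) ?_ (hx.add hind)
  intro t
  have hnorm : ‖(-Complex.I * (t : ℂ)) ^ p *
      Complex.exp (-Complex.I * (ω₀ : ℂ) * (t : ℂ)) * x t‖
      = |(t : ℝ)| ^ p * ‖x t‖ := by
    have he : ‖Complex.exp (-Complex.I * (ω₀ : ℂ) * (t : ℂ))‖ = 1 := by
      rw [Complex.norm_exp]
      simp [Complex.mul_re, Complex.mul_im]
    rw [norm_mul, norm_mul, he, mul_one, norm_pow, norm_mul]
    simp [Complex.norm_intCast, Int.cast_abs]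
  rw [hnorm]
  rcases eq_or_ne t 0 with rfl | ht
  · simp only [Set.indicator_of_mem (Set.mem_singleton (0 : ℤ))]
    have : |((0 : ℤ) : ℝ)| ^ p ≤ 1 := by
      rcases Nat.eq_zero_or_pos p with rfl | hp0
      · simp
      · simp [zero_pow hp0.ne']
    nlinarith [norm_nonneg (x 0), pow_nonneg (abs_nonneg ((0:ℤ):ℝ)) m, norm_nonneg (x (0:ℤ))]
  · rw [Set.indicator_of_notMem (by simpa using ht)]
    have h1 : (1 : ℝ) ≤ |(t : ℝ)| := by
      rw [← Int.cast_abs]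
      exact_mod_cast Int.one_le_abs (by simpa using ht)
    have := pow_le_pow_right₀ h1 hp
    nlinarith [norm_nonneg (x t)]

theorem degenerate_class_recoverable (ω₀ : ℝ) (hω₀ : ω₀ ∈ Set.Ioc 0 Real.pi) (m : ℕ)
    (x y : ℤ → ℂ)
    (hx : Summable fun t : ℤ => |(t : ℝ)| ^ m * ‖x t‖)
    (hy : Summable fun t : ℤ => |(t : ℝ)| ^ m * ‖y t‖)
    (hx0 : ∀ p : Fin (m + 1),
      ∑' t : ℤ, (-Complex.I * (t : ℂ)) ^ (p : ℕ) *
        Complex.exp (-Complex.I * (ω₀ : ℂ) * (t : ℂ)) * x t = 0)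
    (hy0 : ∀ p : Fin (m + 1),
      ∑' t : ℤ, (-Complex.I * (t : ℂ)) ^ (p : ℕ) *
        Complex.exp (-Complex.I * (ω₀ : ℂ) * (t : ℂ)) * y t = 0)
    (hxy : ∀ t : ℤ, t ∉ Set.Icc (0 : ℤ) m → x t = y t) :
    ∀ t : ℤ, x t = y t := by
  set z : ℤ → ℂ := fun t => x t - y t with hz
  have hzsupp : ∀ t : ℤ, t ∉ Finset.Icc (0 : ℤ) m → z t = 0 := by
    intro t ht
    have := hxy t (by simpa using ht)
    simp [hz, this]
  -- finite sum equations
  have key : ∀ p : Fin (m + 1),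
      ∑ t ∈ Finset.Icc (0 : ℤ) m, (-Complex.I * (t : ℂ)) ^ (p : ℕ) *
        Complex.exp (-Complex.I * (ω₀ : ℂ) * (t : ℂ)) * z t = 0 := by
    intro p
    have hsx := degen_aux_summable ω₀ m p (Nat.lt_succ_iff.mp p.isLt) x hx
    have hsy := degen_aux_summable ω₀ m p (Nat.lt_succ_iff.mp p.isLt) y hy
    have htsum : ∑' t : ℤ, (-Complex.I * (t : ℂ)) ^ (p : ℕ) *
        Complex.exp (-Complex.I * (ω₀ : ℂ) * (t : ℂ)) * z t = 0 := by
      have : (fun t : ℤ => (-Complex.I * (t : ℂ)) ^ (p : ℕ) *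
          Complex.exp (-Complex.I * (ω₀ : ℂ) * (t : ℂ)) * z t)
          = fun t : ℤ => ((-Complex.I * (t : ℂ)) ^ (p : ℕ) *
            Complex.exp (-Complex.I * (ω₀ : ℂ) * (t : ℂ)) * x t)
          - ((-Complex.I * (t : ℂ)) ^ (p : ℕ) *
            Complex.exp (-Complex.I * (ω₀ : ℂ) * (t : ℂ)) * y t) := by
        funext t; simp [hz]; ring
      rw [this, Summable.tsum_sub hsx hsy, hx0 p, hy0 p, sub_zero]
    rw [← htsum]
    exact (tsum_eq_sum (fun t ht => by rw [hzsupp t ht, mul_zero])).symm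
  -- reindex to Fin (m+1)
  set w : Fin (m + 1) → ℂ := fun k =>
    Complex.exp (-Complex.I * (ω₀ : ℂ) * ((k : ℕ) : ℂ)) * z ((k : ℕ) : ℤ) with hw
  set f : Fin (m + 1) → ℂ := fun k => -Complex.I * ((k : ℕ) : ℂ) with hf
  have hfinj : Function.Injective f := by
    intro a b hab
    simp only [hf] at hab
    have := mul_left_cancel₀ (by simp [Complex.I_ne_zero] : -Complex.I ≠ (0 : ℂ)) hab
    exact Fin.ext (Nat.cast_injective this)
  have hkey2 : ∀ p : Fin (m + 1), ∑ k : Fin (m + 1), w k * f k ^ (p : ℕ) = 0 := by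
    intro p
    rw [← key p]
    apply Finset.sum_nbij' (i := fun (k : Fin (m + 1)) => ((k : ℕ) : ℤ))
      (j := fun (t : ℤ) => (⟨t.toNat % (m + 1), Nat.mod_lt _ (by omega)⟩ : Fin (m + 1)))
    · intro k _
      simp only [Finset.mem_Icc]
      constructor
      · positivity
      · exact_mod_cast Nat.lt_succ_iff.mp k.isLt
    · intro t _; exact Finset.mem_univ _
    · intro k _
      simp [Nat.mod_eq_of_lt k.isLt]
    · intro t ht
      simp only [Finset.mem_Icc] at ht
      have h1 : t.toNat ≤ m := by omega
      simp [Nat.mod_eq_of_lt (by omega : t.toNat < m + 1), Int.toNat_of_nonneg ht.1]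
    · intro k _
      simp only [hw, hf]
      push_cast
      ring
  have hw0 : w = 0 := Matrix.eq_zero_of_forall_pow_sum_mul_pow_eq_zero hfinj hkey2
  -- conclude
  intro t
  by_cases ht : t ∈ Set.Icc (0 : ℤ) (m : ℤ)
  · obtain ⟨ht0, htm⟩ := ht
    have hk : ((⟨t.toNat, by omega⟩ : Fin (m + 1)) : ℕ) = t.toNat := rfl
    have := congrFun hw0 ⟨t.toNat, by omega⟩
    simp only [hw, hk, Pi.zero_apply, Int.toNat_of_nonneg ht0] at this
    have hz0 : z t = 0 := by
      rcases mul_eq_zero.mp this with h | h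
      · exact absurd h (Complex.exp_ne_zero _)
      · exact h
    have : x t - y t = 0 := hz0
    linear_combination this
  · exact hxy t ht
end

section
/- Let ω₀ ∈ (0, π], σ₀ ≥ 0 and s ∈ ℤ. For every function F from the set of maps (ℤ \ {s}) → ℂ to ℂ, there exists a sequence x : ℤ → ℂ with Σ_{t∈ℤ} |x(t)| < ∞ and |Σ_{t∈ℤ} e^{−iω₀t} x(t)| ≤ σ₀ such that |F(x restricted to ℤ \ {s}) − x(s)| ≥ σ₀. (Hence no estimator of the missing value x(s) based on the observations x|_{ℤ\{s}} can achieve a worst-case error over the class X_σ smaller than σ₀, so the estimator of Corollary 4 is minimax optimal.) -/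
open Real

theorem minimax_lower_bound_single_value (ω₀ : ℝ) (hω₀ : ω₀ ∈ Set.Ioc 0 Real.pi)
    (σ₀ : ℝ) (hσ₀ : 0 ≤ σ₀) (s : ℤ)
    (F : ({t : ℤ // t ≠ s} → ℂ) → ℂ) :
    ∃ x : ℤ → ℂ,
      (Summable fun t : ℤ => ‖x t‖) ∧
      ‖∑' t : ℤ, Complex.exp (-Complex.I * (ω₀ : ℂ) * (t : ℂ)) * x t‖ ≤ σ₀ ∧
      σ₀ ≤ ‖F (fun t : {t : ℤ // t ≠ s} => x (t : ℤ)) - x s‖ := by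
  set v : ℂ := F (fun _ => 0) with hv
  set c : ℂ := if v = 0 then (σ₀ : ℂ) else -(σ₀ / ‖v‖ : ℝ) * v with hc
  have hcnorm : ‖c‖ = σ₀ := by
    by_cases h : v = 0
    · simp [hc, h, abs_of_nonneg hσ₀]
    · have hvn : ‖v‖ ≠ 0 := by simpa using h
      simp only [hc, if_neg h]
      rw [norm_mul, norm_neg, Complex.norm_real, Real.norm_eq_abs, abs_div, abs_of_nonneg hσ₀,
        abs_of_nonneg (norm_nonneg v)]
      exact div_mul_cancel₀ σ₀ hvn
  have hdist : σ₀ ≤ ‖v - c‖ := by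
    by_cases h : v = 0
    · simp [h, hcnorm]
    · have hvn : (0:ℝ) < ‖v‖ := norm_pos_iff.mpr h
      have : v - c = ((1 + σ₀ / ‖v‖ : ℝ) : ℂ) * v := by
        simp only [hc, if_neg h]
        push_cast
        ring
      rw [this, norm_mul, Complex.norm_real, Real.norm_eq_abs]
      have h1 : (0:ℝ) ≤ σ₀ / ‖v‖ := by positivity
      rw [abs_of_nonneg (by linarith)]
      have h2 : (1 + σ₀ / ‖v‖) * ‖v‖ = ‖v‖ + σ₀ := by rw [add_mul, one_mul, div_mul_cancel₀ σ₀ hvn.ne']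
      rw [h2]; linarith
  refine ⟨fun t => if t = s then c else 0, ?_, ?_, ?_⟩
  · apply summable_of_finite_support
    apply Set.Finite.subset (Set.finite_singleton s)
    intro t ht
    simp only [Function.mem_support] at ht
    by_contra hts
    simp only [Set.mem_singleton_iff] at hts
    simp [hts] at ht
  · have : (∑' t : ℤ, Complex.exp (-Complex.I * (ω₀ : ℂ) * (t : ℂ)) * (if t = s then c else 0))
        = Complex.exp (-Complex.I * (ω₀ : ℂ) * (s : ℂ)) * c := by
      rw [tsum_eq_single s]
      · simp
      · intro b hb; simp [hb]
    rw [this, norm_mul]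
    have he : ‖Complex.exp (-Complex.I * (ω₀ : ℂ) * (s : ℂ))‖ = 1 := by
      have : -Complex.I * (ω₀ : ℂ) * (s : ℂ) = ((-(ω₀ * s) : ℝ) : ℂ) * Complex.I := by
        push_cast; ring
      rw [this, Complex.norm_exp_ofReal_mul_I]
    rw [he, one_mul, hcnorm]
  · have hrestr : (fun t : {t : ℤ // t ≠ s} => if (t : ℤ) = s then c else 0)
        = fun _ => (0 : ℂ) := by
      funext t
      simp [t.2]
    rw [hrestr]
    simpa using hdist
end
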